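/- arXiv:2203.10650 — 8 statements merged into one kernel-verified Lean document; each statement's English description precedes it below -/
import Mathlib

section
/- Let H be a separable complex Hilbert space, R and R₁ bounded self-adjoint operators on H with ker R = {0}, q ∈ H with ‖q‖ ≤ 1, p = Rq, and assume R² − R₁² = pp*. Let Σ* be the unique contraction on H with R₁ = Σ*R, assume Σ* is asymptotically stable, and let Γ be the unique Hankel operator on ℓ² such that the pair (Γ|₍ker Γ₎^⊥, (ΓS)|₍ker Γ₎^⊥) is unitarily equivalent to (R, R₁). Then ker Γ = {0} if and only if ‖q‖ = 1 and q ∉ Ran R. -/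
open Filter Topology ContinuousLinearMap
noncomputable section

section Aux
variable {H : Type*} [NormedAddCommGroup H] [InnerProductSpace ℂ H]

lemma sa_inner' (R : H →L[ℂ] H) [CompleteSpace H] (hR : IsSelfAdjoint R) (x y : H) :
    inner (𝕜 := ℂ) (R x) y = inner (𝕜:=ℂ) x (R y) := by
  conv_lhs => rw [← hR.adjoint_eq]
  exact adjoint_inner_left R y x

omit [InnerProductSpace ℂ H] in
lemma rank_one_eq' : True := trivial

lemma rank_one_eq (p p' : H)
    (h : ∀ x y : H, inner (𝕜:=ℂ) p x * inner (𝕜:=ℂ) y p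
        = inner (𝕜:=ℂ) p' x * inner (𝕜:=ℂ) y p') :
    ∃ μ : ℂ, ‖μ‖ = 1 ∧ p' = μ • p := by
  by_cases hp : p = 0
  · refine ⟨1, by simp, ?_⟩
    have h0 := (h p' p').symm
    rw [hp, inner_zero_left, zero_mul] at h0
    have hp' : p' = 0 := inner_self_eq_zero.mp (mul_self_eq_zero.mp h0)
    rw [hp, hp', smul_zero]
  · have hc : inner (𝕜:=ℂ) p' p ≠ 0 := by
      intro hc0
      have h1 := h p p
      rw [hc0, zero_mul] at h1
      exact hp (inner_self_eq_zero.mp (mul_self_eq_zero.mp h1))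
    set c : ℂ := inner (𝕜:=ℂ) p' p with hcdef
    set μ : ℂ := (‖p‖ : ℂ)^2 / c with hμdef
    have hpp : inner (𝕜:=ℂ) p p = (‖p‖:ℂ)^2 := inner_self_eq_norm_sq_to_K p
    have hcc : inner (𝕜:=ℂ) p p' = starRingEnd ℂ c := by rw [hcdef, ← inner_conj_symm]
    have hcbar : starRingEnd ℂ c ≠ 0 := by simpa using hc
    have key : ∀ x : H, inner (𝕜:=ℂ) p' x = inner (𝕜:=ℂ) (μ • p) x := by
      intro x
      have h1 := h x p
      rw [hpp, hcc] at h1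
      rw [inner_smul_left, hμdef, map_div₀, map_pow]
      rw [Complex.conj_ofReal]
      field_simp
      linear_combination -h1
    have hnc : ‖c‖ = ‖p‖^2 := by
      have h3 := h p p
      rw [hpp, hcc] at h3
      rw [Complex.mul_conj] at h3
      have hnsq : Complex.normSq c = ‖c‖^2 := by
        rw [Complex.normSq_eq_norm_sq]
      rw [hnsq] at h3
      have h5 : ‖p‖^2 * ‖p‖^2 = ‖c‖^2 := by exact_mod_cast h3
      nlinarith [norm_nonneg c, norm_nonneg p]
    have hμnorm : ‖μ‖ = 1 := by
      rw [hμdef, norm_div, hnc]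
      simp only [norm_pow, Complex.norm_real, Real.norm_eq_abs, abs_norm]
      exact div_self (pow_ne_zero 2 (norm_ne_zero_iff.mpr hp))
    refine ⟨μ, hμnorm, ?_⟩
    have hz : ∀ x : H, inner (𝕜:=ℂ) (p' - μ • p) x = 0 := by
      intro x; rw [inner_sub_left, key x, sub_self]
    have := hz (p' - μ • p)
    rw [inner_self_eq_zero] at this
    exact sub_eq_zero.mp this
end Aux

section AuxE
variable {E : Type*} [NormedAddCommGroup E] [InnerProductSpace ℂ E] [CompleteSpace E]

omit [CompleteSpace E] in
lemma basis_ext' (e : HilbertBasis ℕ ℂ E) (x : E) (h : ∀ n, inner (𝕜 := ℂ) (e n) x = 0) :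
    x = 0 := by
  apply e.repr.injective
  rw [map_zero]
  ext n
  simp [e.repr_apply_apply, h]

variable (e : HilbertBasis ℕ ℂ E) (S : E →L[ℂ] E)
  (hS_iso : ∀ x : E, ‖S x‖ = ‖x‖) (hS_shift : ∀ n : ℕ, S (e n) = e (n + 1))

include hS_iso hS_shift

omit hS_iso in
lemma Sadj_e0 : adjoint S (e 0) = 0 := by
  apply basis_ext' e
  intro n
  rw [adjoint_inner_right, hS_shift]
  exact e.orthonormal.2 (by omega)

lemma SSadj (a : E) : S (adjoint S a) = a - (inner (𝕜:=ℂ) (e 0) a) • e 0 := by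
  have hSi : ∀ x y : E, inner (𝕜:=ℂ) (S x) (S y) = inner (𝕜:=ℂ) x y := by
    let SL : E →ₗᵢ[ℂ] E := ⟨S.toLinearMap, hS_iso⟩
    exact fun x y => SL.inner_map_map x y
  apply sub_eq_zero.mp
  apply basis_ext' e
  intro n
  rw [inner_sub_right, inner_sub_right, inner_smul_right]
  rcases n with _ | m
  · have h1 : inner (𝕜:=ℂ) (e 0) (S (adjoint S a)) = 0 := by
      rw [← adjoint_inner_left, Sadj_e0 e S hS_shift, inner_zero_left]
    have h2 : inner (𝕜:=ℂ) (e 0) (e 0) = (1:ℂ) := by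
      rw [inner_self_eq_norm_sq_to_K, e.orthonormal.1 0]; norm_num
    rw [h1, h2, mul_one, sub_self, sub_zero]
  · have h1 : inner (𝕜:=ℂ) (e (m+1)) (S (adjoint S a)) = inner (𝕜:=ℂ) (e (m+1)) a := by
      rw [← hS_shift, hSi, adjoint_inner_right, hS_shift]
    have h2 : inner (𝕜:=ℂ) (e (m+1)) (e 0) = 0 := e.orthonormal.2 (by omega)
    rw [h1, h2, mul_zero, sub_zero, sub_self]

omit hS_iso in
lemma ker_Sadj (x : E) (hx : adjoint S x = 0) :
    x = (inner (𝕜:=ℂ) (e 0) x) • e 0 := by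
  apply sub_eq_zero.mp
  apply basis_ext' e
  intro n
  rw [inner_sub_right, inner_smul_right]
  rcases n with _ | m
  · have h2 : inner (𝕜:=ℂ) (e 0) (e 0) = (1:ℂ) := by
      rw [inner_self_eq_norm_sq_to_K, e.orthonormal.1 0]; norm_num
    rw [h2, mul_one, sub_self]
  · have h1 : inner (𝕜:=ℂ) (e (m+1)) x = 0 := by
      rw [← hS_shift, ← adjoint_inner_right, hx, inner_zero_right]
    have h2 : inner (𝕜:=ℂ) (e (m+1)) (e 0) = 0 := e.orthonormal.2 (by omega)
    rw [h1, h2, mul_zero, sub_zero]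

omit hS_iso in
lemma inner_e0_pow (n : ℕ) (x : E) :
    inner (𝕜:=ℂ) (e 0) (((adjoint S)^n) x) = inner (𝕜:=ℂ) (e n) x := by
  induction n generalizing x with
  | zero => simp
  | succ m ih =>
    have : ((adjoint S)^(m+1)) x = ((adjoint S)^m) (adjoint S x) := by
      rw [pow_succ]; rfl
    rw [this, ih, adjoint_inner_right, hS_shift]
end AuxE

/-- Setup as in Statement 2: `H` separable complex Hilbert space, `R`, `R₁`
self-adjoint with `ker R = {0}`, `‖q‖ ≤ 1`, `p = Rq`, `R² − R₁² = pp*`, `Σ*` the unique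
contraction with `R₁ = Σ*R`, asymptotically stable, and `Γ` the (unique) Hankel operator on
`ℓ²` (modelled abstractly via a Hilbert space `E` with orthonormal basis `e` and forward
shift `S`) such that `(Γ|_{(ker Γ)ᗮ}, (ΓS)|_{(ker Γ)ᗮ})` is unitarily equivalent to
`(R, R₁)`. Then `ker Γ = {0}` iff `‖q‖ = 1` and `q ∉ Ran R`. -/
theorem statement_3
    {E : Type*} [NormedAddCommGroup E] [InnerProductSpace ℂ E] [CompleteSpace E]
    (e : HilbertBasis ℕ ℂ E)
    (S : E →L[ℂ] E)
    (hS_iso : ∀ x : E, ‖S x‖ = ‖x‖)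
    (hS_shift : ∀ n : ℕ, S (e n) = e (n + 1))
    {H : Type*} [NormedAddCommGroup H] [InnerProductSpace ℂ H] [CompleteSpace H]
    [TopologicalSpace.SeparableSpace H]
    (R R₁ : H →L[ℂ] H)
    (hR_sa : IsSelfAdjoint R) (hR1_sa : IsSelfAdjoint R₁)
    (hR_ker : LinearMap.ker (R : H →ₗ[ℂ] H) = ⊥)
    (q : H) (hq : ‖q‖ ≤ 1) (p : H) (hp : p = R q)
    (hRR1 : R ∘L R - R₁ ∘L R₁ = (innerSL ℂ p).smulRight p)
    (Sstar : H →L[ℂ] H) (hSstar_contr : ‖Sstar‖ ≤ 1) (hSstar : R₁ = Sstar ∘L R)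
    (hstable : ∀ x : H, Tendsto (fun n : ℕ => ‖(Sstar ^ n) x‖) atTop (nhds 0))
    (Γ : E →L[ℂ] E)
    (hΓ_Hankel : Γ ∘L S = adjoint S ∘L Γ)
    (hV : ∃ V : H ≃ₗᵢ[ℂ] ((LinearMap.ker (Γ : E →ₗ[ℂ] E))ᗮ),
      (∀ x : H, Γ ↑(V x) = ↑(V (R x))) ∧
      (∀ x : H, (Γ ∘L S) ↑(V x) = ↑(V (R₁ x)))) :
    LinearMap.ker (Γ : E →ₗ[ℂ] E) = ⊥ ↔ (‖q‖ = 1 ∧ q ∉ LinearMap.range (R : H →ₗ[ℂ] H)) := by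
  classical
  haveI hkercs : CompleteSpace (LinearMap.ker (Γ : E →ₗ[ℂ] E)) :=
    (ContinuousLinearMap.isClosed_ker Γ).completeSpace_coe
  set K : Submodule ℂ E := (LinearMap.ker (Γ : E →ₗ[ℂ] E))ᗮ with hKdef
  obtain ⟨V, hV1, hV2⟩ := hV
  have hRinj : Function.Injective R := LinearMap.ker_eq_bot.mp hR_ker
  have he0norm : ‖e 0‖ = 1 := e.orthonormal.1 0
  -- pointwise Hankel
  have hH : ∀ v : E, Γ (S v) = adjoint S (Γ v) := by
    intro v
    have := ContinuousLinearMap.ext_iff.mp hΓ_Hankel v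
    simpa using this
  have hV2' : ∀ x : H, Γ (S ((V x : E))) = ((V (R₁ x) : E)) := by
    intro x
    have := hV2 x
    simpa using this
  -- V preserves inner products into E
  have hEV : ∀ a b : H, inner (𝕜:=ℂ) ((V a : E)) ((V b : E)) = inner (𝕜:=ℂ) a b := by
    intro a b
    rw [← Submodule.coe_inner, V.inner_map_map]
  set Pe0 : K := K.orthogonalProjectionOnto (e 0) with hPe0def
  set u : H := V.symm Pe0 with hudef
  have hVu : V u = Pe0 := V.apply_symm_apply Pe0
  -- ⟪e 0, V (R x)⟫ = ⟪R u, x⟫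
  have h6 : ∀ x : H, inner (𝕜:=ℂ) (e 0) ((V (R x) : E)) = inner (𝕜:=ℂ) (R u) x := by
    intro x
    have hd : inner (𝕜:=ℂ) (e 0 - (Pe0 : E)) ((V (R x) : E)) = 0 := by
      have hmem : e 0 - (Pe0 : E) ∈ Kᗮ := K.sub_starProjection_mem_orthogonal (e 0)
      exact (Submodule.mem_orthogonal' K _).mp hmem _ (V (R x)).2
    have h' := inner_sub_left (𝕜 := ℂ) (e 0) ((Pe0 : E)) ((V (R x) : E))
    rw [hd] at h'
    have hsplit : inner (𝕜:=ℂ) (e 0) ((V (R x) : E))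
        = inner (𝕜:=ℂ) ((Pe0 : E)) ((V (R x) : E)) := sub_eq_zero.mp h'.symm
    rw [hsplit, ← Submodule.coe_inner, ← hVu, V.inner_map_map]
    exact (sa_inner' R hR_sa u x).symm
  -- the key rank-one identity
  have key : ∀ x y : H, inner (𝕜:=ℂ) p x * inner (𝕜:=ℂ) y p
      = inner (𝕜:=ℂ) (R u) x * inner (𝕜:=ℂ) y (R u) := by
    intro x y
    have h1 : inner (𝕜:=ℂ) y (R (R x)) - inner (𝕜:=ℂ) y (R₁ (R₁ x))
        = inner (𝕜:=ℂ) p x * inner (𝕜:=ℂ) y p := by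
      have hx := ContinuousLinearMap.ext_iff.mp hRR1 x
      simp only [ContinuousLinearMap.sub_apply, ContinuousLinearMap.comp_apply,
        ContinuousLinearMap.smulRight_apply, innerSL_apply_apply] at hx
      rw [← inner_sub_right, hx, inner_smul_right]
    have h2 : inner (𝕜:=ℂ) y (R (R x)) = inner (𝕜:=ℂ) (R y) (R x) :=
      (sa_inner' R hR_sa y (R x)).symm
    have h2' : inner (𝕜:=ℂ) y (R₁ (R₁ x)) = inner (𝕜:=ℂ) (R₁ y) (R₁ x) :=
      (sa_inner' R₁ hR1_sa y (R₁ x)).symm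
    -- Γ-side computation
    have h4 : inner (𝕜:=ℂ) (R₁ y) (R₁ x)
        = inner (𝕜:=ℂ) (adjoint S ((V (R y) : E))) (adjoint S ((V (R x) : E))) := by
      rw [← hEV (R₁ y) (R₁ x), ← hV2' y, ← hV2' x, hH, hH, hV1, hV1]
    have h5 : inner (𝕜:=ℂ) (adjoint S ((V (R y) : E))) (adjoint S ((V (R x) : E)))
        = inner (𝕜:=ℂ) ((V (R y) : E)) ((V (R x) : E))
          - inner (𝕜:=ℂ) (e 0) ((V (R x) : E))
            * inner (𝕜:=ℂ) ((V (R y) : E)) (e 0) := by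
      rw [adjoint_inner_left, SSadj e S hS_iso hS_shift, inner_sub_right, inner_smul_right]
    have h7 : inner (𝕜:=ℂ) ((V (R y) : E)) (e 0) = inner (𝕜:=ℂ) y (R u) := by
      rw [← inner_conj_symm, h6 y]
      exact inner_conj_symm y (R u)
    calc inner (𝕜:=ℂ) p x * inner (𝕜:=ℂ) y p
        = inner (𝕜:=ℂ) y (R (R x)) - inner (𝕜:=ℂ) y (R₁ (R₁ x)) := h1.symm
      _ = inner (𝕜:=ℂ) ((V (R y) : E)) ((V (R x) : E))
          - inner (𝕜:=ℂ) (adjoint S ((V (R y) : E))) (adjoint S ((V (R x) : E))) := by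
            rw [h2, h2', h4, ← hEV (R y) (R x)]
      _ = inner (𝕜:=ℂ) (e 0) ((V (R x) : E)) * inner (𝕜:=ℂ) ((V (R y) : E)) (e 0) := by
            rw [h5]; ring
      _ = inner (𝕜:=ℂ) (R u) x * inner (𝕜:=ℂ) y (R u) := by rw [h6, h7]
  obtain ⟨μ, hμ1, hμ2⟩ := rank_one_eq p (R u) key
  have hμ0 : μ ≠ 0 := by intro h0; rw [h0] at hμ1; simp at hμ1
  have huq : u = μ • q := by
    apply hRinj
    rw [map_smul, ← hp, hμ2]
  have hnormuq : ‖u‖ = ‖q‖ := by rw [huq, norm_smul, hμ1, one_mul]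
  constructor
  · -- forward direction
    intro hker
    have he0K : e 0 ∈ K := by
      rw [hKdef, hker, Submodule.bot_orthogonal_eq_top]
      trivial
    have hPe0e : (Pe0 : E) = e 0 := by
      rw [hPe0def]
      exact K.starProjection_eq_self_iff.mpr he0K
    have hnu : ‖u‖ = 1 := by
      rw [hudef, V.symm.norm_map]
      rw [show ‖Pe0‖ = ‖(Pe0 : E)‖ from rfl, hPe0e, he0norm]
    constructor
    · rw [← hnormuq, hnu]
    · rintro ⟨w, hw⟩
      have hRu : R (μ • w) = u := by
        rw [map_smul, show R w = q from hw, ← huq]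
      have hΓz : Γ ((V (μ • w) : E)) = e 0 := by
        rw [hV1, hRu, hVu, hPe0e]
      have hSz : Γ (S ((V (μ • w) : E))) = 0 := by
        rw [hH, hΓz, Sadj_e0 e S hS_shift]
      have hmem : S ((V (μ • w) : E)) ∈ LinearMap.ker (Γ : E →ₗ[ℂ] E) := hSz
      rw [hker, Submodule.mem_bot] at hmem
      have hnz : ‖(V (μ • w) : E)‖ = 0 := by rw [← hS_iso, hmem, norm_zero]
      have hz0 : ((V (μ • w) : E)) = 0 := norm_eq_zero.mp hnz
      rw [hz0, map_zero] at hΓz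
      rw [← hΓz] at he0norm
      simp at he0norm
  · -- converse direction
    rintro ⟨hq1, hqR⟩
    have hnu : ‖(Pe0 : E)‖ = 1 := by
      have h1 : ‖u‖ = 1 := by rw [hnormuq, hq1]
      rw [hudef, V.symm.norm_map] at h1
      exact h1
    have he0K : e 0 ∈ K := by
      have hdmem : e 0 - (Pe0 : E) ∈ Kᗮ := K.sub_starProjection_mem_orthogonal (e 0)
      have hinner : inner (𝕜:=ℂ) ((Pe0 : E)) (e 0 - (Pe0 : E)) = 0 :=
        Submodule.inner_right_of_mem_orthogonal Pe0.2 hdmem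
      have hpyth := norm_add_sq_eq_norm_sq_add_norm_sq_of_inner_eq_zero
        ((Pe0 : E)) (e 0 - (Pe0 : E)) hinner
      have hsum : (Pe0 : E) + (e 0 - (Pe0 : E)) = e 0 := by abel
      rw [hsum, he0norm, hnu] at hpyth
      have hd2 : ‖e 0 - (Pe0 : E)‖^2 = 0 := by linarith
      have hd0 : ‖e 0 - (Pe0 : E)‖ = 0 := pow_eq_zero_iff two_ne_zero |>.mp hd2
      have heq : e 0 = (Pe0 : E) := sub_eq_zero.mp (norm_eq_zero.mp hd0)
      rw [heq]
      exact Pe0.2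
    -- no preimage of e 0 under Γ (else q ∈ range R)
    have hno : ∀ z : E, Γ z ≠ e 0 := by
      intro z hz
      apply hqR
      have horth : Kᗮ = LinearMap.ker (Γ : E →ₗ[ℂ] E) := by
        rw [hKdef]
        exact Submodule.orthogonal_orthogonal (LinearMap.ker (Γ : E →ₗ[ℂ] E))
      set z' : K := K.orthogonalProjectionOnto z with hz'def
      have hdz : z - (z' : E) ∈ Kᗮ := K.sub_starProjection_mem_orthogonal z
      rw [horth] at hdz
      have hΓz' : Γ ((z' : E)) = e 0 := by
        have hzz : Γ (z - (z' : E)) = 0 := hdz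
        rw [map_sub, sub_eq_zero] at hzz
        rw [← hzz, hz]
      set w : H := V.symm z' with hwdef
      have hVw : V w = z' := V.apply_symm_apply z'
      have hΓVw : ((V (R w) : E)) = e 0 := by
        rw [← hV1, hVw, hΓz']
      have hVRw : V (R w) = Pe0 := by
        apply Subtype.ext
        rw [hΓVw, hPe0def]
        exact (K.starProjection_eq_self_iff.mpr he0K).symm
      have huRw : u = R w := by
        rw [hudef, ← hVRw, V.symm_apply_apply]
      refine ⟨μ⁻¹ • w, ?_⟩
      rw [map_smul, ContinuousLinearMap.coe_coe, ← huRw, huq, smul_smul, inv_mul_cancel₀ hμ0, one_smul]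
    -- conclude : the kernel is trivial
    rw [Submodule.eq_bot_iff]
    intro h hker
    have he0orth : ∀ g ∈ LinearMap.ker (Γ : E →ₗ[ℂ] E), inner (𝕜:=ℂ) g (e 0) = 0 := by
      intro g hg
      exact (Submodule.mem_orthogonal (LinearMap.ker (Γ : E →ₗ[ℂ] E)) (e 0)).mp (hKdef ▸ he0K) g hg
    have hiter : ∀ n : ℕ, Γ (((adjoint S)^n) h) = 0 := by
      intro n
      induction n with
      | zero => simpa using hker
      | succ m ih =>
        set g : E := ((adjoint S)^m) h with hgdef
        have hgker : g ∈ LinearMap.ker (Γ : E →ₗ[ℂ] E) := ih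
        have hge0 : inner (𝕜:=ℂ) (e 0) g = 0 := by
          rw [← inner_conj_symm, he0orth g hgker, map_zero]
        have hSSg : S (adjoint S g) = g := by
          rw [SSadj e S hS_iso hS_shift, hge0, zero_smul, sub_zero]
        have hker' : adjoint S (Γ (adjoint S g)) = 0 := by
          rw [← hH, hSSg]
          exact ih
        have hform := ker_Sadj e S hS_shift (Γ (adjoint S g)) hker'
        have hpows : ((adjoint S)^(m+1)) h = adjoint S g := by
          rw [hgdef, pow_succ']; rfl
        by_cases hc : inner (𝕜:=ℂ) (e 0) (Γ (adjoint S g)) = 0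
        · rw [hc, zero_smul] at hform
          rw [hpows, hform]
        · exfalso
          generalize hcv : inner (𝕜:=ℂ) (e 0) (Γ (adjoint S g)) = cv at hform hc
          apply hno (cv⁻¹ • adjoint S g)
          rw [map_smul, hform, smul_smul, inv_mul_cancel₀ hc, one_smul]
    apply basis_ext' e
    intro n
    rw [← inner_e0_pow e S hS_shift n h]
    have hmem : ((adjoint S)^n) h ∈ LinearMap.ker (Γ : E →ₗ[ℂ] E) := hiter n
    rw [← inner_conj_symm, he0orth _ hmem, map_zero]

end
end

section
/- Let H be a separable complex Hilbert space, R and R₁ compact self-adjoint operators on H with ker R = {0}, q ∈ H with ‖q‖ ≤ 1, p = Rq, and assume R₁² = R² − pp*. Suppose the non-zero eigenvalues (λₖ)ₖ≥₁ of R and (μₖ)ₖ≥₁ of R₁ are all simple and satisfy the strict intertwining relations |λ₁| > |μ₁| > |λ₂| > |μ₂| > … > 0. Then the vector p is cyclic for R² (the closed linear span of {(R²)ⁿp : n ≥ 0} is all of H), and the unique contraction Σ* with R₁ = Σ*R is asymptotically stable, i.e. (Σ*)ⁿx → 0 in norm for every x ∈ H. -/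
open Filter Topology ContinuousLinearMap

section AuxLemmas
variable {E : Type*} [NormedAddCommGroup E] [InnerProductSpace ℂ E]

local notation "⟪" x ", " y "⟫" => @inner ℂ _ _ x y

lemma re_inner_symm [CompleteSpace E] {S : E →L[ℂ] E} (hsa : IsSelfAdjoint S) (u v : E) :
    (⟪S v, u⟫).re = (⟪S u, v⟫).re := by
  have h1 : ⟪S v, u⟫ = ⟪v, S u⟫ := hsa.isSymmetric v u
  have h2 : ⟪v, S u⟫ = (starRingEnd ℂ) ⟪S u, v⟫ := (inner_conj_symm v (S u)).symm
  rw [h1, h2, Complex.conj_re]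

lemma norm_le_of_forms [CompleteSpace E] (S : E →L[ℂ] E) (hsa : IsSelfAdjoint S) {M : ℝ}
    (hM : 0 ≤ M) (h : ∀ z : E, |(⟪S z, z⟫).re| ≤ M * ‖z‖ ^ 2) : ‖S‖ ≤ M := by
  refine opNorm_le_bound S hM fun x => ?_
  rcases eq_or_ne (S x) 0 with h0 | h0
  · rw [h0, norm_zero]; positivity
  rcases eq_or_ne x 0 with rfl | hx
  · simp at h0
  have hxn : 0 < ‖x‖ := norm_pos_iff.2 hx
  have hSxn : 0 < ‖S x‖ := norm_pos_iff.2 h0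
  set y : E := ((‖x‖ / ‖S x‖ : ℝ) : ℂ) • S x with hy
  have hyn : ‖y‖ = ‖x‖ := by
    rw [hy, norm_smul, Complex.norm_real, Real.norm_eq_abs,
      abs_of_nonneg (div_nonneg hxn.le hSxn.le)]
    field_simp
  have hrs := re_inner_symm hsa x y
  have e1 : ⟪S (x+y), x+y⟫ = ⟪S x, x⟫ + ⟪S x, y⟫ + ⟪S y, x⟫ + ⟪S y, y⟫ := by
    rw [map_add, inner_add_left, inner_add_right, inner_add_right]; ring
  have e2 : ⟪S (x-y), x-y⟫ = ⟪S x, x⟫ - ⟪S x, y⟫ - ⟪S y, x⟫ + ⟪S y, y⟫ := by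
    rw [map_sub, inner_sub_left, inner_sub_right, inner_sub_right]; ring
  have hkey : 4 * (⟪S x, y⟫).re = (⟪S (x + y), x + y⟫).re - (⟪S (x - y), x - y⟫).re := by
    rw [e1, e2]
    simp only [Complex.add_re, Complex.sub_re]
    linarith
  have h1 := abs_le.1 (h (x+y))
  have h2 := abs_le.1 (h (x-y))
  have hpar : ‖x+y‖^2 + ‖x-y‖^2 = 2*(‖x‖^2 + ‖y‖^2) := by
    have := parallelogram_law_with_norm ℂ x y
    nlinarith [this]
  have hval : (⟪S x, y⟫).re = ‖x‖ * ‖S x‖ := by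
    have him : (⟪S x, S x⟫).im = 0 := inner_self_im (𝕜 := ℂ) (S x)
    have hre : (⟪S x, S x⟫).re = ‖S x‖ ^ 2 := inner_self_eq_norm_sq (𝕜 := ℂ) (S x)
    rw [hy, inner_smul_right, Complex.mul_re, Complex.ofReal_re, Complex.ofReal_im, him, hre]
    field_simp
    ring
  have hineq : 4 * (‖x‖ * ‖S x‖) ≤ 4 * (M * ‖x‖ ^ 2) := by
    have h3 : 4 * (⟪S x, y⟫).re ≤ M * ‖x+y‖^2 + M * ‖x-y‖^2 := by
      rw [hkey]; linarith
    rw [hval] at h3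
    have h5 : M * ‖x + y‖ ^ 2 + M * ‖x - y‖ ^ 2 = 4 * (M * ‖x‖ ^ 2) := by
      rw [hyn] at hpar; linear_combination M * hpar
    linarith
  nlinarith [hineq, hxn]


lemma eig_aux [CompleteSpace E] (S : E →L[ℂ] E) (hcpt : IsCompactOperator S)
    {a : ℝ} (ha : 0 < a)
    (hseq : ∀ n : ℕ, ∃ z : E, ‖z‖ ≤ 1 ∧ a - 1/(n+1) < (⟪S z, z⟫).re ∧
      |(⟪S z, z⟫).re| ≤ a ∧ ‖S z‖ ≤ a) :
    ∃ e : E, e ≠ 0 ∧ S e = (a : ℂ) • e := by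
  choose x hx1 hx2 hx3 hx4 using hseq
  have hlow : Tendsto (fun n : ℕ => a - 1/(n+1)) atTop (𝓝 a) := by
    have h0 : Tendsto (fun n : ℕ => 1/((n:ℝ)+1)) atTop (𝓝 0) :=
      tendsto_one_div_add_atTop_nhds_zero_nat
    simpa using (tendsto_const_nhds (x := a)).sub h0
  have hΦt : Tendsto (fun n => (⟪S (x n), x n⟫).re) atTop (𝓝 a) := by
    refine tendsto_of_tendsto_of_tendsto_of_le_of_le hlow tendsto_const_nhds
      (fun n => (hx2 n).le) (fun n => (abs_le.1 (hx3 n)).2)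
  have hub : ∀ n, ‖S (x n) - (a:ℂ) • x n‖^2 ≤ 2*a^2 - 2*(a * (⟪S (x n), x n⟫).re) := by
    intro n
    have hns := norm_sub_sq (𝕜 := ℂ) (S (x n)) ((a:ℂ) • x n)
    have hre : RCLike.re ⟪S (x n), (a:ℂ) • x n⟫ = a * (⟪S (x n), x n⟫).re := by
      rw [inner_smul_right]
      simp [Complex.mul_re, Complex.ofReal_re, Complex.ofReal_im]
    rw [hre] at hns
    have h1 : ‖S (x n)‖^2 ≤ a^2 := by nlinarith [hx4 n, norm_nonneg (S (x n))]
    have h2 : ‖(a:ℂ) • x n‖^2 ≤ a^2 := by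
      rw [norm_smul, Complex.norm_real, Real.norm_eq_abs, abs_of_pos ha]
      nlinarith [mul_le_mul (hx1 n) (hx1 n) (norm_nonneg (x n)) zero_le_one, sq_nonneg a]
    rw [hns]
    linarith
  have hdiff2 : Tendsto (fun n => ‖S (x n) - (a:ℂ) • x n‖^2) atTop (𝓝 0) := by
    have hup : Tendsto (fun n => 2*a^2 - 2*(a * (⟪S (x n), x n⟫).re)) atTop (𝓝 0) := by
      have h2 := (tendsto_const_nhds (x := 2*a^2)).sub ((hΦt.const_mul a).const_mul (2:ℝ))
      convert h2 using 2
      ring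
    exact tendsto_of_tendsto_of_tendsto_of_le_of_le tendsto_const_nhds hup
      (fun n => sq_nonneg _) hub
  have hdiff : Tendsto (fun n => ‖S (x n) - (a:ℂ) • x n‖) atTop (𝓝 0) := by
    have := hdiff2.sqrt
    simpa [Real.sqrt_sq (norm_nonneg _)] using this
  obtain ⟨K, hK, hKsub⟩ := hcpt.image_closedBall_subset_compact 1
  have hmem : ∀ n, S (x n) ∈ K := fun n =>
    hKsub ⟨x n, by simpa [Metric.mem_closedBall, dist_zero_right] using hx1 n, rfl⟩
  obtain ⟨w, hwK, φ, hφ, hφt⟩ := hK.tendsto_subseq hmem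
  have hφatTop := hφ.tendsto_atTop
  have hdiffφ : Tendsto (fun n => S (x (φ n)) - (a:ℂ) • x (φ n)) atTop (𝓝 0) := by
    exact tendsto_zero_iff_norm_tendsto_zero.mpr (hdiff.comp hφatTop)
  have h2 : Tendsto (fun n => (a:ℂ) • x (φ n)) atTop (𝓝 w) := by
    have heq : (fun n => (a:ℂ) • x (φ n))
        = fun n => S (x (φ n)) - (S (x (φ n)) - (a:ℂ) • x (φ n)) := by
      funext n; abel
    rw [heq]
    simpa using hφt.sub hdiffφ
  set e : E := (a:ℂ)⁻¹ • w with he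
  have hane : ((a:ℝ) : ℂ) ≠ 0 := by exact_mod_cast ha.ne'
  have hxφt : Tendsto (fun n => x (φ n)) atTop (𝓝 e) := by
    have h10 := h2.const_smul ((a:ℂ)⁻¹)
    have h11 : (fun n => x (φ n)) = fun n => (a:ℂ)⁻¹ • ((a:ℂ) • x (φ n)) := by
      funext n; rw [smul_smul, inv_mul_cancel₀ hane, one_smul]
    rw [he, h11]
    exact h10
  have hSe : S e = w := by
    have h3 : Tendsto (fun n => S (x (φ n))) atTop (𝓝 (S e)) :=
      (S.continuous.tendsto e).comp hxφt
    exact tendsto_nhds_unique h3 hφt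
  have hwnorm : a ≤ ‖w‖ := by
    have hb : ∀ n, (⟪S (x n), x n⟫).re ≤ ‖S (x n)‖ := by
      intro n
      have h5 : |(⟪S (x n), x n⟫).re| ≤ ‖(⟪S (x n), x n⟫ : ℂ)‖ := Complex.abs_re_le_norm _
      have h6 : ‖(⟪S (x n), x n⟫ : ℂ)‖ ≤ ‖S (x n)‖ * ‖x n‖ := norm_inner_le_norm _ _
      have h7 : ‖S (x n)‖ * ‖x n‖ ≤ ‖S (x n)‖ * 1 :=
        mul_le_mul_of_nonneg_left (hx1 n) (norm_nonneg _)
      calc (⟪S (x n), x n⟫).re ≤ |(⟪S (x n), x n⟫).re| := le_abs_self _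
        _ ≤ ‖S (x n)‖ := by linarith
    have hnt : Tendsto (fun n => ‖S (x (φ n))‖) atTop (𝓝 ‖w‖) :=
      (continuous_norm.tendsto w).comp hφt
    have hΦφ : Tendsto (fun n => (⟪S (x (φ n)), x (φ n)⟫).re) atTop (𝓝 a) :=
      hΦt.comp hφatTop
    exact le_of_tendsto_of_tendsto hΦφ hnt (Eventually.of_forall fun n => hb (φ n))
  have hwne : w ≠ 0 := by
    intro h; rw [h, norm_zero] at hwnorm; linarith
  refine ⟨e, ?_, ?_⟩
  · rw [he]; exact smul_ne_zero (inv_ne_zero hane) hwne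
  · rw [hSe, he, smul_smul, mul_inv_cancel₀ hane, one_smul]


lemma exists_eigenvector_of_compact [CompleteSpace E] (S : E →L[ℂ] E) (hsa : IsSelfAdjoint S)
    (hcpt : IsCompactOperator S) (hS : S ≠ 0) :
    ∃ (t : ℝ) (e : E), t ≠ 0 ∧ e ≠ 0 ∧ S e = (t : ℂ) • e := by
  set Φ : E → ℝ := fun z => (⟪S z, z⟫).re with hΦ
  set B : Set E := Metric.closedBall (0 : E) 1 with hB
  have hB0 : (0:E) ∈ B := Metric.mem_closedBall_self zero_le_one
  have hmemB : ∀ z : E, z ∈ B ↔ ‖z‖ ≤ 1 := by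
    intro z; rw [hB, Metric.mem_closedBall, dist_zero_right]
  have hbound : ∀ z ∈ B, |Φ z| ≤ ‖S‖ := by
    intro z hz
    have hz1 : ‖z‖ ≤ 1 := (hmemB z).1 hz
    have h5 : |Φ z| ≤ ‖(⟪S z, z⟫ : ℂ)‖ := Complex.abs_re_le_norm _
    have h6 : ‖(⟪S z, z⟫ : ℂ)‖ ≤ ‖S z‖ * ‖z‖ := norm_inner_le_norm _ _
    have h7 : ‖S z‖ ≤ ‖S‖ * ‖z‖ := S.le_opNorm z
    have h8 : ‖S z‖ * ‖z‖ ≤ ‖S‖ := by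
      nlinarith [norm_nonneg (S z), norm_nonneg z, S.opNorm_nonneg]
    linarith
  set Mp := sSup (Φ '' B) with hMp
  set Mn := sSup ((fun z => -Φ z) '' B) with hMn
  have hne : (Φ '' B).Nonempty := ⟨Φ 0, ⟨0, hB0, rfl⟩⟩
  have hnen : ((fun z => -Φ z) '' B).Nonempty := ⟨-Φ 0, ⟨0, hB0, rfl⟩⟩
  have hbddp : BddAbove (Φ '' B) := ⟨‖S‖, by rintro _ ⟨z, hz, rfl⟩; exact (abs_le.1 (hbound z hz)).2⟩
  have hbddn : BddAbove ((fun z => -Φ z) '' B) := ⟨‖S‖, by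
    rintro _ ⟨z, hz, rfl⟩
    have := (abs_le.1 (hbound z hz)).1; simp only; linarith⟩
  set M := max Mp Mn with hM
  have hMub : ∀ z ∈ B, |Φ z| ≤ M := by
    intro z hz
    rw [abs_le]; constructor
    · have h1 : -Φ z ≤ Mn := le_csSup hbddn ⟨z, hz, rfl⟩
      have h2 := le_max_right Mp Mn
      linarith
    · have h1 : Φ z ≤ Mp := le_csSup hbddp ⟨z, hz, rfl⟩
      have h2 := le_max_left Mp Mn
      linarith
  have hΦ0 : Φ 0 = 0 := by simp [hΦ]
  have hM0 : 0 ≤ M := by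
    have := hMub 0 hB0; rw [hΦ0] at this; simpa using this
  have hquad : ∀ z : E, |(⟪S z, z⟫).re| ≤ M * ‖z‖ ^ 2 := by
    intro z
    rcases eq_or_ne z 0 with rfl | hz
    · simpa using by simpa [hΦ0] using mul_nonneg hM0 (sq_nonneg (0:ℝ))
    · have hzn : 0 < ‖z‖ := norm_pos_iff.2 hz
      set u : E := ((‖z‖⁻¹ : ℝ) : ℂ) • z with hu
      have hun : u ∈ B := by
        rw [hmemB, hu, norm_smul, Complex.norm_real, Real.norm_eq_abs,
          abs_of_nonneg (inv_nonneg.2 hzn.le), inv_mul_cancel₀ hzn.ne']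
      have hinner : ⟪S u, u⟫ = ((‖z‖⁻¹ ^ 2 : ℝ) : ℂ) * ⟪S z, z⟫ := by
        rw [hu, map_smul, inner_smul_left, inner_smul_right, Complex.conj_ofReal]
        push_cast; ring
      have hscale : Φ u = ‖z‖⁻¹ ^ 2 * Φ z := by
        rw [hΦ]; simp only
        rw [hinner, Complex.mul_re, Complex.ofReal_re, Complex.ofReal_im]
        simp
      have h1 : |Φ u| ≤ M := hMub u hun
      have h2 : Φ z = ‖z‖ ^ 2 * Φ u := by
        rw [hscale]; field_simp
      have : |Φ z| = ‖z‖^2 * |Φ u| := by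
        rw [h2, abs_mul, abs_of_nonneg (sq_nonneg _)]
      rw [show |(⟪S z, z⟫).re| = |Φ z| from rfl, this]
      calc ‖z‖^2 * |Φ u| ≤ ‖z‖^2 * M := by gcongr
        _ = M * ‖z‖^2 := by ring
  have hSleM : ‖S‖ ≤ M := norm_le_of_forms S hsa hM0 hquad
  have hSpos : 0 < ‖S‖ := norm_pos_iff.2 hS
  have hMpos : 0 < M := lt_of_lt_of_le hSpos hSleM
  rcases max_cases Mp Mn with ⟨hMeq, _⟩ | ⟨hMeq, _⟩
  · -- M = Mp : positive case
    have hseq : ∀ n : ℕ, ∃ z : E, ‖z‖ ≤ 1 ∧ M - 1/(n+1) < (⟪S z, z⟫).re ∧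
        |(⟪S z, z⟫).re| ≤ M ∧ ‖S z‖ ≤ M := by
      intro n
      have hlt : M - 1/(n+1) < Mp := by
        rw [← hMeq]
        have : (0:ℝ) < 1/(n+1) := by positivity
        linarith
      obtain ⟨_, ⟨z, hz, rfl⟩, hgt⟩ := exists_lt_of_lt_csSup hne hlt
      refine ⟨z, (hmemB z).1 hz, hgt, hMub z hz, ?_⟩
      calc ‖S z‖ ≤ ‖S‖ * ‖z‖ := S.le_opNorm z
        _ ≤ M * 1 := mul_le_mul hSleM ((hmemB z).1 hz) (norm_nonneg z) hM0
        _ = M := mul_one M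
    obtain ⟨e, hene, hSe⟩ := eig_aux S hcpt hMpos hseq
    exact ⟨M, e, hMpos.ne', hene, hSe⟩
  · -- M = Mn : negative case, apply to -S
    have hsa' : IsSelfAdjoint (-S) := hsa.neg
    have hcpt' : IsCompactOperator (⇑(-S)) := by
      have := hcpt.neg
      simpa using this
    have hΦneg : ∀ z : E, (⟪(-S) z, z⟫).re = -Φ z := by
      intro z
      rw [ContinuousLinearMap.neg_apply, inner_neg_left]
      simp [hΦ]
    have hseq : ∀ n : ℕ, ∃ z : E, ‖z‖ ≤ 1 ∧ M - 1/(n+1) < (⟪(-S) z, z⟫).re ∧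
        |(⟪(-S) z, z⟫).re| ≤ M ∧ ‖(-S) z‖ ≤ M := by
      intro n
      have hlt : M - 1/(n+1) < Mn := by
        rw [← hMeq]
        have : (0:ℝ) < 1/(n+1) := by positivity
        linarith
      obtain ⟨_, ⟨z, hz, rfl⟩, hgt⟩ := exists_lt_of_lt_csSup hnen hlt
      refine ⟨z, (hmemB z).1 hz, by rw [hΦneg]; exact hgt, ?_, ?_⟩
      · rw [hΦneg, abs_neg]; exact hMub z hz
      · rw [ContinuousLinearMap.neg_apply, norm_neg]
        calc ‖S z‖ ≤ ‖S‖ * ‖z‖ := S.le_opNorm z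
          _ ≤ M * 1 := mul_le_mul hSleM ((hmemB z).1 hz) (norm_nonneg z) hM0
          _ = M := mul_one M
    obtain ⟨e, hene, hSe⟩ := eig_aux (-S) hcpt' hMpos hseq
    refine ⟨-M, e, by simpa using hMpos.ne', hene, ?_⟩
    have : -(S e) = (M:ℂ) • e := by rw [← ContinuousLinearMap.neg_apply]; exact hSe
    have h2 : S e = -((M:ℂ) • e) := by rw [← this, neg_neg]
    rw [h2, ← neg_smul]
    norm_cast


lemma stability [CompleteSpace E] (R : E →L[ℂ] E) (q : E) (hR_cpt : IsCompactOperator R)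
    (T : E →L[ℂ] E) (hT : ‖T‖ ≤ 1)
    (hTR : ∀ y : E, T (R y) = R ((ContinuousLinearMap.adjoint T) y))
    (hD : ∀ y : E, ‖T y‖^2 = ‖y‖^2 - ‖(⟪q, y⟫:ℂ)‖^2)
    (hdense : Dense (Set.range R))
    (hcyc : ∀ v : E, (∀ k : ℕ, (⟪q, ((R^k) v)⟫:ℂ) = 0) → v = 0)
    (x : E) : Tendsto (fun n : ℕ => ‖(T ^ n) x‖) atTop (𝓝 0) := by
  set Ts := ContinuousLinearMap.adjoint T with hTsdef
  have hTs_opnorm : ‖Ts‖ ≤ 1 := by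
    rw [hTsdef]
    have : ‖ContinuousLinearMap.adjoint T‖ = ‖T‖ := by
      exact LinearIsometryEquiv.norm_map _ T
    rw [this]; exact hT
  have hTs_norm : ∀ y : E, ‖Ts y‖ ≤ ‖y‖ := by
    intro y
    calc ‖Ts y‖ ≤ ‖Ts‖ * ‖y‖ := Ts.le_opNorm y
      _ ≤ 1 * ‖y‖ := mul_le_mul_of_nonneg_right hTs_opnorm (norm_nonneg y)
      _ = ‖y‖ := one_mul _
  have hT_norm : ∀ y : E, ‖T y‖ ≤ ‖y‖ := by
    intro y
    calc ‖T y‖ ≤ ‖T‖ * ‖y‖ := T.le_opNorm y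
      _ ≤ 1 * ‖y‖ := mul_le_mul_of_nonneg_right hT (norm_nonneg y)
      _ = ‖y‖ := one_mul _
  have hTn_norm : ∀ (n : ℕ) (y : E), ‖(T^n) y‖ ≤ ‖y‖ := by
    intro n
    induction n with
    | zero => intro y; simp
    | succ n ih =>
      intro y
      rw [pow_succ, ContinuousLinearMap.mul_apply]
      exact le_trans (ih (T y)) (hT_norm y)
  have hTsn_norm : ∀ (n : ℕ) (y : E), ‖(Ts^n) y‖ ≤ ‖y‖ := by
    intro n
    induction n with
    | zero => intro y; simp
    | succ n ih =>
      intro y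
      rw [pow_succ, ContinuousLinearMap.mul_apply]
      exact le_trans (ih (Ts y)) (hTs_norm y)
  have hIso : ∀ y : E, (⟪q, y⟫:ℂ) = 0 → Ts (T y) = y := by
    intro y hy
    have h1 : ‖T y‖^2 = ‖y‖^2 := by rw [hD y, hy]; simp
    have h2 : (⟪Ts (T y), y⟫:ℂ) = ⟪T y, T y⟫ := by
      rw [hTsdef]
      exact adjoint_inner_left T y (T y)
    have h3 : ‖Ts (T y) - y‖^2
        = ‖Ts (T y)‖^2 - 2 * RCLike.re (⟪Ts (T y), y⟫:ℂ) + ‖y‖^2 :=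
      norm_sub_sq (𝕜 := ℂ) _ _
    have h4 : RCLike.re (⟪Ts (T y), y⟫:ℂ) = ‖T y‖^2 := by
      rw [h2]; exact inner_self_eq_norm_sq (𝕜 := ℂ) (T y)
    have h5 : ‖Ts (T y)‖ ≤ ‖T y‖ := hTs_norm _
    have h6 : ‖Ts (T y) - y‖^2 ≤ 0 := by
      rw [h3, h4]
      nlinarith [norm_nonneg (Ts (T y)), norm_nonneg (T y)]
    have h7 : ‖Ts (T y) - y‖^2 = 0 := le_antisymm h6 (sq_nonneg _)
    have h8 : ‖Ts (T y) - y‖ = 0 := sq_eq_zero_iff.1 h7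
    exact sub_eq_zero.1 (norm_eq_zero.1 h8)
  have hTRn : ∀ (n : ℕ) (y : E), (T^n) (R y) = R ((Ts^n) y) := by
    intro n
    induction n with
    | zero => intro y; simp
    | succ n ih =>
      intro y
      rw [pow_succ, ContinuousLinearMap.mul_apply, hTR y, ih (Ts y),
        pow_succ, ContinuousLinearMap.mul_apply]
  -- Step A : convergence on the range of R
  have hrange : ∀ u : E, Tendsto (fun n : ℕ => ‖(T ^ n) (R u)‖) atTop (𝓝 0) := by
    intro u
    set z : ℕ → E := fun n => (Ts^n) u with hz
    have hz_norm : ∀ n, ‖z n‖ ≤ ‖u‖ := fun n => hTsn_norm n u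
    have hz_succ : ∀ n, z (n+1) = Ts (z n) := by
      intro n
      rw [hz]; simp only
      rw [pow_succ', ContinuousLinearMap.mul_apply]
    have hTRz : ∀ n, T (R (z n)) = R (z (n+1)) := by
      intro n; rw [hTR, hz_succ]
    set g : ℕ → ℝ := fun n => ‖R (z n)‖ with hg
    have hg_nonneg : ∀ n, 0 ≤ g n := fun n => norm_nonneg _
    have hg_succ_sq : ∀ n, g (n+1)^2 = g n ^2 - ‖(⟪q, R (z n)⟫:ℂ)‖^2 := by
      intro n
      rw [hg]; simp only
      rw [← hTRz n, hD (R (z n))]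
    have hg_anti : Antitone g := by
      apply antitone_nat_of_succ_le
      intro n
      have h1 := hg_succ_sq n
      have h2 : g (n+1)^2 ≤ g n ^2 := by nlinarith [sq_nonneg (‖(⟪q, R (z n)⟫:ℂ)‖)]
      exact (pow_le_pow_iff_left₀ (hg_nonneg _) (hg_nonneg _) two_ne_zero).1 h2
    have hg_bdd : BddBelow (Set.range g) := ⟨0, by rintro _ ⟨n, rfl⟩; exact norm_nonneg _⟩
    set c := ⨅ n, g n with hc
    have hgc : Tendsto g atTop (𝓝 c) := tendsto_atTop_ciInf hg_anti hg_bdd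
    have hc0 : 0 ≤ c := le_ciInf hg_nonneg
    have hgoal_eq : (fun n : ℕ => ‖(T ^ n) (R u)‖) = g := by
      funext n; rw [hg]; simp only; rw [hTRn n u]
    rw [hgoal_eq]
    rcases eq_or_lt_of_le hc0 with hceq | hcpos
    · rwa [← hceq] at hgc
    exfalso
    -- auxiliary limits
    have hg2 : Tendsto (fun n => g n ^ 2) atTop (𝓝 (c^2)) := hgc.pow 2
    have hdq : Tendsto (fun n => ‖(⟪q, R (z n)⟫ : ℂ)‖^2) atTop (𝓝 0) := by
      have h1 : (fun n => ‖(⟪q, R (z n)⟫:ℂ)‖^2) = fun n => g n^2 - g (n+1)^2 := by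
        funext n; rw [hg_succ_sq n]; ring
      rw [h1]
      have h2 : Tendsto (fun n => g (n+1)^2) atTop (𝓝 (c^2)) :=
        hg2.comp (tendsto_add_atTop_nat 1)
      simpa using hg2.sub h2
    have hdq0 : Tendsto (fun n => (⟪q, R (z n)⟫ : ℂ)) atTop (𝓝 0) := by
      rw [tendsto_zero_iff_norm_tendsto_zero]
      have := hdq.sqrt
      simpa [Real.sqrt_sq (norm_nonneg _)] using this
    -- compact container
    obtain ⟨K0, hK0cpt, hK0sub⟩ := hR_cpt.image_closedBall_subset_compact ‖u‖
    set U : Ultrafilter ℕ := Ultrafilter.of atTop with hU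
    have hUle : (U : Filter ℕ) ≤ atTop := Ultrafilter.of_le atTop
    have extract : ∀ w : ℕ → E, (∀ i, w i ∈ K0) →
        ∃ a, a ∈ K0 ∧ Tendsto w (U : Filter ℕ) (𝓝 a) := by
      intro w hw
      have h1 : (↑(U.map w) : Filter E) ≤ 𝓟 K0 := by
        rw [Ultrafilter.coe_map]
        exact Filter.le_principal_iff.mpr (Filter.mem_map.mpr (Filter.univ_mem' hw))
      obtain ⟨a, ha, hle⟩ := hK0cpt.ultrafilter_le_nhds (U.map w) h1
      refine ⟨a, ha, ?_⟩
      rwa [Ultrafilter.coe_map] at hle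
    have hshift : ∀ m : ℤ, Tendsto (fun i : ℕ => ((m + i).toNat)) atTop atTop := by
      intro m
      refine tendsto_atTop_atTop.2 (fun b => ⟨b + m.natAbs, fun i hi => ?_⟩)
      omega
    have hshiftZ : ∀ m : ℤ, Tendsto (fun i : ℕ => m + (i:ℤ)) atTop atTop := by
      intro m
      exact tendsto_atTop_add_const_left _ m tendsto_natCast_atTop_atTop
    have hzmem : ∀ i : ℕ, R (z i) ∈ K0 := fun i =>
      hK0sub ⟨z i, by simpa [Metric.mem_closedBall, dist_zero_right] using hz_norm i, rfl⟩
    -- the tower of orbits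
    have htower : ∀ j : ℕ, ∃ v : ℤ → E,
        (∀ m : ℤ, v m ∈ K0) ∧ (∀ m : ℤ, ‖v m‖ = c) ∧
        (∀ k : ℕ, k ≤ j → ∀ m : ℤ, T ((R^k) (v m)) = (R^k) (v (m + (-1)^k))) ∧
        (∀ k : ℕ, k ≤ j → ∀ m : ℤ, (⟪q, (R^k) (v m)⟫ : ℂ) = 0) := by
      intro j
      induction j with
      | zero =>
        have spec : ∀ m : ℤ, ∃ a, a ∈ K0 ∧
            Tendsto (fun i : ℕ => R (z ((m + i).toNat))) (U : Filter ℕ) (𝓝 a) :=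
          fun m => extract _ (fun i => hzmem _)
        choose v hv1 hv2 using spec
        refine ⟨v, hv1, ?_, ?_, ?_⟩
        · intro m
          have h1 : Tendsto (fun i : ℕ => ‖R (z ((m+i).toNat))‖) (U : Filter ℕ) (𝓝 ‖v m‖) :=
            (continuous_norm.tendsto _).comp (hv2 m)
          have h2 : Tendsto (fun i : ℕ => g ((m+(i:ℤ)).toNat)) atTop (𝓝 c) :=
            hgc.comp (hshift m)
          exact tendsto_nhds_unique h1 (h2.mono_left hUle)
        · intro k hk m
          have hk0 : k = 0 := Nat.le_zero.1 hk
          subst hk0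
          simp only [pow_zero, ContinuousLinearMap.one_apply]
          have h1 : Tendsto (fun i : ℕ => T (R (z ((m+(i:ℤ)).toNat)))) (U : Filter ℕ)
              (𝓝 (T (v m))) := (T.continuous.tendsto _).comp (hv2 m)
          have heq : ∀ᶠ i : ℕ in (U : Filter ℕ),
              T (R (z ((m+(i:ℤ)).toNat))) = R (z ((m+1+(i:ℤ)).toNat)) := by
            apply Filter.Eventually.filter_mono hUle
            filter_upwards [Filter.eventually_ge_atTop m.natAbs] with i hi
            rw [hTRz ((m+(i:ℤ)).toNat)]
            congr 2
            omega
          have h1' : Tendsto (fun i : ℕ => R (z ((m+1+(i:ℤ)).toNat))) (U : Filter ℕ)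
              (𝓝 (T (v m))) := h1.congr' heq
          have h2 : Tendsto (fun i : ℕ => R (z ((m+1+(i:ℤ)).toNat))) (U : Filter ℕ)
              (𝓝 (v (m+1))) := hv2 (m+1)
          have := tendsto_nhds_unique h1' h2
          simpa using this
        · intro k hk m
          have hk0 : k = 0 := Nat.le_zero.1 hk
          subst hk0
          simp only [pow_zero, ContinuousLinearMap.one_apply]
          have h1 : Tendsto (fun i : ℕ => (⟪q, R (z ((m+(i:ℤ)).toNat))⟫:ℂ)) (U : Filter ℕ)
              (𝓝 (⟪q, v m⟫:ℂ)) := (tendsto_const_nhds (x := q)).inner (hv2 m)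
          have h2 : Tendsto (fun i : ℕ => (⟪q, R (z ((m+(i:ℤ)).toNat))⟫:ℂ)) (U : Filter ℕ)
              (𝓝 0) := (hdq0.comp (hshift m)).mono_left hUle
          exact tendsto_nhds_unique h1 h2
      | succ j ih =>
        obtain ⟨v, hv_mem, hv_norm, hv_orb, hv_orth⟩ := ih
        have hpow : ∀ (k:ℕ) (y:E), (R^(k+1)) y = R ((R^k) y) := by
          intro k y
          rw [pow_succ', ContinuousLinearMap.mul_apply]
        have hv_orb' : ∀ k : ℕ, k ≤ j + 1 → ∀ m : ℤ,
            T ((R^k) (v m)) = (R^k) (v (m + (-1)^k)) := by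
          intro k hk m
          rcases Nat.lt_or_ge k (j+1) with h | h
          · exact hv_orb k (Nat.lt_succ_iff.1 h) m
          · have hkj : k = j + 1 := le_antisymm hk h
            subst hkj
            have hTs_level : Ts ((R^j) (v m)) = (R^j) (v (m - (-1)^j)) := by
              have h1 : T ((R^j) (v (m - (-1)^j))) = (R^j) (v m) := by
                rw [hv_orb j le_rfl (m - (-1)^j)]
                congr 2
                ring
              rw [← h1, hIso]
              exact hv_orth j le_rfl (m - (-1)^j)
            rw [hpow j (v m), hTR, hTs_level, ← hpow j _]
            congr 2
            have hsgn : ((-1:ℤ))^(j+1) = -((-1:ℤ)^j) := by ring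
            rw [hsgn]
            ring
        set f : ℤ → ℝ := fun m => ‖(R^(j+1)) (v m)‖ with hf
        have hf_step : ∀ m : ℤ,
            f (m + (-1)^(j+1)) ^2 = f m ^2 - ‖(⟪q, (R^(j+1)) (v m)⟫:ℂ)‖^2 := by
          intro m
          rw [hf]; simp only
          rw [← hv_orb' (j+1) le_rfl m, hD]
        have hf_nonneg : ∀ m, 0 ≤ f m := fun m => norm_nonneg _
        have hf_bdd : ∀ m, f m ≤ ‖(R^(j+1) : E →L[ℂ] E)‖ * c := by
          intro m
          calc f m ≤ ‖(R^(j+1) : E →L[ℂ] E)‖ * ‖v m‖ := (R^(j+1)).le_opNorm _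
            _ = ‖(R^(j+1) : E →L[ℂ] E)‖ * c := by rw [hv_norm m]
        have hdj : Tendsto (fun m : ℤ => ‖(⟪q, (R^(j+1)) (v m)⟫:ℂ)‖^2) atTop (𝓝 0) := by
          set F : ℤ → ℝ := fun m => f m ^ 2 with hF
          rcases neg_one_pow_eq_or ℤ (j+1) with hsgn | hsgn
          · have hanti : Antitone F := by
              apply antitone_int_of_succ_le
              intro m
              have h1 := hf_step m
              rw [hsgn] at h1
              rw [hF]; simp only
              nlinarith [sq_nonneg (‖(⟪q, (R^(j+1)) (v m)⟫:ℂ)‖)]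
            have hbddB : BddBelow (Set.range F) := ⟨0, by rintro _ ⟨m, rfl⟩; positivity⟩
            have hFt : Tendsto F atTop (𝓝 (⨅ m, F m)) := tendsto_atTop_ciInf hanti hbddB
            have hFt1 : Tendsto (fun m : ℤ => F (m+1)) atTop (𝓝 (⨅ m, F m)) :=
              hFt.comp (tendsto_atTop_add_const_right atTop (1:ℤ) tendsto_id)
            have heq : (fun m : ℤ => ‖(⟪q, (R^(j+1)) (v m)⟫:ℂ)‖^2)
                = fun m : ℤ => F m - F (m+1) := by
              funext m
              have h1 := hf_step m
              rw [hsgn] at h1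
              rw [hF]; simp only
              linarith
            rw [heq]
            simpa using hFt.sub hFt1
          · have hmono : Monotone F := by
              apply monotone_int_of_le_succ
              intro m
              have h1 := hf_step (m+1)
              rw [hsgn] at h1
              have h2 : (m:ℤ) + 1 + -1 = m := by ring
              rw [h2] at h1
              rw [hF]; simp only
              nlinarith [sq_nonneg (‖(⟪q, (R^(j+1)) (v (m+1))⟫:ℂ)‖)]
            have hbddA : BddAbove (Set.range F) := by
              refine ⟨(‖(R^(j+1) : E →L[ℂ] E)‖ * c)^2, ?_⟩
              rintro _ ⟨m, rfl⟩
              have h1 := hf_bdd m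
              have h2 := hf_nonneg m
              rw [hF]; simp only
              nlinarith
            have hFt : Tendsto F atTop (𝓝 (⨆ m, F m)) := tendsto_atTop_ciSup hmono hbddA
            have hFt1 : Tendsto (fun m : ℤ => F (m+(-1))) atTop (𝓝 (⨆ m, F m)) :=
              hFt.comp (tendsto_atTop_add_const_right atTop (-1:ℤ) tendsto_id)
            have heq : (fun m : ℤ => ‖(⟪q, (R^(j+1)) (v m)⟫:ℂ)‖^2)
                = fun m : ℤ => F m - F (m+(-1)) := by
              funext m
              have h1 := hf_step m
              rw [hsgn] at h1
              rw [hF]; simp only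
              linarith
            rw [heq]
            simpa using hFt.sub hFt1
        have hd0 : Tendsto (fun m : ℤ => (⟪q, (R^(j+1)) (v m)⟫:ℂ)) atTop (𝓝 0) := by
          rw [tendsto_zero_iff_norm_tendsto_zero]
          have := hdj.sqrt
          simpa [Real.sqrt_sq (norm_nonneg _)] using this
        have spec : ∀ m : ℤ, ∃ a, a ∈ K0 ∧
            Tendsto (fun i : ℕ => v (m + i)) (U : Filter ℕ) (𝓝 a) :=
          fun m => extract _ (fun i => hv_mem _)
        choose v' hv'1 hv'2 using spec
        refine ⟨v', hv'1, ?_, ?_, ?_⟩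
        · intro m
          have h1 : Tendsto (fun i : ℕ => ‖v (m+(i:ℤ))‖) (U : Filter ℕ) (𝓝 ‖v' m‖) :=
            (continuous_norm.tendsto _).comp (hv'2 m)
          have h2 : (fun i : ℕ => ‖v (m+(i:ℤ))‖) = fun i : ℕ => c := by
            funext i; exact hv_norm _
          rw [h2] at h1
          exact tendsto_nhds_unique h1 tendsto_const_nhds
        · intro k hk m
          have h1 : Tendsto (fun i : ℕ => T ((R^k) (v (m+(i:ℤ))))) (U : Filter ℕ)
              (𝓝 (T ((R^k) (v' m)))) :=
            (T.continuous.tendsto _).comp (((R^k).continuous.tendsto _).comp (hv'2 m))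
          have h2 : Tendsto (fun i : ℕ => (R^k) (v ((m + (-1)^k) + (i:ℤ)))) (U : Filter ℕ)
              (𝓝 ((R^k) (v' (m + (-1)^k)))) :=
            ((R^k).continuous.tendsto _).comp (hv'2 (m + (-1)^k))
          have heq : (fun i : ℕ => T ((R^k) (v (m+(i:ℤ)))))
              = fun i : ℕ => (R^k) (v ((m + (-1)^k) + (i:ℤ))) := by
            funext i
            rw [hv_orb' k hk (m+(i:ℤ))]
            congr 2
            ring
          rw [heq] at h1
          exact tendsto_nhds_unique h1 h2
        · intro k hk m
          have h1 : Tendsto (fun i : ℕ => (⟪q, (R^k) (v (m+(i:ℤ)))⟫:ℂ)) (U : Filter ℕ)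
              (𝓝 (⟪q, (R^k) (v' m)⟫:ℂ)) :=
            (tendsto_const_nhds (x := q)).inner
              (((R^k).continuous.tendsto _).comp (hv'2 m))
          rcases Nat.lt_or_ge k (j+1) with h | h
          · have h2 : (fun i : ℕ => (⟪q, (R^k) (v (m+(i:ℤ)))⟫:ℂ)) = fun i : ℕ => (0:ℂ) := by
              funext i; exact hv_orth k (Nat.lt_succ_iff.1 h) _
            rw [h2] at h1
            exact tendsto_nhds_unique h1 tendsto_const_nhds
          · have hkj : k = j+1 := le_antisymm hk h
            subst hkj
            have h2 : Tendsto (fun i : ℕ => (⟪q, (R^(j+1)) (v (m+(i:ℤ)))⟫:ℂ)) (U : Filter ℕ)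
                (𝓝 0) := (hd0.comp (hshiftZ m)).mono_left hUle
            exact tendsto_nhds_unique h1 h2
    choose vt hvt using htower
    set w : ℕ → E := fun j => vt j 0 with hw
    obtain ⟨wstar, hwstar_mem, hwstar_t⟩ := extract w (fun j => (hvt j).1 0)
    have hwnorm : ‖wstar‖ = c := by
      have h1 : Tendsto (fun j => ‖w j‖) (U : Filter ℕ) (𝓝 ‖wstar‖) :=
        (continuous_norm.tendsto _).comp hwstar_t
      have h2 : (fun j => ‖w j‖) = fun j => c := funext fun j => (hvt j).2.1 0
      rw [h2] at h1
      exact tendsto_nhds_unique h1 tendsto_const_nhds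
    have horth : ∀ k : ℕ, (⟪q, (R^k) wstar⟫:ℂ) = 0 := by
      intro k
      have h1 : Tendsto (fun j => (⟪q, (R^k) (w j)⟫:ℂ)) (U : Filter ℕ)
          (𝓝 (⟪q, (R^k) wstar⟫:ℂ)) :=
        (tendsto_const_nhds (x := q)).inner (((R^k).continuous.tendsto _).comp hwstar_t)
      have h2 : ∀ᶠ j in (U : Filter ℕ), (⟪q, (R^k) (w j)⟫:ℂ) = 0 := by
        apply Filter.Eventually.filter_mono hUle
        filter_upwards [Filter.eventually_ge_atTop k] with j hj
        exact (hvt j).2.2.2 k hj 0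
      have h3 : Tendsto (fun j => (⟪q, (R^k) (w j)⟫:ℂ)) (U : Filter ℕ) (𝓝 0) :=
        Tendsto.congr' (h2.mono fun j hj => hj.symm) tendsto_const_nhds
      exact tendsto_nhds_unique h1 h3
    have hzero := hcyc wstar horth
    rw [hzero, norm_zero] at hwnorm
    exact hcpos.ne hwnorm
  -- Step B : density
  rw [Metric.tendsto_atTop]
  intro ε hε
  obtain ⟨y, ⟨u, rfl⟩, hyd⟩ := Metric.mem_closure_iff.1 (hdense x) (ε/2) (by positivity)
  have h2 := hrange u
  rw [Metric.tendsto_atTop] at h2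
  obtain ⟨N, hN⟩ := h2 (ε/2) (by positivity)
  refine ⟨N, fun n hn => ?_⟩
  have h3 : ‖(T^n) x‖ ≤ ‖(T^n) (x - R u)‖ + ‖(T^n) (R u)‖ := by
    have h4 : (T^n) x = (T^n) (x - R u) + (T^n) (R u) := by
      rw [← map_add]; congr 1; abel
    rw [h4]; exact norm_add_le _ _
  have h4 : ‖(T^n) (x - R u)‖ ≤ ‖x - R u‖ := hTn_norm n _
  have h5 := hN n hn
  rw [Real.dist_eq, sub_zero, abs_of_nonneg (norm_nonneg _)] at h5 ⊢
  have h6 : ‖x - R u‖ < ε/2 := by rw [← dist_eq_norm]; exact hyd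
  linarith


end AuxLemmas

local notation "⟪" x ", " y "⟫" => @inner ℂ _ _ x y

/-- Let `H` be a separable complex Hilbert space, `R`, `R₁` compact
self-adjoint operators with `ker R = {0}`, `q ∈ H` with `‖q‖ ≤ 1`, `p = Rq`, and
`R₁² = R² − pp*`. Suppose the non-zero eigenvalues `(λₖ)` of `R` and `(μₖ)` of `R₁` are all
simple and satisfy `|λ₁| > |μ₁| > |λ₂| > |μ₂| > … > 0`. Then `p` is cyclic for `R²`
(the closed span of `{(R²)ⁿ p}` is `H`) and every contraction `Σ*` with `R₁ = Σ*R`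
is asymptotically stable. -/
theorem statement_4
    {H : Type*} [NormedAddCommGroup H] [InnerProductSpace ℂ H] [CompleteSpace H]
    [TopologicalSpace.SeparableSpace H]
    (R R₁ : H →L[ℂ] H)
    (hR_sa : IsSelfAdjoint R) (hR1_sa : IsSelfAdjoint R₁)
    (hR_cpt : IsCompactOperator R) (hR1_cpt : IsCompactOperator R₁)
    (hR_ker : LinearMap.ker (R : H →ₗ[ℂ] H) = ⊥)
    (q : H) (hq : ‖q‖ ≤ 1) (p : H) (hp : p = R q)
    (hRR1 : R₁ ∘L R₁ = R ∘L R - (innerSL ℂ p).smulRight p)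
    (lam mu : ℕ → ℝ)
    (hlam_ne : ∀ n, lam n ≠ 0)
    (hmu_ne : ∀ n, mu n ≠ 0)
    (h1 : ∀ n, |mu n| < |lam n|)
    (h2 : ∀ n, |lam (n + 1)| < |mu n|)
    (hR_eig : ∀ z : ℂ, z ≠ 0 →
      (Module.End.HasEigenvalue (R : H →ₗ[ℂ] H) z ↔ ∃ n : ℕ, z = (lam n : ℂ)))
    (hR_simple : ∀ z : ℂ, z ≠ 0 → Module.End.HasEigenvalue (R : H →ₗ[ℂ] H) z →
      Module.finrank ℂ (Module.End.eigenspace (R : H →ₗ[ℂ] H) z) = 1)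
    (hR1_eig : ∀ z : ℂ, z ≠ 0 →
      (Module.End.HasEigenvalue (R₁ : H →ₗ[ℂ] H) z ↔ ∃ n : ℕ, z = (mu n : ℂ)))
    (hR1_simple : ∀ z : ℂ, z ≠ 0 → Module.End.HasEigenvalue (R₁ : H →ₗ[ℂ] H) z →
      Module.finrank ℂ (Module.End.eigenspace (R₁ : H →ₗ[ℂ] H) z) = 1) :
    (Submodule.span ℂ (Set.range fun n : ℕ => (((R ∘L R) ^ n) p))).topologicalClosure = ⊤ ∧
    (∀ Sstar : H →L[ℂ] H, ‖Sstar‖ ≤ 1 → R₁ = Sstar ∘L R →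
      ∀ x : H, Tendsto (fun n : ℕ => ‖(Sstar ^ n) x‖) atTop (nhds 0)) := by
  have hRinj : ∀ w : H, R w = 0 → w = 0 := by
    intro w hw
    have h3 : w ∈ LinearMap.ker (R : H →ₗ[ℂ] H) := LinearMap.mem_ker.2 hw
    rw [hR_ker] at h3
    exact h3
  have hRsym : ∀ a b : H, ⟪R a, b⟫ = ⟪a, R b⟫ := fun a b => hR_sa.isSymmetric a b
  have hR1sym : ∀ a b : H, ⟪R₁ a, b⟫ = ⟪a, R₁ b⟫ := fun a b => hR1_sa.isSymmetric a b
  have hpowsym : ∀ (k : ℕ) (a b : H), ⟪(R^k) a, b⟫ = ⟪a, (R^k) b⟫ :=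
    fun k a b => (hR_sa.pow k).isSymmetric a b
  have hre_norm : ∀ u : H, (⟪u, u⟫ : ℂ).re = ‖u‖^2 := fun u =>
    inner_self_eq_norm_sq (𝕜 := ℂ) u
  -- interlacing gives disjoint absolute values
  have hlam_anti : StrictAnti (fun n => |lam n|) :=
    strictAnti_nat_of_succ_lt (fun n => lt_trans (h2 n) (h1 n))
  have hmu_anti : StrictAnti (fun n => |mu n|) :=
    strictAnti_nat_of_succ_lt (fun n => lt_trans (h1 (n+1)) (h2 n))
  have hdisj : ∀ n m : ℕ, |lam n| ≠ |mu m| := by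
    intro n m
    rcases le_or_gt n m with h | h
    · have h3 : |mu m| ≤ |mu n| := hmu_anti.antitone h
      exact (lt_of_le_of_lt h3 (h1 n)).ne'
    · have h3 : |lam n| ≤ |lam (m+1)| := hlam_anti.antitone h
      exact (lt_of_le_of_lt h3 (h2 m)).ne
  -- eigenvalue extraction from a square eigen-relation
  have hfact : ∀ (A : H →L[ℂ] H) (w : H) (s : ℝ), w ≠ 0 → 0 < s →
      A (A w) = ((s^2 : ℝ) : ℂ) • w →
      ∃ zv : H, zv ≠ 0 ∧ (A zv = ((s : ℝ) : ℂ) • zv ∨ A zv = ((-s : ℝ) : ℂ) • zv) := by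
    intro A w s hw hs hAw
    rcases eq_or_ne (A w + ((s:ℝ):ℂ) • w) 0 with h0 | h0
    · refine ⟨w, hw, Or.inr ?_⟩
      have h3 : A w = -(((s:ℝ):ℂ) • w) := by
        rw [← sub_eq_zero]
        rw [sub_neg_eq_add]
        exact h0
      rw [h3, ← neg_smul]
      push_cast
      ring_nf
    · refine ⟨A w + ((s:ℝ):ℂ) • w, h0, Or.inl ?_⟩
      rw [map_add, map_smul, hAw, smul_add, smul_smul]
      have h4 : ((s^2 : ℝ) : ℂ) = ((s:ℝ):ℂ) * ((s:ℝ):ℂ) := by push_cast; ring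
      rw [h4]
      abel
  have habs : ∀ (A : H →L[ℂ] H) (ν : ℕ → ℝ)
      (heig : ∀ z : ℂ, z ≠ 0 → (Module.End.HasEigenvalue (A : H →ₗ[ℂ] H) z ↔ ∃ n : ℕ, z = (ν n : ℂ)))
      (w : H) (s : ℝ), w ≠ 0 → 0 < s → A (A w) = ((s^2 : ℝ) : ℂ) • w →
      ∃ n : ℕ, s = |ν n| := by
    intro A ν heig w s hw hs hAw
    obtain ⟨zv, hzv, hcase⟩ := hfact A w s hw hs hAw
    rcases hcase with hcase | hcase
    · have hev : Module.End.HasEigenvalue (A : H →ₗ[ℂ] H) ((s:ℝ):ℂ) :=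
        Module.End.hasEigenvalue_of_hasEigenvector
          ⟨Module.End.mem_eigenspace_iff.2 hcase, hzv⟩
      have hz : ((s:ℝ):ℂ) ≠ 0 := by exact_mod_cast hs.ne'
      obtain ⟨n, hn⟩ := (heig _ hz).1 hev
      have hn' : s = ν n := by exact_mod_cast hn
      exact ⟨n, by rw [← hn', abs_of_pos hs]⟩
    · have hev : Module.End.HasEigenvalue (A : H →ₗ[ℂ] H) ((-s:ℝ):ℂ) :=
        Module.End.hasEigenvalue_of_hasEigenvector
          ⟨Module.End.mem_eigenspace_iff.2 hcase, hzv⟩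
      have hz : ((-s:ℝ):ℂ) ≠ 0 := by
        simp only [ne_eq, Complex.ofReal_eq_zero]
        linarith
      obtain ⟨n, hn⟩ := (heig _ hz).1 hev
      have hn' : -s = ν n := by exact_mod_cast hn
      exact ⟨n, by rw [← hn', abs_neg, abs_of_pos hs]⟩
  set K := Submodule.span ℂ (Set.range fun n : ℕ => (((R ∘L R) ^ n) p)) with hKdef
  have hp_mem : p ∈ K := by
    apply Submodule.subset_span
    exact ⟨0, by simp⟩
  have hpow_gen : ∀ n : ℕ, ((R ∘L R)^(n+1)) p = (R ∘L R) (((R ∘L R)^n) p) := by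
    intro n
    rw [pow_succ', ContinuousLinearMap.mul_apply]
  have hSK : ∀ y ∈ K, (R ∘L R) y ∈ K := by
    intro y hy
    induction hy using Submodule.span_induction with
    | mem u hu =>
      obtain ⟨n, rfl⟩ := hu
      exact Submodule.subset_span ⟨n+1, hpow_gen n⟩
    | zero => simp
    | add a b _ _ ha hb => rw [map_add]; exact K.add_mem ha hb
    | smul c a _ ha => rw [map_smul]; exact K.smul_mem c ha
  have goal1 : K.topologicalClosure = ⊤ := by
    rw [Submodule.topologicalClosure_eq_top_iff]
    by_contra hbot
    obtain ⟨v0, hv0K, hv0ne⟩ := Submodule.exists_mem_ne_zero_of_ne_bot hbot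
    have hSV : ∀ y ∈ Kᗮ, (R ∘L R) y ∈ Kᗮ := by
      intro y hy
      rw [Submodule.mem_orthogonal] at hy ⊢
      intro u hu
      have h3 : ⟪u, (R ∘L R) y⟫ = ⟪(R ∘L R) u, y⟫ := by
        rw [ContinuousLinearMap.comp_apply, ContinuousLinearMap.comp_apply,
          ← hRsym, ← hRsym]
      rw [h3]
      exact hy _ (hSK u hu)
    haveI : CompleteSpace Kᗮ := K.isClosed_orthogonal.completeSpace_coe
    set S' : Kᗮ →L[ℂ] Kᗮ :=
      ((R ∘L R).comp Kᗮ.subtypeL).codRestrict Kᗮ (fun x => hSV x.1 x.2) with hS'def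
    have hS'val : ∀ x : Kᗮ, (S' x : H) = (R ∘L R) (x : H) := by
      intro x
      rw [hS'def]
      rfl
    have hS'sa : IsSelfAdjoint S' := by
      rw [ContinuousLinearMap.isSelfAdjoint_iff_isSymmetric]
      intro a b
      have h3 : ⟪(S' a : H), (b : H)⟫ = ⟪(a : H), (S' b : H)⟫ := by
        rw [hS'val, hS'val, ContinuousLinearMap.comp_apply, ContinuousLinearMap.comp_apply,
          hRsym, hRsym]
      exact h3
    have hS'cpt : IsCompactOperator S' := by
      have h3 : IsCompactOperator (⇑(R ∘L R)) := hR_cpt.comp_clm R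
      have h4 := (h3.comp_clm Kᗮ.subtypeL).codRestrict
        (V := Kᗮ) (fun x => hSV (Kᗮ.subtypeL x) x.2) K.isClosed_orthogonal
      exact h4
    have hS'ne : S' ≠ 0 := by
      intro h0
      have h3 : (R ∘L R) v0 = 0 := by
        have h4 : (S' ⟨v0, hv0K⟩ : H) = (R ∘L R) v0 := hS'val _
        rw [h0] at h4
        simpa using h4.symm
      exact hv0ne (hRinj v0 (hRinj (R v0) h3))
    obtain ⟨t, e, htne, hene, hSe⟩ := exists_eigenvector_of_compact S' hS'sa hS'cpt hS'ne
    have heval : e.1 ≠ 0 := fun h => hene (Subtype.ext h)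
    have hSe' : (R ∘L R) e.1 = ((t:ℝ):ℂ) • e.1 := by
      have h3 := congrArg (Subtype.val) hSe
      rw [hS'val] at h3
      simpa using h3
    have htpos : 0 < t := by
      have h3 : ⟪(R ∘L R) e.1, e.1⟫ = ⟪R e.1, R e.1⟫ := by
        rw [ContinuousLinearMap.comp_apply, hRsym]
      have h4 : ⟪((t:ℝ):ℂ) • e.1, e.1⟫ = ((t:ℝ):ℂ) * ⟪e.1, e.1⟫ := by
        rw [inner_smul_left, Complex.conj_ofReal]
      have h5 : ((t:ℝ):ℂ) * ⟪e.1, e.1⟫ = ⟪R e.1, R e.1⟫ := by rw [← h4, ← hSe', h3]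
      have h6 : t * ‖e.1‖^2 = ‖R e.1‖^2 := by
        have h9 := congrArg Complex.re h5
        rwa [Complex.mul_re, Complex.ofReal_re, Complex.ofReal_im, zero_mul, sub_zero,
          hre_norm, hre_norm] at h9
      have h7 : 0 < ‖R e.1‖ := norm_pos_iff.2 (fun h => heval (hRinj _ h))
      have h8 : 0 < ‖e.1‖ := norm_pos_iff.2 heval
      nlinarith
    set s := Real.sqrt t with hs
    have hspos : 0 < s := Real.sqrt_pos.2 htpos
    have hssq : (s:ℝ)^2 = t := Real.sq_sqrt htpos.le
    have hR2e : R (R e.1) = ((s^2:ℝ):ℂ) • e.1 := by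
      rw [hssq]
      rw [← ContinuousLinearMap.comp_apply]
      exact hSe'
    have hpe : ⟪p, e.1⟫ = 0 := (K.mem_orthogonal e.1).1 e.2 p hp_mem
    have hR12e : R₁ (R₁ e.1) = ((s^2:ℝ):ℂ) • e.1 := by
      have h3 : (R₁ ∘L R₁) e.1 = (R ∘L R - (innerSL ℂ p).smulRight p) e.1 := by rw [hRR1]
      rw [ContinuousLinearMap.sub_apply, ContinuousLinearMap.smulRight_apply,
        innerSL_apply_apply, hpe, zero_smul, sub_zero] at h3
      have h4 : R₁ (R₁ e.1) = (R₁ ∘L R₁) e.1 := rfl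
      rw [h4, h3, hssq]
      exact hSe'
    obtain ⟨n, hn⟩ := habs R lam hR_eig e.1 s heval hspos hR2e
    obtain ⟨m, hm⟩ := habs R₁ mu hR1_eig e.1 s heval hspos hR12e
    exact hdisj n m (by rw [← hn, ← hm])
  -- dense range of R
  have hdense : Dense (Set.range (⇑R)) := by
    have h3 : (LinearMap.range (R : H →ₗ[ℂ] H))ᗮ = ⊥ := by
      rw [Submodule.eq_bot_iff]
      intro v hv
      rw [Submodule.mem_orthogonal] at hv
      have h4 : R v = 0 := by
        have h5 : ⟪R v, R v⟫ = (0:ℂ) := by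
          have h6 := hv (R (R v)) (LinearMap.mem_range_self _ (R v))
          rwa [hRsym] at h6
        exact inner_self_eq_zero.1 h5
      exact hRinj v h4
    have h7 : (LinearMap.range (R : H →ₗ[ℂ] H)).topologicalClosure = ⊤ :=
      Submodule.topologicalClosure_eq_top_iff.2 h3
    have h8 : Dense ((LinearMap.range (R : H →ₗ[ℂ] H) : Submodule ℂ H) : Set H) :=
      Submodule.dense_iff_topologicalClosure_eq_top.2 h7
    rw [LinearMap.coe_range] at h8; exact h8
  refine ⟨goal1, ?_⟩
  intro T hTnorm hSR x
  have hTR : ∀ y : H, T (R y) = R ((ContinuousLinearMap.adjoint T) y) := by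
    have h3 : ContinuousLinearMap.adjoint R₁ = R₁ := isSelfAdjoint_iff'.1 hR1_sa
    have h4 : ContinuousLinearMap.adjoint R₁ = R ∘L ContinuousLinearMap.adjoint T := by
      rw [hSR, adjoint_comp, isSelfAdjoint_iff'.1 hR_sa]
    intro y
    have h5 : R₁ y = T (R y) := by rw [hSR]; rfl
    rw [← h5, ← h3, h4]
    rfl
  have hD : ∀ y : H, ‖T y‖^2 = ‖y‖^2 - ‖(⟪q, y⟫:ℂ)‖^2 := by
    have heqOn : Set.EqOn (fun y : H => ‖T y‖^2 + ‖(⟪q,y⟫:ℂ)‖^2) (fun y : H => ‖y‖^2)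
        (Set.range ⇑R) := by
      rintro _ ⟨w, rfl⟩
      simp only
      have hTRw : T (R w) = R₁ w := by rw [hSR]; rfl
      have hinner : (⟪q, R w⟫:ℂ) = ⟪p, w⟫ := by
        rw [hp]
        exact (hRsym q w).symm
      have h3 : R₁ (R₁ w) = R (R w) - (⟪p, w⟫:ℂ) • p := by
        have h4 : (R₁ ∘L R₁) w = (R ∘L R - (innerSL ℂ p).smulRight p) w := by rw [hRR1]
        rwa [ContinuousLinearMap.sub_apply, ContinuousLinearMap.smulRight_apply,
          innerSL_apply_apply, ContinuousLinearMap.comp_apply, ContinuousLinearMap.comp_apply] at h4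
      have h5 : ⟪R₁ w, R₁ w⟫ = ⟪R w, R w⟫ - (⟪p,w⟫:ℂ) * ⟪w, p⟫ := by
        rw [hR1sym w (R₁ w), h3, inner_sub_right, inner_smul_right, ← hRsym w (R w)]
      have h6 : (⟪p,w⟫:ℂ) * ⟪w, p⟫ = ((‖(⟪p,w⟫:ℂ)‖^2 : ℝ) : ℂ) := by
        rw [← inner_conj_symm w p, RCLike.mul_conj]
        norm_cast
      have h7 : ‖R₁ w‖^2 = ‖R w‖^2 - ‖(⟪p, w⟫:ℂ)‖^2 := by
        have h8 := congrArg Complex.re h5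
        rwa [h6, Complex.sub_re, Complex.ofReal_re, hre_norm, hre_norm] at h8
      rw [hTRw, h7, hinner]
      ring
    have hcont1 : Continuous (fun y : H => ‖T y‖^2 + ‖(⟪q,y⟫:ℂ)‖^2) := by
      apply Continuous.add
      · exact (T.continuous.norm).pow 2
      · exact ((continuous_const.inner continuous_id).norm).pow 2
    have hcont2 : Continuous (fun y : H => ‖y‖^2) := continuous_norm.pow 2
    have h9 := Continuous.ext_on hdense hcont1 hcont2 heqOn
    intro y
    have h10 := congrFun h9 y
    linarith
  have hcyc : ∀ v : H, (∀ k : ℕ, (⟪q, ((R^k) v)⟫:ℂ) = 0) → v = 0 := by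
    intro v hv
    have hgen : ∀ n : ℕ, ((R ∘L R)^n) p = (R^(2*n+1)) q := by
      intro n
      have hRR : R ∘L R = R^2 := by rw [sq, ContinuousLinearMap.mul_def]
      rw [hRR, ← pow_mul, hp, pow_succ, ContinuousLinearMap.mul_apply]
    have hvK : v ∈ Kᗮ := by
      rw [Submodule.mem_orthogonal]
      intro u hu
      induction hu using Submodule.span_induction with
      | mem u hu =>
        obtain ⟨n, rfl⟩ := hu
        show ⟪((R ∘L R)^n) p, v⟫ = 0
        rw [hgen n, hpowsym (2*n+1) q v]
        exact hv (2*n+1)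
      | zero => simp
      | add a b _ _ ha hb => rw [inner_add_left, ha, hb, add_zero]
      | smul c a _ ha => rw [inner_smul_left, ha, mul_zero]
    have hKbot : Kᗮ = ⊥ := by
      have := Submodule.topologicalClosure_eq_top_iff.1 goal1
      exact this
    rw [hKbot] at hvK
    simpa using hvK
  exact stability R q hR_cpt T hTnorm hTR hD hdense hcyc x
end

section
/- Let T be a contraction (‖T‖ ≤ 1) on a Hilbert space H, let K be a compact operator on H with dense range, and let A be a bounded operator on H satisfying TK = KA. If Aⁿ → 0 in the weak operator topology as n → ∞, then Tⁿ → 0 in the strong operator topology, i.e. ‖Tⁿx‖ → 0 for every x ∈ H. -/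
open Filter Topology

/-- Let `T` be a contraction on a Hilbert space `H`, `K` a compact operator
on `H` with dense range, and `A` a bounded operator with `TK = KA`. If `Aⁿ → 0` in the weak
operator topology, then `Tⁿ → 0` in the strong operator topology. -/
theorem statement_5
    {H : Type*} [NormedAddCommGroup H] [InnerProductSpace ℂ H] [CompleteSpace H]
    (T K A : H →L[ℂ] H)
    (hT : ‖T‖ ≤ 1)
    (hK_cpt : IsCompactOperator K)
    (hK_dense : DenseRange K)
    (hTK : T ∘L K = K ∘L A)
    (hA : ∀ x y : H, Tendsto (fun n : ℕ => (inner ℂ ((A ^ n) x) y : ℂ)) atTop (nhds 0)) :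
    ∀ x : H, Tendsto (fun n : ℕ => ‖(T ^ n) x‖) atTop (nhds 0) := by
  -- powers of T are contractions
  have hTn : ∀ n : ℕ, ∀ z : H, ‖(T ^ n) z‖ ≤ ‖z‖ := by
    intro n z
    match n with
    | 0 => simp
    | Nat.succ m =>
      calc ‖(T ^ (m + 1)) z‖ ≤ ‖T ^ (m + 1)‖ * ‖z‖ := (T ^ (m + 1)).le_opNorm z
      _ ≤ 1 * ‖z‖ := by
          gcongr
          calc ‖T ^ (m + 1)‖ ≤ ‖T‖ ^ (m + 1) := norm_pow_le' T m.succ_pos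
          _ ≤ 1 ^ (m + 1) := pow_le_pow_left₀ (norm_nonneg T) hT _
          _ = 1 := one_pow _
      _ = ‖z‖ := one_mul _
  -- intertwining for powers
  have hTKn : ∀ n : ℕ, (T ^ n) ∘L K = K ∘L (A ^ n) := by
    intro n
    induction n with
    | zero => ext z; simp
    | succ n ih =>
      have h1 : T ^ (n + 1) = (T ^ n) ∘L T := by
        rw [pow_succ]; rfl
      have h2 : A ^ (n + 1) = (A ^ n) ∘L A := by
        rw [pow_succ]; rfl
      rw [h1, h2]
      calc ((T ^ n) ∘L T) ∘L K = (T ^ n) ∘L (T ∘L K) := by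
            rw [ContinuousLinearMap.comp_assoc]
      _ = (T ^ n) ∘L (K ∘L A) := by rw [hTK]
      _ = ((T ^ n) ∘L K) ∘L A := by rw [ContinuousLinearMap.comp_assoc]
      _ = (K ∘L (A ^ n)) ∘L A := by rw [ih]
      _ = K ∘L ((A ^ n) ∘L A) := by rw [ContinuousLinearMap.comp_assoc]
  -- for each x, the orbit {Aⁿ x} is bounded (Banach–Steinhaus on functionals)
  have horb : ∀ x : H, ∃ C : ℝ, ∀ n : ℕ, ‖(A ^ n) x‖ ≤ C := by
    intro x
    have h1 : ∀ y : H, ∃ C : ℝ, ∀ n : ℕ, ‖(innerSL ℂ ((A ^ n) x)) y‖ ≤ C := by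
      intro y
      have := ((hA x y).norm).bddAbove_range
      obtain ⟨C, hC⟩ := this
      exact ⟨C, fun n => hC ⟨n, rfl⟩⟩
    obtain ⟨C', hC'⟩ := banach_steinhaus h1
    refine ⟨C', fun n => ?_⟩
    have := hC' n
    rwa [innerSL_apply_norm] at this
  -- K maps the orbit to a norm-null sequence
  have hKA : ∀ x : H, Tendsto (fun n : ℕ => K ((A ^ n) x)) atTop (𝓝 0) := by
    intro x
    obtain ⟨C, hC⟩ := horb x
    have hSbdd : Bornology.IsBounded (Set.range fun n : ℕ => (A ^ n) x) := by
      apply isBounded_iff_forall_norm_le.2 ⟨C, ?_⟩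
      rintro z ⟨n, rfl⟩
      exact hC n
    have hcpt : IsCompact (closure (K '' Set.range fun n : ℕ => (A ^ n) x)) :=
      IsCompactOperator.isCompact_closure_image_of_bounded (σ₁₂ := RingHom.id ℂ)
        (f := (K : H →ₗ[ℂ] H)) hK_cpt hSbdd
    -- weak convergence of K (Aⁿ x) to 0
    have hweak : ∀ y : H, Tendsto (fun n : ℕ => (inner ℂ (K ((A ^ n) x)) y : ℂ)) atTop (𝓝 0) := by
      intro y
      have := hA x (ContinuousLinearMap.adjoint K y)
      simpa [ContinuousLinearMap.adjoint_inner_right] using this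
    apply tendsto_of_subseq_tendsto
    intro ns hns
    have hmem : ∀ k : ℕ, K ((A ^ (ns k)) x) ∈ closure (K '' Set.range fun n : ℕ => (A ^ n) x) :=
      fun k => subset_closure ⟨(A ^ (ns k)) x, ⟨ns k, rfl⟩, rfl⟩
    obtain ⟨z, _, φ, hφ, hconv⟩ := hcpt.tendsto_subseq hmem
    refine ⟨φ, ?_⟩
    -- show z = 0 using weak convergence
    have hz : z = 0 := by
      have h1 : Tendsto (fun k : ℕ => (inner ℂ (K ((A ^ (ns (φ k))) x)) z : ℂ)) atTop
          (𝓝 (inner ℂ z z)) := by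
        have : Continuous fun w : H => (inner ℂ w z : ℂ) :=
          continuous_inner.comp (continuous_id.prodMk continuous_const)
        exact (this.tendsto z).comp hconv
      have h2 : Tendsto (fun k : ℕ => (inner ℂ (K ((A ^ (ns (φ k))) x)) z : ℂ)) atTop (𝓝 0) :=
        (hweak z).comp ((hns.comp hφ.tendsto_atTop))
      have := tendsto_nhds_unique h1 h2
      exact inner_self_eq_zero.mp this
    rwa [hz] at hconv
  -- conclude by density and uniform contraction bound
  intro x
  rw [NormedAddCommGroup.tendsto_nhds_zero]
  intro ε hε
  obtain ⟨u, hu⟩ := Metric.denseRange_iff.1 hK_dense x (ε / 2) (by linarith)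
  have hKu : Tendsto (fun n : ℕ => K ((A ^ n) u)) atTop (𝓝 0) := hKA u
  have := (NormedAddCommGroup.tendsto_nhds_zero.1 hKu) (ε / 2) (by linarith)
  filter_upwards [this] with n hn
  have key : (T ^ n) (K u) = K ((A ^ n) u) := by
    have := congrArg (fun (S : H →L[ℂ] H) => S u) (hTKn n)
    simpa using this
  calc ‖‖(T ^ n) x‖‖ = ‖(T ^ n) x‖ := norm_norm _
  _ ≤ ‖(T ^ n) (x - K u)‖ + ‖(T ^ n) (K u)‖ := by
      have hx : (T ^ n) x = (T ^ n) (x - K u) + (T ^ n) (K u) := by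
        rw [← map_add, sub_add_cancel]
      rw [hx]
      exact norm_add_le _ _
  _ ≤ ‖x - K u‖ + ‖K ((A ^ n) u)‖ := by
      rw [key]; gcongr; exact hTn n _
  _ < ε / 2 + ε / 2 := by
      apply add_lt_add _ hn
      rw [← dist_eq_norm]
      exact hu
  _ = ε := by ring
end

section
/- Let A be a strict contraction on a complex Hilbert space H, meaning ‖Ax‖ < ‖x‖ for every x ≠ 0. Then Aⁿ → 0 in the weak operator topology as n → ∞, i.e. (Aⁿx, y) → 0 for all x, y ∈ H. -/
open Filter Topology

/-- Let `A` be a strict contraction on a complex Hilbert space `H`, i.e.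
`‖Ax‖ < ‖x‖` for every `x ≠ 0`. Then `Aⁿ → 0` in the weak operator topology:
`(Aⁿx, y) → 0` for all `x, y ∈ H`. -/
theorem statement_7
    {H : Type*} [NormedAddCommGroup H] [InnerProductSpace ℂ H] [CompleteSpace H]
    (A : H →L[ℂ] H)
    (hA : ∀ x : H, x ≠ 0 → ‖A x‖ < ‖x‖) :
    ∀ x y : H, Tendsto (fun n : ℕ => (inner ℂ ((A ^ n) x) y : ℂ)) atTop (nhds 0) := by
  have hA1 : ∀ w : H, ‖A w‖ ≤ ‖w‖ := by
    intro w
    rcases eq_or_ne w 0 with h | h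
    · simp [h]
    · exact (hA w h).le
  have hAm : ∀ (m : ℕ) (w : H), ‖(A ^ m) w‖ ≤ ‖w‖ := by
    intro m
    induction m with
    | zero => intro w; simp
    | succ k ih =>
      intro w
      have : (A ^ (k + 1)) w = (A ^ k) (A w) := by
        rw [pow_succ, ContinuousLinearMap.mul_apply]
      rw [this]
      exact (ih (A w)).trans (hA1 w)
  intro x y
  set u : ℕ → H := fun n => (A ^ n) x with hu
  have hushift : ∀ m n, u (n + m) = (A ^ m) (u n) := by
    intro m n
    simp only [hu]
    rw [← ContinuousLinearMap.mul_apply, ← pow_add, add_comm]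
  have hub : ∀ n, ‖u n‖ ≤ ‖x‖ := fun n => hAm n x
  have hanti : Antitone (fun n => ‖u n‖) := by
    apply antitone_nat_of_succ_le
    intro n
    have h1 : u (n + 1) = A (u n) := (hushift 1 n).trans (by simp)
    rw [h1]
    exact hA1 (u n)
  have hbdd : BddBelow (Set.range fun n => ‖u n‖) :=
    ⟨0, by rintro r ⟨n, rfl⟩; exact norm_nonneg _⟩
  set c : ℝ := ⨅ n, ‖u n‖ with hc
  have hclim : Tendsto (fun n => ‖u n‖) atTop (𝓝 c) := tendsto_atTop_ciInf hanti hbdd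
  rw [tendsto_iff_ultrafilter]
  intro U hU
  -- norms converge to c along U, including shifted versions
  have hclimU : ∀ m : ℕ, Tendsto (fun n => ‖u (n + m)‖) ↑U (𝓝 c) := by
    intro m
    have : Tendsto (fun n => ‖u (n + m)‖) atTop (𝓝 c) :=
      hclim.comp (tendsto_add_atTop_nat m)
    exact this.mono_left hU
  -- embed the orbit into the weak dual, use Banach-Alaoglu to get an ultrafilter limit
  set v : ℕ → WeakDual ℂ H := fun n =>
    StrongDual.toWeakDual (innerSL ℂ (u n)) with hv
  have hvmem : ∀ n, v n ∈ WeakDual.toStrongDual ⁻¹'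
      Metric.closedBall (0 : StrongDual ℂ H) ‖x‖ := by
    intro n
    simp only [Set.mem_preimage, Metric.mem_closedBall, dist_zero_right]
    show ‖innerSL ℂ (u n)‖ ≤ ‖x‖
    rw [innerSL_apply_norm]
    exact hub n
  obtain ⟨f, -, hf⟩ :=
    (WeakDual.isCompact_closedBall (𝕜 := ℂ) (E := H) 0 ‖x‖).ultrafilter_le_nhds
      (U.map v) (by
        rw [Ultrafilter.coe_map, le_principal_iff, mem_map]
        exact univ_mem' hvmem)
  have hfv : Tendsto v ↑U (𝓝 f) := by rwa [Ultrafilter.coe_map] at hf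
  -- the weak limit z
  set z : H := (InnerProductSpace.toDual ℂ H).symm (WeakDual.toStrongDual f) with hz
  have hzf : ∀ w : H, (inner ℂ z w : ℂ) = f w := by
    intro w
    exact InnerProductSpace.toDual_symm_apply
  -- weak convergence of the orbit to z along U
  have hweak : ∀ w : H, Tendsto (fun n => (inner ℂ (u n) w : ℂ)) ↑U (𝓝 (inner ℂ z w)) := by
    intro w
    have hcont : Continuous fun g : WeakDual ℂ H => g w := WeakDual.eval_continuous w
    have := (hcont.tendsto f).comp hfv
    rw [hzf w]; exact this
  -- weak convergence of the shifted orbit to A^m z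
  have hweakm : ∀ (m : ℕ) (w : H),
      Tendsto (fun n => (inner ℂ (u (n + m)) w : ℂ)) ↑U (𝓝 (inner ℂ ((A ^ m) z) w)) := by
    intro m w
    have h1 : ∀ n, (inner ℂ (u (n + m)) w : ℂ) =
        inner ℂ (u n) (ContinuousLinearMap.adjoint (A ^ m) w) := by
      intro n
      rw [hushift m n, ContinuousLinearMap.adjoint_inner_right]
    have h2 : (inner ℂ ((A ^ m) z) w : ℂ) =
        inner ℂ z (ContinuousLinearMap.adjoint (A ^ m) w) := by
      rw [ContinuousLinearMap.adjoint_inner_right]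
    simp only [h1, h2]
    exact hweak _
  -- limit of ‖u (n+m) - A^m z‖^2 is c^2 - ‖A^m z‖^2
  have hsq : ∀ m : ℕ, Tendsto (fun n => ‖u (n + m) - (A ^ m) z‖ ^ 2) ↑U
      (𝓝 (c ^ 2 - ‖(A ^ m) z‖ ^ 2)) := by
    intro m
    have hre : Tendsto (fun n => Complex.re (inner ℂ (u (n + m)) ((A ^ m) z) : ℂ)) ↑U
        (𝓝 (‖(A ^ m) z‖ ^ 2)) := by
      have := (Complex.continuous_re.tendsto _).comp (hweakm m ((A ^ m) z))
      have hid : Complex.re (inner ℂ ((A ^ m) z) ((A ^ m) z) : ℂ) = ‖(A ^ m) z‖ ^ 2 := by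
        simpa using inner_self_eq_norm_sq (𝕜 := ℂ) ((A ^ m) z)
      rw [hid] at this
      exact this
    have heq : ∀ n, ‖u (n + m) - (A ^ m) z‖ ^ 2 =
        ‖u (n + m)‖ ^ 2 - 2 * Complex.re (inner ℂ (u (n + m)) ((A ^ m) z) : ℂ)
          + ‖(A ^ m) z‖ ^ 2 := by
      intro n
      exact norm_sub_sq (𝕜 := ℂ) _ _
    simp only [heq]
    have h1 : Tendsto (fun n => ‖u (n + m)‖ ^ 2) ↑U (𝓝 (c ^ 2)) := (hclimU m).pow 2
    have := (h1.sub (hre.const_mul 2)).add_const (‖(A ^ m) z‖ ^ 2)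
    convert this using 2
    ring
  -- the key inequality: ‖z‖ ≤ ‖A^m z‖
  have hkey : ∀ m : ℕ, ‖z‖ ≤ ‖(A ^ m) z‖ := by
    intro m
    have hle : ∀ n, ‖u (n + m) - (A ^ m) z‖ ^ 2 ≤ ‖u (n + 0) - (A ^ 0) z‖ ^ 2 := by
      intro n
      have : u (n + m) - (A ^ m) z = (A ^ m) (u n - z) := by
        rw [hushift m n, map_sub]
      rw [this]
      have hz0 : u (n + 0) - (A ^ 0) z = u n - z := by simp
      rw [hz0]
      exact pow_le_pow_left₀ (norm_nonneg _) (hAm m (u n - z)) 2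
    have := le_of_tendsto_of_tendsto' (hsq m) (hsq 0) hle
    have h0 : ‖(A ^ 0) z‖ = ‖z‖ := by simp
    rw [h0] at this
    have hsq' : ‖z‖ ^ 2 ≤ ‖(A ^ m) z‖ ^ 2 := by linarith
    exact (pow_le_pow_iff_left₀ (norm_nonneg _) (norm_nonneg _) two_ne_zero).mp hsq'
  -- strictness forces z = 0
  have hz0 : z = 0 := by
    by_contra hzne
    have h1 : ‖z‖ ≤ ‖A z‖ := by simpa using hkey 1
    exact absurd (hA z hzne) (not_lt.mpr h1)
  have := hweak y
  rw [hz0] at this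
  rw [inner_zero_left] at this; exact this
end

section
/- Let H be a separable complex Hilbert space, R and R₁ bounded self-adjoint operators on H with ker R = {0}, q ∈ H with ‖q‖ ≤ 1, p = Rq, and assume R² − R₁² = pp*. Let Σ* be the unique contraction with R₁ = Σ*R, let Q be the unique contraction with |R₁|^{1/2} = Q|R|^{1/2}, and let A be the unique contraction with Σ*|R|^{1/2} = |R|^{1/2}A. Suppose J and J₁ are self-adjoint unitary operators commuting with |R| and |R₁| respectively such that R = J|R| and R₁ = J₁|R₁| (polar decompositions). Then A = Q*J₁QJ. -/
open Filter Topology ContinuousLinearMap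

set_option synthInstance.maxHeartbeats 1000000 in
/-- Uniqueness of the positive square root of a positive operator. -/
lemma pos_sqrt_unique' {H : Type*} [NormedAddCommGroup H] [InnerProductSpace ℂ H]
    [CompleteSpace H] {b c : H →L[ℂ] H} (hb : b.IsPositive) (hc : c.IsPositive)
    (h : b ∘L b = c ∘L c) : b = c := by
  have hb' : (0 : H →L[ℂ] H) ≤ b := (nonneg_iff_isPositive b).2 hb
  have hc' : (0 : H →L[ℂ] H) ≤ c := (nonneg_iff_isPositive c).2 hc
  have h1 : CFC.sqrt (b * b) = b := CFC.sqrt_unique rfl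
  have h2 : CFC.sqrt (c * c) = c := CFC.sqrt_unique rfl
  have h3 : (b * b : H →L[ℂ] H) = c * c := h
  rw [← h1, ← h2, h3]

/-- Setup: `H` separable complex Hilbert space, `R`, `R₁` self-adjoint with
`ker R = {0}`, `‖q‖ ≤ 1`, `p = Rq`, `R² − R₁² = pp*`; `Σ*` the unique contraction with
`R₁ = Σ*R`; `Q` the unique contraction with `|R₁|^{1/2} = Q |R|^{1/2}`; `A` the unique
contraction with `Σ* |R|^{1/2} = |R|^{1/2} A`. Here `|R|`, `|R₁|` are the positive operators
with `|R|² = R*R`, `|R₁|² = R₁*R₁`, and `|R|^{1/2}`, `|R₁|^{1/2}` their positive square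
roots. Let `J`, `J₁` be self-adjoint unitaries commuting with `|R|`, `|R₁|` respectively,
with `R = J|R|` and `R₁ = J₁|R₁|` (polar decompositions). Then `A = Q* J₁ Q J`. -/
theorem statement_8
    {H : Type*} [NormedAddCommGroup H] [InnerProductSpace ℂ H] [CompleteSpace H]
    [TopologicalSpace.SeparableSpace H]
    (R R₁ : H →L[ℂ] H)
    (hR_sa : IsSelfAdjoint R) (hR1_sa : IsSelfAdjoint R₁)
    (hR_ker : LinearMap.ker (R : H →ₗ[ℂ] H) = ⊥)
    (q : H) (hq : ‖q‖ ≤ 1) (p : H) (hp : p = R q)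
    (hRR1 : R ∘L R - R₁ ∘L R₁ = (innerSL ℂ p).smulRight p)
    (Sstar : H →L[ℂ] H) (hSstar_contr : ‖Sstar‖ ≤ 1) (hSstar : R₁ = Sstar ∘L R)
    (absR : H →L[ℂ] H) (habsR_pos : absR.IsPositive)
    (habsR : absR ∘L absR = adjoint R ∘L R)
    (sqrtAbsR : H →L[ℂ] H) (hsqrtR_pos : sqrtAbsR.IsPositive)
    (hsqrtR : sqrtAbsR ∘L sqrtAbsR = absR)
    (absR1 : H →L[ℂ] H) (habsR1_pos : absR1.IsPositive)
    (habsR1 : absR1 ∘L absR1 = adjoint R₁ ∘L R₁)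
    (sqrtAbsR1 : H →L[ℂ] H) (hsqrtR1_pos : sqrtAbsR1.IsPositive)
    (hsqrtR1 : sqrtAbsR1 ∘L sqrtAbsR1 = absR1)
    (Q : H →L[ℂ] H) (hQ_contr : ‖Q‖ ≤ 1) (hQ : sqrtAbsR1 = Q ∘L sqrtAbsR)
    (A : H →L[ℂ] H) (hA_contr : ‖A‖ ≤ 1) (hA : Sstar ∘L sqrtAbsR = sqrtAbsR ∘L A)
    (J : H →L[ℂ] H) (hJ_sa : IsSelfAdjoint J) (hJ_unitary : J ∘L J = ContinuousLinearMap.id ℂ H)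
    (hJ_comm : J ∘L absR = absR ∘L J) (hJ_polar : R = J ∘L absR)
    (J₁ : H →L[ℂ] H) (hJ1_sa : IsSelfAdjoint J₁)
    (hJ1_unitary : J₁ ∘L J₁ = ContinuousLinearMap.id ℂ H)
    (hJ1_comm : J₁ ∘L absR1 = absR1 ∘L J₁) (hJ1_polar : R₁ = J₁ ∘L absR1) :
    A = adjoint Q ∘L J₁ ∘L Q ∘L J := by
  -- self-adjointness of the square roots and of J, J₁
  have hSsa : adjoint sqrtAbsR = sqrtAbsR := hsqrtR_pos.isSelfAdjoint
  have hS1sa : adjoint sqrtAbsR1 = sqrtAbsR1 := hsqrtR1_pos.isSelfAdjoint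
  have hJad : adjoint J = J := hJ_sa
  have hJ1ad : adjoint J₁ = J₁ := hJ1_sa
  -- pointwise versions of the hypotheses
  have hJJ : ∀ x : H, J (J x) = x := fun x => by
    have := ContinuousLinearMap.ext_iff.mp hJ_unitary x; simpa using this
  have hJ1J1 : ∀ x : H, J₁ (J₁ x) = x := fun x => by
    have := ContinuousLinearMap.ext_iff.mp hJ1_unitary x; simpa using this
  have hsqR_pt : ∀ x : H, sqrtAbsR (sqrtAbsR x) = absR x := fun x => by
    have := ContinuousLinearMap.ext_iff.mp hsqrtR x; simpa using this
  have hsqR1_pt : ∀ x : H, sqrtAbsR1 (sqrtAbsR1 x) = absR1 x := fun x => by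
    have := ContinuousLinearMap.ext_iff.mp hsqrtR1 x; simpa using this
  have hJcomm_pt : ∀ x : H, J (absR x) = absR (J x) := fun x => by
    have := ContinuousLinearMap.ext_iff.mp hJ_comm x; simpa using this
  have hJ1comm_pt : ∀ x : H, J₁ (absR1 x) = absR1 (J₁ x) := fun x => by
    have := ContinuousLinearMap.ext_iff.mp hJ1_comm x; simpa using this
  have hQ_pt : ∀ x : H, sqrtAbsR1 x = Q (sqrtAbsR x) := fun x => by
    have := ContinuousLinearMap.ext_iff.mp hQ x; simpa using this
  have hA_pt : ∀ x : H, Sstar (sqrtAbsR x) = sqrtAbsR (A x) := fun x => by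
    have := ContinuousLinearMap.ext_iff.mp hA x; simpa using this
  have hSstar_pt : ∀ x : H, R₁ x = Sstar (R x) := fun x => by
    have := ContinuousLinearMap.ext_iff.mp hSstar x; simpa using this
  have hJpolar_pt : ∀ x : H, R x = J (absR x) := fun x => by
    have := ContinuousLinearMap.ext_iff.mp hJ_polar x; simpa using this
  have hJ1polar_pt : ∀ x : H, R₁ x = J₁ (absR1 x) := fun x => by
    have := ContinuousLinearMap.ext_iff.mp hJ1_polar x; simpa using this
  -- injectivity of sqrtAbsR
  have hinj : ∀ x : H, sqrtAbsR x = 0 → x = 0 := by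
    intro x hx
    have habs : absR x = 0 := by rw [← hsqR_pt x, hx, map_zero]
    have hRRx : adjoint R (R x) = 0 := by
      have := ContinuousLinearMap.ext_iff.mp habsR x
      simp only [comp_apply] at this
      rw [← this, habs, map_zero]
    have hRx : R x = 0 := by
      have h0 : inner ℂ (R x) (R x) = (0 : ℂ) := by
        calc inner ℂ (R x) (R x)
            = inner ℂ ((adjoint R) (R x)) x := (ContinuousLinearMap.adjoint_inner_left R x (R x)).symm
          _ = 0 := by rw [hRRx, inner_zero_left]
      exact inner_self_eq_zero.mp h0
    exact LinearMap.ker_eq_bot'.mp hR_ker x hRx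
  -- left cancellation of sqrtAbsR
  have hlc : ∀ X Y : H →L[ℂ] H, sqrtAbsR ∘L X = sqrtAbsR ∘L Y → X = Y := by
    intro X Y h
    ext x
    have hx := ContinuousLinearMap.ext_iff.mp h x
    simp only [comp_apply] at hx
    have : sqrtAbsR (X x - Y x) = 0 := by rw [map_sub, hx, sub_self]
    exact sub_eq_zero.mp (hinj _ this)
  -- right cancellation of sqrtAbsR (via adjoints)
  have hrc : ∀ X Y : H →L[ℂ] H, X ∘L sqrtAbsR = Y ∘L sqrtAbsR → X = Y := by
    intro X Y h
    have h2 := congrArg adjoint h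
    rw [adjoint_comp, adjoint_comp, hSsa] at h2
    have h3 := hlc _ _ h2
    calc X = adjoint (adjoint X) := (adjoint_adjoint X).symm
    _ = adjoint (adjoint Y) := by rw [h3]
    _ = Y := adjoint_adjoint Y
  -- J commutes with sqrtAbsR
  have hJS : ∀ x : H, J (sqrtAbsR x) = sqrtAbsR (J x) := by
    have hpos : (J ∘L sqrtAbsR ∘L J).IsPositive := by
      have := hsqrtR_pos.conj_adjoint J
      rwa [hJad] at this
    have hsq : (J ∘L sqrtAbsR ∘L J) ∘L (J ∘L sqrtAbsR ∘L J) = sqrtAbsR ∘L sqrtAbsR := by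
      ext x
      simp only [comp_apply]
      rw [hJJ, hsqR_pt, hsqR_pt, hJcomm_pt, hJJ]
    have heq : J ∘L sqrtAbsR ∘L J = sqrtAbsR := pos_sqrt_unique' hpos hsqrtR_pos hsq
    intro x
    have := ContinuousLinearMap.ext_iff.mp heq (J x)
    simp only [comp_apply] at this
    rwa [hJJ] at this
  -- J₁ commutes with sqrtAbsR1
  have hJ1S : ∀ x : H, J₁ (sqrtAbsR1 x) = sqrtAbsR1 (J₁ x) := by
    have hpos : (J₁ ∘L sqrtAbsR1 ∘L J₁).IsPositive := by
      have := hsqrtR1_pos.conj_adjoint J₁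
      rwa [hJ1ad] at this
    have hsq : (J₁ ∘L sqrtAbsR1 ∘L J₁) ∘L (J₁ ∘L sqrtAbsR1 ∘L J₁) = sqrtAbsR1 ∘L sqrtAbsR1 := by
      ext x
      simp only [comp_apply]
      rw [hJ1J1, hsqR1_pt, hsqR1_pt, hJ1comm_pt, hJ1J1]
    have heq : J₁ ∘L sqrtAbsR1 ∘L J₁ = sqrtAbsR1 := pos_sqrt_unique' hpos hsqrtR1_pos hsq
    intro x
    have := ContinuousLinearMap.ext_iff.mp heq (J₁ x)
    simp only [comp_apply] at this
    rwa [hJ1J1] at this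
  -- sqrtAbsR ∘ Q* = sqrtAbsR1
  have hQ' : ∀ x : H, sqrtAbsR (adjoint Q x) = sqrtAbsR1 x := by
    have h2 := congrArg adjoint hQ
    rw [adjoint_comp, hSsa, hS1sa] at h2
    intro x
    have := ContinuousLinearMap.ext_iff.mp h2 x
    simp only [comp_apply] at this
    exact this.symm
  -- R ∘ J = absR pointwise
  have hRJ : ∀ x : H, R (J x) = absR x := fun x => by
    rw [hJpolar_pt, hJcomm_pt, hJJ]
  -- main computation
  apply hlc
  apply hrc
  ext x
  simp only [comp_apply]
  calc sqrtAbsR (A (sqrtAbsR x))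
      = Sstar (sqrtAbsR (sqrtAbsR x)) := (hA_pt _).symm
    _ = Sstar (absR x) := by rw [hsqR_pt]
    _ = Sstar (R (J x)) := by rw [hRJ]
    _ = R₁ (J x) := (hSstar_pt _).symm
    _ = J₁ (absR1 (J x)) := hJ1polar_pt _
    _ = J₁ (sqrtAbsR1 (sqrtAbsR1 (J x))) := by rw [hsqR1_pt]
    _ = J₁ (sqrtAbsR1 (Q (sqrtAbsR (J x)))) := by rw [← hQ_pt]
    _ = J₁ (sqrtAbsR1 (Q (J (sqrtAbsR x)))) := by rw [hJS]
    _ = sqrtAbsR1 (J₁ (Q (J (sqrtAbsR x)))) := by rw [hJ1S]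
    _ = sqrtAbsR (adjoint Q (J₁ (Q (J (sqrtAbsR x))))) := (hQ' _).symm
end

section
/- Let H be a separable complex Hilbert space, R and R₁ bounded self-adjoint operators on H with ker R = {0}, q ∈ H with ‖q‖ ≤ 1, p = Rq, and assume R² − R₁² = pp*. Let Q be the unique contraction with |R₁|^{1/2} = Q|R|^{1/2}, let J be a self-adjoint unitary commuting with |R| such that R = J|R|, and let H₀ be the smallest closed |R|-invariant subspace of H containing Jq. Then H₀ and H₀^⊥ are invariant under Q, Q acts as the identity on H₀^⊥, and Q restricted to H₀ is a strict contraction: ‖Qh‖ < ‖h‖ for every non-zero h ∈ H₀. -/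
open Filter Topology ContinuousLinearMap

section Aux

open Polynomial

variable {H : Type*} [NormedAddCommGroup H] [InnerProductSpace ℂ H] [CompleteSpace H]

set_option synthInstance.maxHeartbeats 1000000
set_option maxHeartbeats 1000000

/-- If a closed submodule is invariant under a self-adjoint operator `A`, it is invariant
under `cfc f A` for any `f` continuous on the spectrum. -/
lemma aux_cfc_invariant (A : H →L[ℂ] H) (hA : IsSelfAdjoint A) (K : Submodule ℂ H)
    (hKc : IsClosed (K : Set H)) (hinv : ∀ x ∈ K, A x ∈ K) (f : ℝ → ℝ)
    (hf : ContinuousOn f (spectrum ℝ A)) : ∀ x ∈ K, cfc f A x ∈ K := by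
  have hcont : Continuous (cfcHom hA : C(spectrum ℝ A, ℝ) →⋆ₐ[ℝ] (H →L[ℂ] H)) :=
    cfcHom_continuous hA
  let Sinv : Subalgebra ℝ C(spectrum ℝ A, ℝ) :=
  { carrier := {g | ∀ x ∈ K, cfcHom hA g x ∈ K}
    mul_mem' := fun {g₁ g₂} h1 h2 x hx => by
      simpa [map_mul, ContinuousLinearMap.mul_apply] using h1 _ (h2 x hx)
    add_mem' := fun {g₁ g₂} h1 h2 x hx => by
      simpa [map_add, ContinuousLinearMap.add_apply] using K.add_mem (h1 x hx) (h2 x hx)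
    algebraMap_mem' := fun r x hx => by
      have h1 : (cfcHom hA : C(spectrum ℝ A, ℝ) →⋆ₐ[ℝ] (H →L[ℂ] H)) (algebraMap ℝ _ r)
          = algebraMap ℝ (H →L[ℂ] H) r := AlgHomClass.commutes _ r
      have h2 : (algebraMap ℝ (H →L[ℂ] H) r) x = r • x := by
        rw [Algebra.algebraMap_eq_smul_one]; simp
      show (cfcHom hA (algebraMap ℝ _ r)) x ∈ K
      rw [h1, h2]
      exact K.smul_of_tower_mem r hx }
  have hSc : IsClosed (Sinv : Set C(spectrum ℝ A, ℝ)) := by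
    have : (Sinv : Set C(spectrum ℝ A, ℝ)) =
        ⋂ (x : H) (_ : x ∈ K), (fun g : C(spectrum ℝ A, ℝ) => cfcHom hA g x) ⁻¹' (K : Set H) := by
      ext g; simp [Sinv, Set.mem_iInter]
    rw [this]
    refine isClosed_iInter fun x => isClosed_iInter fun _ => hKc.preimage ?_
    exact (ContinuousLinearMap.apply ℂ H x).continuous.comp hcont
  have hpoly : polynomialFunctions (spectrum ℝ A) ≤ Sinv := by
    rw [polynomialFunctions.eq_adjoin_X]
    refine Algebra.adjoin_le ?_
    rintro g ⟨rfl⟩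
    intro x hx
    show (cfcHom hA (toContinuousMapOnAlgHom (spectrum ℝ A) X)) x ∈ K
    have : (toContinuousMapOnAlgHom (spectrum ℝ A) X) =
        ((ContinuousMap.id ℝ).restrict <| spectrum ℝ A) := by
      ext y; simp
    rw [this, cfcHom_id hA]
    exact hinv x hx
  have htop : (⊤ : Subalgebra ℝ C(spectrum ℝ A, ℝ)) ≤ Sinv := by
    rw [← polynomialFunctions.topologicalClosure (spectrum ℝ A)]
    exact Subalgebra.topologicalClosure_minimal hpoly hSc
  intro x hx
  rw [cfc_apply f A hA hf]
  exact htop (Algebra.mem_top) x hx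

lemma aux_sqrt_cfc_eq (B : H →L[ℂ] H) (hB : 0 ≤ B) : cfc Real.sqrt (B * B) = B := by
  have hBsa : IsSelfAdjoint B := ((nonneg_iff_isPositive B).mp hB).isSelfAdjoint
  have hA : 0 ≤ B * B := by
    have := star_mul_self_nonneg B
    rwa [hBsa.star_eq] at this
  have hAsa : IsSelfAdjoint (B * B) := ((nonneg_iff_isPositive _).mp hA).isSelfAdjoint
  have hX : 0 ≤ cfc Real.sqrt (B * B) := cfc_nonneg (fun x _ => Real.sqrt_nonneg x)
  have hXX : cfc Real.sqrt (B * B) * cfc Real.sqrt (B * B) = B * B := by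
    rw [← cfc_mul Real.sqrt Real.sqrt (B * B)]
    calc cfc (fun x => Real.sqrt x * Real.sqrt x) (B * B)
        = cfc (id : ℝ → ℝ) (B * B) :=
          cfc_congr (fun x hx => Real.mul_self_sqrt (spectrum_nonneg_of_nonneg hA hx))
      _ = B * B := cfc_id ℝ (B * B) hAsa
  calc cfc Real.sqrt (B * B) = CFC.sqrt (B * B) := (CFC.sqrt_unique hXX hX).symm
    _ = B := CFC.sqrt_unique rfl hB

/-- If a closed submodule is invariant under the square of a positive operator, it is
invariant under the operator itself. -/
lemma aux_inv_of_sq (B : H →L[ℂ] H) (hB : B.IsPositive) (K : Submodule ℂ H)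
    (hKc : IsClosed (K : Set H)) (h : ∀ x ∈ K, B (B x) ∈ K) : ∀ x ∈ K, B x ∈ K := by
  have hB' : 0 ≤ B := (nonneg_iff_isPositive B).mpr hB
  have hBBsa : IsSelfAdjoint (B * B) := by
    rw [IsSelfAdjoint, star_mul, hB.isSelfAdjoint.star_eq]
  intro x hx
  have := aux_cfc_invariant (B * B) hBBsa K hKc
    (fun y hy => by simpa [ContinuousLinearMap.mul_apply] using h y hy) Real.sqrt
    Real.continuous_sqrt.continuousOn x hx
  rwa [aux_sqrt_cfc_eq B hB'] at this

/-- A self-adjoint operator leaving a submodule invariant leaves its orthogonal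
complement invariant. -/
lemma aux_inv_orth (B : H →L[ℂ] H) (hB : IsSelfAdjoint B) (K : Submodule ℂ H)
    (hinv : ∀ x ∈ K, B x ∈ K) : ∀ x ∈ Kᗮ, B x ∈ Kᗮ := by
  intro x hx
  rw [Submodule.mem_orthogonal] at hx ⊢
  intro u hu
  have h := hB.isSymmetric u x
  simp only [ContinuousLinearMap.coe_coe] at h
  rw [← h]
  exact hx _ (hinv u hu)

/-- Restriction of an invariant operator to a closed submodule. -/
noncomputable def auxRest (K : Submodule ℂ H) (B : H →L[ℂ] H) (hB : ∀ x ∈ K, B x ∈ K) :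
    K →L[ℂ] K :=
  ContinuousLinearMap.codRestrict (B ∘L K.subtypeL) K (fun x => hB x.1 x.2)

lemma auxRest_apply (K : Submodule ℂ H) (B : H →L[ℂ] H) (hB : ∀ x ∈ K, B x ∈ K) (x : K) :
    (auxRest K B hB x : H) = B x := rfl

lemma auxRest_isPositive (K : Submodule ℂ H) [CompleteSpace K] (B : H →L[ℂ] H)
    (hB : B.IsPositive) (hinv : ∀ x ∈ K, B x ∈ K) : (auxRest K B hinv).IsPositive := by
  constructor
  · intro x y
    exact hB.isSelfAdjoint.isSymmetric (x : H) (y : H)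
  · intro x
    exact hB.2 (x : H)

/-- Two positive operators with equal squares are equal. -/
lemma aux_sq_inj {E : Type*} [NormedAddCommGroup E] [InnerProductSpace ℂ E] [CompleteSpace E]
    (B C : E →L[ℂ] E) (hB : B.IsPositive) (hC : C.IsPositive) (hmul : B * B = C * C) :
    B = C := by
  have hB' : 0 ≤ B := (nonneg_iff_isPositive B).mpr hB
  have hC' : 0 ≤ C := (nonneg_iff_isPositive C).mpr hC
  exact (CFC.sqrt_unique (b := B) rfl hB').symm.trans
    (CFC.sqrt_unique (b := C) hmul.symm hC')

/-- Two positive operators leaving a closed submodule invariant and with equal squares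
on that submodule agree on the submodule. -/
lemma aux_eq_on_of_sq_eq (K : Submodule ℂ H) [CompleteSpace K] (B C : H →L[ℂ] H)
    (hB : B.IsPositive) (hC : C.IsPositive) (hBK : ∀ x ∈ K, B x ∈ K) (hCK : ∀ x ∈ K, C x ∈ K)
    (hsq : ∀ x ∈ K, B (B x) = C (C x)) : ∀ x ∈ K, B x = C x := by
  have hmul : auxRest K B hBK * auxRest K B hBK = auxRest K C hCK * auxRest K C hCK := by
    ext x
    simp only [ContinuousLinearMap.mul_apply]
    show B (B (x : H)) = C (C (x : H))
    exact hsq (x : H) x.2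
  have hrest : auxRest K B hBK = auxRest K C hCK :=
    aux_sq_inj _ _ (auxRest_isPositive K B hB hBK) (auxRest_isPositive K C hC hCK) hmul
  intro x hx
  have := congrArg (fun T : K →L[ℂ] K => (T ⟨x, hx⟩ : H)) hrest
  simpa [auxRest_apply] using this

/-- A self-adjoint injective operator on a Hilbert space has dense range. -/
lemma aux_dense_range (K : Type*) [NormedAddCommGroup K] [InnerProductSpace ℂ K]
    [CompleteSpace K] (B : K →L[ℂ] K) (hsym : IsSelfAdjoint B)
    (hinj : ∀ x, B x = 0 → x = 0) : Dense (Set.range B) := by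
  have horth : (LinearMap.range (B : K →ₗ[ℂ] K))ᗮ = ⊥ := by
    rw [Submodule.eq_bot_iff]
    intro y hy
    rw [Submodule.mem_orthogonal] at hy
    have hBy : B y = 0 := by
      have h1 : ∀ x : K, (inner ℂ (B x) y : ℂ) = 0 := fun x => hy _ ⟨x, rfl⟩
      have h2 : (inner ℂ (B y) (B y) : ℂ) = 0 := by
        have h3 := h1 (B y)
        have h4 := hsym.isSymmetric (B y) y
        simp only [ContinuousLinearMap.coe_coe] at h4
        rwa [h4] at h3
      exact inner_self_eq_zero.mp h2
    exact hinj y hBy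
  have htop : (LinearMap.range (B : K →ₗ[ℂ] K)).topologicalClosure = ⊤ :=
    Submodule.topologicalClosure_eq_top_iff.mpr horth
  have : closure (Set.range B) = Set.univ := by
    have h1 := congrArg (fun S : Submodule ℂ K => (S : Set K)) htop
    simpa [Submodule.topologicalClosure_coe, LinearMap.coe_range, ContinuousLinearMap.coe_coe] using h1
  rw [dense_iff_closure_eq]
  simpa using this

end Aux

set_option synthInstance.maxHeartbeats 1000000
set_option maxHeartbeats 1000000

/-- Setup: `H` separable complex Hilbert space, `R`, `R₁` self-adjoint with
`ker R = {0}`, `‖q‖ ≤ 1`, `p = Rq`, `R² − R₁² = pp*`. Let `Q` be the unique contraction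
with `|R₁|^{1/2} = Q |R|^{1/2}` (with `|R|`, `|R₁|` the positive operators whose squares are
`R*R`, `R₁*R₁`, and `|R|^{1/2}`, `|R₁|^{1/2}` their positive square roots), `J` a
self-adjoint unitary commuting with `|R|` with `R = J|R|`, and `H₀` the smallest closed
`|R|`-invariant subspace containing `Jq`, i.e. the closed span of `{|R|ⁿ (Jq) : n ≥ 0}`.
Then `H₀` and `H₀ᗮ` are `Q`-invariant, `Q = I` on `H₀ᗮ`, and `Q` is a strict contraction
on `H₀`. -/
theorem statement_9
    {H : Type*} [NormedAddCommGroup H] [InnerProductSpace ℂ H] [CompleteSpace H]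
    [TopologicalSpace.SeparableSpace H]
    (R R₁ : H →L[ℂ] H)
    (hR_sa : IsSelfAdjoint R) (hR1_sa : IsSelfAdjoint R₁)
    (hR_ker : LinearMap.ker (R : H →ₗ[ℂ] H) = ⊥)
    (q : H) (hq : ‖q‖ ≤ 1) (p : H) (hp : p = R q)
    (hRR1 : R ∘L R - R₁ ∘L R₁ = (innerSL ℂ p).smulRight p)
    (absR : H →L[ℂ] H) (habsR_pos : absR.IsPositive)
    (habsR : absR ∘L absR = adjoint R ∘L R)
    (sqrtAbsR : H →L[ℂ] H) (hsqrtR_pos : sqrtAbsR.IsPositive)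
    (hsqrtR : sqrtAbsR ∘L sqrtAbsR = absR)
    (absR1 : H →L[ℂ] H) (habsR1_pos : absR1.IsPositive)
    (habsR1 : absR1 ∘L absR1 = adjoint R₁ ∘L R₁)
    (sqrtAbsR1 : H →L[ℂ] H) (hsqrtR1_pos : sqrtAbsR1.IsPositive)
    (hsqrtR1 : sqrtAbsR1 ∘L sqrtAbsR1 = absR1)
    (Q : H →L[ℂ] H) (hQ_contr : ‖Q‖ ≤ 1) (hQ : sqrtAbsR1 = Q ∘L sqrtAbsR)
    (J : H →L[ℂ] H) (hJ_sa : IsSelfAdjoint J) (hJ_unitary : J ∘L J = ContinuousLinearMap.id ℂ H)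
    (hJ_comm : J ∘L absR = absR ∘L J) (hJ_polar : R = J ∘L absR)
    (H₀ : Submodule ℂ H)
    (hH₀ : H₀ = (Submodule.span ℂ (Set.range fun n : ℕ => (absR ^ n) (J q))).topologicalClosure) :
    (∀ x ∈ H₀, Q x ∈ H₀) ∧
    (∀ x ∈ H₀ᗮ, Q x ∈ H₀ᗮ) ∧
    (∀ x ∈ H₀ᗮ, Q x = x) ∧
    (∀ x ∈ H₀, x ≠ 0 → ‖Q x‖ < ‖x‖) := by
  classical
  set e : H := J q with he_def
  -- basic rewrites
  have hR_adj : adjoint R = R := hR_sa.adjoint_eq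
  have hR1_adj : adjoint R₁ = R₁ := hR1_sa.adjoint_eq
  have htt : absR ∘L absR = R ∘L R := by rw [habsR, hR_adj]
  have ht1t1 : absR1 ∘L absR1 = R₁ ∘L R₁ := by rw [habsR1, hR1_adj]
  have hdiff : absR ∘L absR - absR1 ∘L absR1 = (innerSL ℂ p).smulRight p := by
    rw [htt, ht1t1]; exact hRR1
  have hG_apply : ∀ x : H, ((innerSL ℂ p).smulRight p) x = (inner ℂ p x : ℂ) • p := fun x => rfl
  -- injectivity
  have hker_R : ∀ x : H, R x = 0 → x = 0 := by
    intro x hx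
    have : x ∈ LinearMap.ker (R : H →ₗ[ℂ] H) := by simpa [LinearMap.mem_ker] using hx
    rw [hR_ker] at this
    simpa using this
  have hker_t : ∀ x : H, absR x = 0 → x = 0 := by
    intro x hx
    have h1 : (absR ∘L absR) x = 0 := by simp [ContinuousLinearMap.comp_apply, hx]
    rw [htt] at h1
    have h2 : (inner ℂ (R (R x)) x : ℂ) = 0 := by
      simpa [ContinuousLinearMap.comp_apply] using congrArg (fun y => (inner ℂ y x : ℂ)) h1
    have h3 : (inner ℂ (R x) (R x) : ℂ) = 0 := by
      have h4 := hR_sa.isSymmetric (R x) x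
      simp only [ContinuousLinearMap.coe_coe] at h4
      rwa [h4] at h2
    exact hker_R x (inner_self_eq_zero.mp h3)
  have hker_s : ∀ x : H, sqrtAbsR x = 0 → x = 0 := by
    intro x hx
    refine hker_t x ?_
    have : (sqrtAbsR ∘L sqrtAbsR) x = 0 := by simp [ContinuousLinearMap.comp_apply, hx]
    rwa [hsqrtR] at this
  -- cancellation of s on both sides
  have hs_cancel : ∀ B : H →L[ℂ] H, sqrtAbsR ∘L B ∘L sqrtAbsR = 0 → B = 0 := by
    intro B hB
    have h1 : B ∘L sqrtAbsR = 0 := by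
      ext x
      refine hker_s _ ?_
      have := congrArg (fun T : H →L[ℂ] H => T x) hB
      simpa [ContinuousLinearMap.comp_apply] using this
    have h2 : sqrtAbsR ∘L adjoint B = 0 := by
      have h5 := congrArg adjoint h1
      rw [adjoint_comp, hsqrtR_pos.isSelfAdjoint.adjoint_eq] at h5
      simpa using h5
    have h3 : adjoint B = 0 := by
      ext x
      refine hker_s _ ?_
      have := congrArg (fun T : H →L[ℂ] H => T x) h2
      simpa [ContinuousLinearMap.comp_apply] using this
    have h6 := congrArg adjoint h3
    rw [adjoint_adjoint] at h6
    simpa using h6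
  -- generators
  have hgen : ∀ n : ℕ, (absR ^ n) e ∈ H₀ := by
    intro n
    rw [hH₀]
    exact Submodule.le_topologicalClosure _ (Submodule.subset_span ⟨n, rfl⟩)
  have he_mem : e ∈ H₀ := by simpa using hgen 0
  have hp_te : p = absR e := by
    rw [hp]
    show R q = absR (J q)
    rw [hJ_polar]
    show (J ∘L absR) q = (absR ∘L J) q
    rw [hJ_comm]
  have hp_mem : p ∈ H₀ := by
    rw [hp_te]
    simpa [pow_one] using hgen 1
  have hH₀closed : IsClosed (H₀ : Set H) := by
    rw [hH₀]; exact Submodule.isClosed_topologicalClosure _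
  -- invariance of H₀ under absR
  have ht_inv : ∀ x ∈ H₀, absR x ∈ H₀ := by
    have hspan : ∀ y ∈ Submodule.span ℂ (Set.range fun n : ℕ => (absR ^ n) e),
        absR y ∈ Submodule.span ℂ (Set.range fun n : ℕ => (absR ^ n) e) := by
      intro y hy
      induction hy using Submodule.span_induction with
      | mem u hu =>
        obtain ⟨n, rfl⟩ := hu
        refine Submodule.subset_span ⟨n + 1, ?_⟩
        show (absR ^ (n + 1)) e = absR ((absR ^ n) e)
        rw [pow_succ']
        rfl
      | zero => simpa using Submodule.zero_mem _
      | add u v _ _ hu hv => simpa [map_add] using Submodule.add_mem _ hu hv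
      | smul c u _ hu => simpa [map_smul] using Submodule.smul_mem _ c hu
    intro x hx
    rw [hH₀] at hx ⊢
    have hx' : x ∈ closure ((Submodule.span ℂ (Set.range fun n : ℕ => (absR ^ n) e)) : Set H) := hx
    have := map_mem_closure absR.continuous hx' (fun y hy => hspan y hy)
    exact this
  -- invariance of H₀ under absR1 ∘ absR1
  have ht1sq_inv : ∀ x ∈ H₀, absR1 (absR1 x) ∈ H₀ := by
    intro x hx
    have h1 : absR1 (absR1 x) = absR (absR x) - (inner ℂ p x : ℂ) • p := by
      have := congrArg (fun T : H →L[ℂ] H => T x) hdiff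
      simp only [ContinuousLinearMap.sub_apply, ContinuousLinearMap.comp_apply] at this
      rw [hG_apply] at this
      rw [← this]
      abel
    rw [h1]
    exact Submodule.sub_mem _ (ht_inv _ (ht_inv _ hx)) (Submodule.smul_mem _ _ hp_mem)
  -- positivity as order facts
  have ht_pos : (0 : H →L[ℂ] H) ≤ absR := (nonneg_iff_isPositive _).mpr habsR_pos
  -- invariance of H₀ under absR1, sqrtAbsR, sqrtAbsR1
  have ht1_inv : ∀ x ∈ H₀, absR1 x ∈ H₀ :=
    aux_inv_of_sq absR1 habsR1_pos H₀ hH₀closed ht1sq_inv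
  have hs_inv : ∀ x ∈ H₀, sqrtAbsR x ∈ H₀ := by
    refine aux_inv_of_sq sqrtAbsR hsqrtR_pos H₀ hH₀closed ?_
    intro x hx
    have : sqrtAbsR (sqrtAbsR x) = absR x := by
      have := congrArg (fun T : H →L[ℂ] H => T x) hsqrtR
      simpa [ContinuousLinearMap.comp_apply] using this
    rw [this]; exact ht_inv x hx
  have hs1_inv : ∀ x ∈ H₀, sqrtAbsR1 x ∈ H₀ := by
    refine aux_inv_of_sq sqrtAbsR1 hsqrtR1_pos H₀ hH₀closed ?_
    intro x hx
    have : sqrtAbsR1 (sqrtAbsR1 x) = absR1 x := by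
      have := congrArg (fun T : H →L[ℂ] H => T x) hsqrtR1
      simpa [ContinuousLinearMap.comp_apply] using this
    rw [this]; exact ht1_inv x hx
  -- orthogonal complement invariance
  have ht_invO : ∀ x ∈ H₀ᗮ, absR x ∈ H₀ᗮ := aux_inv_orth absR habsR_pos.isSelfAdjoint H₀ ht_inv
  have ht1_invO : ∀ x ∈ H₀ᗮ, absR1 x ∈ H₀ᗮ :=
    aux_inv_orth absR1 habsR1_pos.isSelfAdjoint H₀ ht1_inv
  have hs_invO : ∀ x ∈ H₀ᗮ, sqrtAbsR x ∈ H₀ᗮ :=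
    aux_inv_orth sqrtAbsR hsqrtR_pos.isSelfAdjoint H₀ hs_inv
  have hs1_invO : ∀ x ∈ H₀ᗮ, sqrtAbsR1 x ∈ H₀ᗮ :=
    aux_inv_orth sqrtAbsR1 hsqrtR1_pos.isSelfAdjoint H₀ hs1_inv
  haveI : CompleteSpace H₀ := hH₀closed.completeSpace_coe
  -- Q applied to sqrtAbsR
  have hQs : ∀ x : H, Q (sqrtAbsR x) = sqrtAbsR1 x := by
    intro x
    have := congrArg (fun T : H →L[ℂ] H => T x) hQ
    simpa [ContinuousLinearMap.comp_apply] using this.symm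
  -- On H₀ᗮ, absR = absR1 and sqrtAbsR = sqrtAbsR1
  have ht_eq_orth : ∀ x ∈ H₀ᗮ, absR x = absR1 x := by
    refine aux_eq_on_of_sq_eq H₀ᗮ absR absR1 habsR_pos habsR1_pos ht_invO ht1_invO ?_
    intro x hx
    have := congrArg (fun T : H →L[ℂ] H => T x) hdiff
    simp only [ContinuousLinearMap.sub_apply, ContinuousLinearMap.comp_apply] at this
    rw [hG_apply] at this
    have hpx : (inner ℂ p x : ℂ) = 0 := by
      rw [Submodule.mem_orthogonal] at hx
      exact hx p hp_mem
    rw [hpx, zero_smul] at this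
    exact sub_eq_zero.mp this
  have hs_eq_orth : ∀ x ∈ H₀ᗮ, sqrtAbsR x = sqrtAbsR1 x := by
    refine aux_eq_on_of_sq_eq H₀ᗮ sqrtAbsR sqrtAbsR1 hsqrtR_pos hsqrtR1_pos hs_invO hs1_invO ?_
    intro x hx
    have h1 : sqrtAbsR (sqrtAbsR x) = absR x := by
      have := congrArg (fun T : H →L[ℂ] H => T x) hsqrtR
      simpa [ContinuousLinearMap.comp_apply] using this
    have h2 : sqrtAbsR1 (sqrtAbsR1 x) = absR1 x := by
      have := congrArg (fun T : H →L[ℂ] H => T x) hsqrtR1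
      simpa [ContinuousLinearMap.comp_apply] using this
    rw [h1, h2]
    exact ht_eq_orth x hx
  -- dense ranges of restrictions
  have hdenseO : Dense (Set.range (auxRest H₀ᗮ sqrtAbsR hs_invO)) := by
    refine aux_dense_range _ _ (auxRest_isPositive _ _ hsqrtR_pos hs_invO).isSelfAdjoint ?_
    intro x hx
    have : sqrtAbsR (x : H) = 0 := by
      have := congrArg (fun y : H₀ᗮ => (y : H)) hx
      simpa [auxRest_apply] using this
    exact Subtype.ext (hker_s _ this)
  have hdense₀ : Dense (Set.range (auxRest H₀ sqrtAbsR hs_inv)) := by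
    refine aux_dense_range _ _ (auxRest_isPositive _ _ hsqrtR_pos hs_inv).isSelfAdjoint ?_
    intro x hx
    have : sqrtAbsR (x : H) = 0 := by
      have := congrArg (fun y : H₀ => (y : H)) hx
      simpa [auxRest_apply] using this
    exact Subtype.ext (hker_s _ this)
  -- Q is the identity on H₀ᗮ
  have hQid : ∀ x ∈ H₀ᗮ, Q x = x := by
    have heq : (fun x : H₀ᗮ => Q (x : H)) = (fun x : H₀ᗮ => (x : H)) := by
      refine Continuous.ext_on hdenseO (Q.continuous.comp continuous_subtype_val)
        continuous_subtype_val ?_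
      rintro _ ⟨y, rfl⟩
      show Q ((auxRest H₀ᗮ sqrtAbsR hs_invO y : H₀ᗮ) : H) = _
      rw [auxRest_apply, hQs, ← hs_eq_orth _ y.2]
      rfl
    intro x hx
    exact congrFun heq ⟨x, hx⟩
  -- Q maps H₀ into H₀
  have hQH₀ : ∀ x ∈ H₀, Q x ∈ H₀ := by
    intro x hx
    have hx' : (⟨x, hx⟩ : H₀) ∈ closure (Set.range (auxRest H₀ sqrtAbsR hs_inv)) := by
      rw [hdense₀.closure_eq]; trivial
    have hxc : x ∈ closure ((fun y : H₀ => (y : H)) '' Set.range (auxRest H₀ sqrtAbsR hs_inv)) :=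
      map_mem_closure continuous_subtype_val hx' (Set.mapsTo_image _ _)
    have hQxc : Q x ∈ closure (Q '' ((fun y : H₀ => (y : H)) ''
        Set.range (auxRest H₀ sqrtAbsR hs_inv))) :=
      map_mem_closure Q.continuous hxc (Set.mapsTo_image _ _)
    have hsub : Q '' ((fun y : H₀ => (y : H)) '' Set.range (auxRest H₀ sqrtAbsR hs_inv))
        ⊆ (H₀ : Set H) := by
      rintro _ ⟨_, ⟨_, ⟨y, rfl⟩, rfl⟩, rfl⟩
      show Q ((auxRest H₀ sqrtAbsR hs_inv y : H₀) : H) ∈ H₀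
      rw [auxRest_apply, hQs]
      exact hs1_inv _ y.2
    have := closure_mono hsub hQxc
    rwa [hH₀closed.closure_eq] at this
  refine ⟨hQH₀, fun x hx => by rw [hQid x hx]; exact hx, hQid, ?_⟩
  -- strict contraction on H₀
  set c : H →L[ℂ] H := adjoint Q * Q with hc_def
  set a : H →L[ℂ] H := 1 - c with ha_def
  have ha_sa : IsSelfAdjoint a := by
    rw [IsSelfAdjoint, ha_def, hc_def]
    simp [star_sub, star_mul, star_eq_adjoint, adjoint_adjoint]
  have hQnorm : ∀ x : H, ‖Q x‖ ≤ ‖x‖ := by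
    intro x
    calc ‖Q x‖ ≤ ‖Q‖ * ‖x‖ := Q.le_opNorm x
      _ ≤ 1 * ‖x‖ := mul_le_mul_of_nonneg_right hQ_contr (norm_nonneg x)
      _ = ‖x‖ := one_mul _
  have hax_re : ∀ x : H, RCLike.re (inner ℂ (a x) x : ℂ) = ‖x‖ ^ 2 - ‖Q x‖ ^ 2 := by
    intro x
    have h1 : a x = x - adjoint Q (Q x) := by
      rw [ha_def]
      simp [ContinuousLinearMap.sub_apply, hc_def, ContinuousLinearMap.mul_apply]
    rw [h1, inner_sub_left, adjoint_inner_left, map_sub]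
    rw [inner_self_eq_norm_sq (𝕜 := ℂ) x, inner_self_eq_norm_sq (𝕜 := ℂ) (Q x)]
  have ha_pos : (0 : H →L[ℂ] H) ≤ a := by
    rw [nonneg_iff_isPositive]
    refine ⟨ha_sa.isSymmetric, fun x => ?_⟩
    rw [ContinuousLinearMap.reApplyInnerSelf_apply, hax_re]
    have := pow_le_pow_left₀ (norm_nonneg (Q x)) (hQnorm x) 2
    linarith
  have ha_zero : ∀ h : H, ‖h‖ ≤ ‖Q h‖ → a h = 0 := by
    intro h hle
    have hr_nonneg : (0 : H →L[ℂ] H) ≤ CFC.sqrt a := CFC.sqrt_nonneg a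
    have hrr : CFC.sqrt a * CFC.sqrt a = a := CFC.sqrt_mul_sqrt_self a ha_pos
    have hr_sa : IsSelfAdjoint (CFC.sqrt a) :=
      ((nonneg_iff_isPositive _).mp hr_nonneg).isSelfAdjoint
    have h1 : a h = CFC.sqrt a (CFC.sqrt a h) := by
      conv_lhs => rw [← hrr]
      rfl
    have h2 : (inner ℂ (a h) h : ℂ) = inner ℂ (CFC.sqrt a h) (CFC.sqrt a h) := by
      rw [h1]
      have h3 := hr_sa.isSymmetric (CFC.sqrt a h) h
      simp only [ContinuousLinearMap.coe_coe] at h3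
      exact h3
    have h4 := hax_re h
    rw [h2, inner_self_eq_norm_sq (𝕜 := ℂ)] at h4
    have h5 : ‖Q h‖ ^ 2 ≤ ‖h‖ ^ 2 := pow_le_pow_left₀ (norm_nonneg _) (hQnorm h) 2
    have h6 : ‖h‖ ^ 2 ≤ ‖Q h‖ ^ 2 := pow_le_pow_left₀ (norm_nonneg _) hle 2
    have h7 : ‖CFC.sqrt a h‖ ^ 2 = 0 := by linarith
    have h8 : CFC.sqrt a h = 0 := by
      have := pow_eq_zero_iff (n := 2) (by norm_num) |>.mp h7
      simpa using this
    rw [h1, h8, map_zero]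
  -- the key identity
  set g : H := sqrtAbsR e with hg_def
  have hsm : sqrtAbsR * sqrtAbsR = absR := hsqrtR
  have hdm : absR * absR - absR1 * absR1 = (innerSL ℂ p).smulRight p := hdiff
  have ht1_scs : absR1 = sqrtAbsR * c * sqrtAbsR := by
    have h1 : absR1 = star sqrtAbsR1 * sqrtAbsR1 := by
      rw [hsqrtR1_pos.isSelfAdjoint.star_eq]
      exact hsqrtR1.symm
    rw [h1, hQ]
    show star (Q * sqrtAbsR) * (Q * sqrtAbsR) = _
    rw [star_mul, hsqrtR_pos.isSelfAdjoint.star_eq, hc_def, star_eq_adjoint]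
    noncomm_ring
  have hnc : sqrtAbsR * (a * absR + absR * a - a * absR * a) * sqrtAbsR
      = absR * absR - absR1 * absR1 := by
    rw [ht1_scs, ha_def, ← hsm]
    noncomm_ring
  have hsg : sqrtAbsR g = p := by
    rw [hg_def, hp_te]
    have := congrArg (fun T : H →L[ℂ] H => T e) hsqrtR
    simpa [ContinuousLinearMap.comp_apply] using this
  have hGg : sqrtAbsR ∘L ((innerSL ℂ g).smulRight g) ∘L sqrtAbsR = (innerSL ℂ p).smulRight p := by
    ext x
    show sqrtAbsR ((inner ℂ g (sqrtAbsR x) : ℂ) • g) = (inner ℂ p x : ℂ) • p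
    rw [map_smul, hsg]
    congr 1
    have h3 := hsqrtR_pos.isSelfAdjoint.isSymmetric g x
    simp only [ContinuousLinearMap.coe_coe] at h3
    rw [← h3, hsg]
  have hzero : sqrtAbsR ∘L ((a * absR + absR * a - a * absR * a)
      - (innerSL ℂ g).smulRight g) ∘L sqrtAbsR = 0 := by
    have hx1 : sqrtAbsR ∘L (a * absR + absR * a - a * absR * a) ∘L sqrtAbsR
        = absR * absR - absR1 * absR1 := by
      show sqrtAbsR * ((a * absR + absR * a - a * absR * a) * sqrtAbsR) = _
      rw [← mul_assoc]
      exact hnc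
    calc sqrtAbsR ∘L ((a * absR + absR * a - a * absR * a)
          - (innerSL ℂ g).smulRight g) ∘L sqrtAbsR
        = sqrtAbsR ∘L (a * absR + absR * a - a * absR * a) ∘L sqrtAbsR
          - sqrtAbsR ∘L ((innerSL ℂ g).smulRight g) ∘L sqrtAbsR := by
          rw [sub_comp, comp_sub]
      _ = 0 := by rw [hx1, hGg, hdm, sub_self]
  have hkey : a * absR + absR * a - a * absR * a = (innerSL ℂ g).smulRight g := by
    have := hs_cancel _ hzero
    exact sub_eq_zero.mp this
  -- the inductive step
  have step : ∀ u : H, a u = 0 → a (absR u) = 0 ∧ (inner ℂ g u : ℂ) = 0 := by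
    intro u hu
    have h1 : a (absR u) = (inner ℂ g u : ℂ) • g := by
      have h2 := congrArg (fun T : H →L[ℂ] H => T u) hkey
      simp only [ContinuousLinearMap.mul_apply, ContinuousLinearMap.add_apply,
        ContinuousLinearMap.sub_apply] at h2
      rw [hu] at h2
      simp only [map_zero] at h2
      simpa using h2
    have h2 : (inner ℂ (a (absR u)) u : ℂ) = 0 := by
      have h3 := ha_sa.isSymmetric (absR u) u
      simp only [ContinuousLinearMap.coe_coe] at h3
      rw [h3, hu, inner_zero_right]
    have h4 : (inner ℂ g u : ℂ) = 0 := by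
      rw [h1, inner_smul_left] at h2
      rcases mul_eq_zero.mp h2 with h5 | h5
      · exact (map_eq_zero (starRingEnd ℂ)).mp h5
      · exact h5
    exact ⟨by rw [h1, h4, zero_smul], h4⟩
  -- conclusion
  intro x hx hxne
  by_contra hcon
  push_neg at hcon
  have main : ∀ n : ℕ, a ((absR ^ n) x) = 0 := by
    intro n
    induction n with
    | zero => simpa using ha_zero x hcon
    | succ n ih =>
      have h1 := (step _ ih).1
      have h2 : (absR ^ (n + 1)) x = absR ((absR ^ n) x) := by
        rw [pow_succ']; rfl
      rw [h2]
      exact h1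
  have hgn : ∀ n : ℕ, (inner ℂ g ((absR ^ n) x) : ℂ) = 0 := fun n => (step _ (main n)).2
  have hcommt : Commute sqrtAbsR absR := by
    rw [← hsm]
    exact (Commute.refl sqrtAbsR).mul_right (Commute.refl sqrtAbsR)
  have hcomm : ∀ n : ℕ, ∀ y : H, sqrtAbsR ((absR ^ n) y) = (absR ^ n) (sqrtAbsR y) := by
    intro n y
    have := congrArg (fun T : H →L[ℂ] H => T y) ((hcommt.pow_right n).eq)
    simpa [ContinuousLinearMap.mul_apply] using this
  have horth : ∀ n : ℕ, (inner ℂ ((absR ^ n) e) (sqrtAbsR x) : ℂ) = 0 := by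
    intro n
    have h1 := hgn n
    have h3 := hsqrtR_pos.isSelfAdjoint.isSymmetric e ((absR ^ n) x)
    simp only [ContinuousLinearMap.coe_coe] at h3
    rw [← hg_def] at h3
    rw [h3, hcomm n x] at h1
    have h4 := (habsR_pos.isSelfAdjoint.pow n).isSymmetric e (sqrtAbsR x)
    simp only [ContinuousLinearMap.coe_coe] at h4
    rw [← h4] at h1
    exact h1
  have hsx_orth : ∀ u ∈ H₀, (inner ℂ u (sqrtAbsR x) : ℂ) = 0 := by
    have hspan0 : ∀ u ∈ Submodule.span ℂ (Set.range fun n : ℕ => (absR ^ n) e),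
        (inner ℂ u (sqrtAbsR x) : ℂ) = 0 := by
      intro u hu
      induction hu using Submodule.span_induction with
      | mem v hv =>
        obtain ⟨n, rfl⟩ := hv
        exact horth n
      | zero => simp
      | add v w _ _ hv hw => rw [inner_add_left, hv, hw, add_zero]
      | smul cc v _ hv => rw [inner_smul_left, hv, mul_zero]
    intro u hu
    rw [hH₀] at hu
    have hu' : u ∈ closure ((Submodule.span ℂ (Set.range fun n : ℕ => (absR ^ n) e)) : Set H) := hu
    have hcont : Continuous (fun v : H => (inner ℂ v (sqrtAbsR x) : ℂ)) :=
      continuous_id.inner continuous_const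
    have := map_mem_closure hcont hu' (fun v hv => by
      show (inner ℂ v (sqrtAbsR x) : ℂ) ∈ ({0} : Set ℂ)
      simpa using hspan0 v hv)
    simpa using this
  have hsx0 : sqrtAbsR x = 0 := by
    have h0 := hsx_orth (sqrtAbsR x) (hs_inv x hx)
    exact inner_self_eq_zero.mp h0
  exact hxne (hker_s x hsx0)
end

section
/- Let (λₖ²)ₖ≥₁ and (μₖ²)ₖ≥₁ satisfy λ₁² > μ₁² > λ₂² > μ₂² > … > 0 with λₖ² → 0, and set σ = {λₖ² : k ≥ 1} ∪ {0}. Then the infinite product Φ(z) = ∏ₖ≥₁ (z − μₖ²)/(z − λₖ²) converges uniformly on compact subsets of ℂ∖σ, and Φ(z) → 1 as z → ∞. -/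
open Filter Topology

/-- The set `σ = {λₖ² : k ≥ 1} ∪ {0}`, as a subset of `ℂ`. -/
def sigmaSet (lam : ℕ → ℝ) : Set ℂ :=
  insert (0 : ℂ) (Set.range fun k : ℕ => ((lam k : ℝ) : ℂ))


lemma aux_prod_norm_sub_one {ι : Type*} (s : Finset ι) (f : ι → ℂ) :
    ‖(∏ i ∈ s, (1 + f i)) - 1‖ ≤ (∏ i ∈ s, (1 + ‖f i‖)) - 1 := by
  induction s using Finset.cons_induction with
  | empty => simp
  | cons a s ha ih =>
    rw [Finset.prod_cons, Finset.prod_cons]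
    have hP : ‖∏ i ∈ s, (1 + f i)‖ ≤ ∏ i ∈ s, (1 + ‖f i‖) := by
      rw [norm_prod]
      exact Finset.prod_le_prod (fun i _ => norm_nonneg _)
        (fun i _ => (norm_add_le _ _).trans (by simp))
    have h1 : (1 + f a) * (∏ i ∈ s, (1 + f i)) - 1
        = ((∏ i ∈ s, (1 + f i)) - 1) + f a * (∏ i ∈ s, (1 + f i)) := by ring
    rw [h1]
    calc ‖((∏ i ∈ s, (1 + f i)) - 1) + f a * (∏ i ∈ s, (1 + f i))‖
        ≤ ‖(∏ i ∈ s, (1 + f i)) - 1‖ + ‖f a‖ * ‖∏ i ∈ s, (1 + f i)‖ := by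
          refine (norm_add_le _ _).trans ?_; rw [norm_mul]
      _ ≤ ((∏ i ∈ s, (1 + ‖f i‖)) - 1) + ‖f a‖ * (∏ i ∈ s, (1 + ‖f i‖)) := by
          gcongr
      _ = (1 + ‖f a‖) * (∏ i ∈ s, (1 + ‖f i‖)) - 1 := by ring

lemma aux_prod_le_exp {ι : Type*} (s : Finset ι) (g : ι → ℝ) (hg : ∀ i ∈ s, 0 ≤ g i) :
    (∏ i ∈ s, (1 + g i)) ≤ Real.exp (∑ i ∈ s, g i) := by
  rw [Real.exp_sum]
  exact Finset.prod_le_prod (fun i hi => by linarith [hg i hi])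
    (fun i hi => by simpa [add_comm] using Real.add_one_le_exp (g i))

lemma aux_tele (lam mu : ℕ → ℝ) (hmu_pos : ∀ k, 0 < mu k)
    (h1 : ∀ k, mu k < lam k) (h2 : ∀ k, lam (k + 1) < mu k)
    (M N : ℕ) (h : M ≤ N) :
    ∑ k ∈ Finset.Ico M N, (lam k - mu k) ≤ lam M := by
  have key : ∑ k ∈ Finset.Ico M N, (lam k - mu k) ≤ lam M - lam N := by
    induction N, h using Nat.le_induction with
    | base => simp
    | succ n hn ih =>
      rw [Finset.sum_Ico_succ_top hn]
      have := h2 n; have := h1 n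
      linarith
  have : 0 < lam N := (hmu_pos N).trans (h1 N)
  linarith

lemma aux_core (lam mu : ℕ → ℝ) (hmu_pos : ∀ k, 0 < mu k)
    (h1 : ∀ k, mu k < lam k) (h2 : ∀ k, lam (k + 1) < mu k)
    (z : ℂ) (δ : ℝ) (hδ : 0 < δ) (hz : ∀ k, δ ≤ ‖z - (lam k : ℂ)‖)
    (M N : ℕ) (hMN : M ≤ N) :
    ‖(∏ k ∈ Finset.Ico M N, (z - (mu k : ℂ)) / (z - (lam k : ℂ))) - 1‖
      ≤ Real.exp (lam M / δ) - 1 := by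
  have hne : ∀ k, z - (lam k : ℂ) ≠ 0 := by
    intro k h
    have := hz k; rw [h, norm_zero] at this; linarith
  have hfac : ∀ k, (z - (mu k : ℂ)) / (z - (lam k : ℂ))
      = 1 + ((lam k : ℂ) - (mu k : ℂ)) / (z - (lam k : ℂ)) := by
    intro k
    field_simp [hne k]
    ring
  have hna : ∀ k, ‖((lam k : ℂ) - (mu k : ℂ)) / (z - (lam k : ℂ))‖ ≤ (lam k - mu k) / δ := by
    intro k
    rw [norm_div]
    have hnum : ‖((lam k : ℂ) - (mu k : ℂ))‖ = lam k - mu k := by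
      rw [← Complex.ofReal_sub, Complex.norm_real, Real.norm_eq_abs,
        abs_of_pos (by linarith [h1 k] : (0:ℝ) < lam k - mu k)]
    rw [hnum]
    exact div_le_div_of_nonneg_left (by linarith [h1 k]) hδ (hz k) |>.trans_eq rfl
  calc ‖(∏ k ∈ Finset.Ico M N, (z - (mu k : ℂ)) / (z - (lam k : ℂ))) - 1‖
      = ‖(∏ k ∈ Finset.Ico M N, (1 + ((lam k : ℂ) - (mu k : ℂ)) / (z - (lam k : ℂ)))) - 1‖ := by
        rw [Finset.prod_congr rfl fun k _ => hfac k]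
    _ ≤ (∏ k ∈ Finset.Ico M N, (1 + ‖((lam k : ℂ) - (mu k : ℂ)) / (z - (lam k : ℂ))‖)) - 1 :=
        aux_prod_norm_sub_one _ _
    _ ≤ Real.exp (∑ k ∈ Finset.Ico M N, ‖((lam k : ℂ) - (mu k : ℂ)) / (z - (lam k : ℂ))‖) - 1 := by
        have := aux_prod_le_exp (Finset.Ico M N)
          (fun k => ‖((lam k : ℂ) - (mu k : ℂ)) / (z - (lam k : ℂ))‖)
          (fun k _ => norm_nonneg _)
        linarith
    _ ≤ Real.exp (lam M / δ) - 1 := by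
        have hsum : ∑ k ∈ Finset.Ico M N, ‖((lam k : ℂ) - (mu k : ℂ)) / (z - (lam k : ℂ))‖
            ≤ lam M / δ := by
          calc ∑ k ∈ Finset.Ico M N, ‖((lam k : ℂ) - (mu k : ℂ)) / (z - (lam k : ℂ))‖
              ≤ ∑ k ∈ Finset.Ico M N, (lam k - mu k) / δ :=
                Finset.sum_le_sum fun k _ => hna k
            _ = (∑ k ∈ Finset.Ico M N, (lam k - mu k)) / δ := by rw [Finset.sum_div]
            _ ≤ lam M / δ := by
                have := aux_tele lam mu hmu_pos h1 h2 M N hMN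
                exact div_le_div_of_nonneg_right this hδ.le
        have := Real.exp_le_exp.mpr hsum
        linarith

lemma aux_norm_prod_le (lam mu : ℕ → ℝ) (hmu_pos : ∀ k, 0 < mu k)
    (h1 : ∀ k, mu k < lam k) (h2 : ∀ k, lam (k + 1) < mu k)
    (z : ℂ) (δ : ℝ) (hδ : 0 < δ) (hz : ∀ k, δ ≤ ‖z - (lam k : ℂ)‖)
    (N : ℕ) :
    ‖∏ k ∈ Finset.range N, (z - (mu k : ℂ)) / (z - (lam k : ℂ))‖ ≤ Real.exp (lam 0 / δ) := by
  have h := aux_core lam mu hmu_pos h1 h2 z δ hδ hz 0 N (Nat.zero_le N)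
  rw [← Finset.range_eq_Ico] at h
  calc ‖∏ k ∈ Finset.range N, (z - (mu k : ℂ)) / (z - (lam k : ℂ))‖
      ≤ ‖(∏ k ∈ Finset.range N, (z - (mu k : ℂ)) / (z - (lam k : ℂ))) - 1‖ + ‖(1:ℂ)‖ := by
        simpa using norm_add_le ((∏ k ∈ Finset.range N, (z - (mu k : ℂ)) / (z - (lam k : ℂ))) - 1) 1
    _ ≤ (Real.exp (lam 0 / δ) - 1) + 1 := by simp only [norm_one]; linarith
    _ = Real.exp (lam 0 / δ) := by ring

/-- Let `(λₖ²)`, `(μₖ²)` (here `lam`, `mu`) satisfy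
`λ₁² > μ₁² > λ₂² > μ₂² > … > 0` with `λₖ² → 0`, and set `σ = {λₖ²} ∪ {0}`. Then the
partial products `Φ_N(z) = ∏_{k=1}^N (z − μₖ²)/(z − λₖ²)` converge uniformly on every
compact subset of `ℂ∖σ` to a limit function `Φ`, and `Φ(z) → 1` as `z → ∞`. -/
theorem statement_14
    (lam mu : ℕ → ℝ)
    (hmu_pos : ∀ k, 0 < mu k)
    (h1 : ∀ k, mu k < lam k)
    (h2 : ∀ k, lam (k + 1) < mu k)
    (hlim : Tendsto lam atTop (nhds 0)) :
    ∃ Φ : ℂ → ℂ,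
      (∀ K : Set ℂ, IsCompact K → K ⊆ (sigmaSet lam)ᶜ →
        TendstoUniformlyOn
          (fun (N : ℕ) (z : ℂ) =>
            ∏ k ∈ Finset.range N, (z - (mu k : ℂ)) / (z - (lam k : ℂ)))
          Φ atTop K) ∧
      Tendsto Φ (Filter.comap norm atTop) (nhds 1) := by
  have hlam_pos : ∀ k, 0 < lam k := fun k => (hmu_pos k).trans (h1 k)
  have hlam_dec : StrictAnti lam := strictAnti_nat_of_succ_lt fun k => (h2 k).trans (h1 k)
  have hlam_le : ∀ k, lam k ≤ lam 0 := fun k => hlam_dec.antitone (Nat.zero_le k)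
  set F : ℕ → ℂ → ℂ :=
    fun N z => ∏ k ∈ Finset.range N, (z - (mu k : ℂ)) / (z - (lam k : ℂ)) with hF
  set Φ : ℂ → ℂ := fun z => limUnder atTop fun N => F N z with hΦ
  -- main uniform convergence statement under a δ-separation hypothesis
  have main : ∀ (s : Set ℂ) (δ : ℝ), 0 < δ → (∀ z ∈ s, ∀ k, δ ≤ ‖z - (lam k : ℂ)‖) →
      TendstoUniformlyOn F Φ atTop s := by
    intro s δ hδ hsep
    have hUC : UniformCauchySeqOn F atTop s := by
      rw [Metric.uniformCauchySeqOn_iff]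
      intro ε hε
      have htend : Tendsto (fun N => Real.exp (lam 0 / δ) * (Real.exp (lam N / δ) - 1))
          atTop (𝓝 0) := by
        have h0 : Tendsto (fun N => lam N / δ) atTop (𝓝 0) := by
          simpa using hlim.div_const δ
        have hexp : Tendsto (fun N => Real.exp (lam N / δ)) atTop (𝓝 1) := by
          have := (Real.continuous_exp.tendsto 0).comp h0
          simpa [Real.exp_zero, Function.comp_def] using this
        have := (hexp.sub_const 1).const_mul (Real.exp (lam 0 / δ))
        simpa using this
      obtain ⟨N₀, hN₀⟩ := (htend.eventually (gt_mem_nhds hε)).exists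
      refine ⟨N₀, fun m hm n hn x hx => ?_⟩
      have key : ∀ p q, N₀ ≤ p → p ≤ q → dist (F p x) (F q x) < ε := by
        intro p q hp hpq
        have hsplit : F q x = F p x * ∏ k ∈ Finset.Ico p q, (x - (mu k : ℂ)) / (x - (lam k : ℂ)) :=
          (Finset.prod_range_mul_prod_Ico _ hpq).symm
        have hnorm : dist (F p x) (F q x)
            = ‖F p x‖ * ‖(∏ k ∈ Finset.Ico p q, (x - (mu k : ℂ)) / (x - (lam k : ℂ))) - 1‖ := by
          have heq : F p x - F p x * ∏ k ∈ Finset.Ico p q, (x - (mu k : ℂ)) / (x - (lam k : ℂ))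
              = F p x * (1 - ∏ k ∈ Finset.Ico p q, (x - (mu k : ℂ)) / (x - (lam k : ℂ))) := by
            ring
          rw [dist_eq_norm, hsplit, heq, norm_mul, norm_sub_rev]
        rw [hnorm]
        calc ‖F p x‖ * ‖(∏ k ∈ Finset.Ico p q, (x - (mu k : ℂ)) / (x - (lam k : ℂ))) - 1‖
            ≤ Real.exp (lam 0 / δ) * (Real.exp (lam p / δ) - 1) := by
              have hb1 := aux_norm_prod_le lam mu hmu_pos h1 h2 x δ hδ (hsep x hx) p
              have hb2 := aux_core lam mu hmu_pos h1 h2 x δ hδ (hsep x hx) p q hpq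
              have hge : (0:ℝ) ≤ ‖(∏ k ∈ Finset.Ico p q, (x - (mu k : ℂ)) / (x - (lam k : ℂ))) - 1‖ :=
                norm_nonneg _
              exact mul_le_mul hb1 hb2 hge (Real.exp_pos _).le
          _ ≤ Real.exp (lam 0 / δ) * (Real.exp (lam N₀ / δ) - 1) := by
              have : lam p ≤ lam N₀ := hlam_dec.antitone hp
              have := Real.exp_le_exp.mpr (div_le_div_of_nonneg_right this hδ.le)
              nlinarith [Real.exp_pos (lam 0 / δ)]
          _ < ε := hN₀
      rcases le_total m n with h | h
      · exact key m n hm h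
      · rw [dist_comm]; exact key n m hn h
    have hpt : ∀ x ∈ s, Tendsto (fun N => F N x) atTop (𝓝 (Φ x)) := by
      intro x hx
      obtain ⟨l, hl⟩ := cauchySeq_tendsto_of_complete (hUC.cauchySeq hx)
      have hxl : Φ x = l := hl.limUnder_eq
      rwa [hxl]
    exact hUC.tendstoUniformlyOn_of_tendsto hpt
  have hσcl : IsClosed (sigmaSet lam) := by
    have hto : Tendsto (fun k : ℕ => ((lam k : ℝ) : ℂ)) atTop (𝓝 0) := by
      have := (Complex.continuous_ofReal.tendsto (0 : ℝ)).comp hlim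
      simpa [Function.comp_def] using this
    exact hto.isCompact_insert_range.isClosed
  refine ⟨Φ, ?_, ?_⟩
  · intro K hK hKs
    rcases K.eq_empty_or_nonempty with rfl | hne
    · exact tendstoUniformlyOn_empty
    have hcont : ContinuousOn (fun z : ℂ => Metric.infDist z (sigmaSet lam)) K :=
      (Metric.continuous_infDist_pt _).continuousOn
    obtain ⟨z₀, hz₀K, hz₀min⟩ := hK.exists_isMinOn hne hcont
    have hδ : 0 < Metric.infDist z₀ (sigmaSet lam) := by
      rw [← hσcl.notMem_iff_infDist_pos ⟨0, Set.mem_insert _ _⟩]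
      exact hKs hz₀K
    refine main K _ hδ ?_
    intro z hz k
    calc Metric.infDist z₀ (sigmaSet lam) ≤ Metric.infDist z (sigmaSet lam) := hz₀min hz
      _ ≤ dist z ((lam k : ℝ) : ℂ) :=
          Metric.infDist_le_dist_of_mem (Set.mem_insert_iff.mpr (Or.inr ⟨k, rfl⟩))
      _ = ‖z - (lam k : ℂ)‖ := dist_eq_norm _ _
  · have hb : ∀ z : ℂ, 2 * lam 0 ≤ ‖z‖ → ‖Φ z - 1‖ ≤ Real.exp (2 * lam 0 / ‖z‖) - 1 := by
      intro z hz
      have hzpos : 0 < ‖z‖ := lt_of_lt_of_le (by linarith [hlam_pos 0]) hz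
      have hδ' : (0 : ℝ) < ‖z‖ / 2 := by linarith
      have hsep : ∀ k, ‖z‖ / 2 ≤ ‖z - (lam k : ℂ)‖ := by
        intro k
        have hnl : ‖((lam k : ℝ) : ℂ)‖ = lam k := by
          rw [Complex.norm_real, Real.norm_eq_abs, abs_of_pos (hlam_pos k)]
        have hge := norm_sub_norm_le z ((lam k : ℝ) : ℂ)
        rw [hnl] at hge
        have := hlam_le k
        linarith
      have hptz : Tendsto (fun N => F N z) atTop (𝓝 (Φ z)) := by
        refine (main {z} (‖z‖ / 2) hδ' ?_).tendsto_at (Set.mem_singleton z)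
        intro w hw k
        rw [Set.mem_singleton_iff] at hw
        subst hw
        exact hsep k
      have hFb : ∀ N, ‖F N z - 1‖ ≤ Real.exp (2 * lam 0 / ‖z‖) - 1 := by
        intro N
        have hc := aux_core lam mu hmu_pos h1 h2 z (‖z‖ / 2) hδ' hsep 0 N (Nat.zero_le N)
        rw [← Finset.range_eq_Ico] at hc
        have heq : lam 0 / (‖z‖ / 2) = 2 * lam 0 / ‖z‖ := by
          field_simp
        rwa [heq] at hc
      have hlim2 : Tendsto (fun N => ‖F N z - 1‖) atTop (𝓝 ‖Φ z - 1‖) :=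
        ((hptz.sub_const 1).norm)
      exact le_of_tendsto hlim2 (Filter.Eventually.of_forall hFb)
    rw [Metric.tendsto_nhds]
    intro ε hε
    have htend : Tendsto (fun r : ℝ => Real.exp (2 * lam 0 / r) - 1) atTop (𝓝 0) := by
      have h0 : Tendsto (fun r : ℝ => 2 * lam 0 / r) atTop (𝓝 0) :=
        tendsto_const_nhds.div_atTop tendsto_id
      have hexp : Tendsto (fun r : ℝ => Real.exp (2 * lam 0 / r)) atTop (𝓝 1) := by
        have := (Real.continuous_exp.tendsto 0).comp h0
        simpa [Real.exp_zero, Function.comp_def] using this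
      simpa using hexp.sub_const 1
    obtain ⟨R, hR⟩ := Filter.eventually_atTop.mp (htend.eventually (gt_mem_nhds hε))
    have hmem : norm ⁻¹' Set.Ici (max R (2 * lam 0)) ∈ Filter.comap (norm : ℂ → ℝ) atTop :=
      Filter.preimage_mem_comap (Filter.Ici_mem_atTop _)
    filter_upwards [hmem] with z hz
    have hz' : max R (2 * lam 0) ≤ ‖z‖ := hz
    rw [dist_eq_norm]
    calc ‖Φ z - 1‖ ≤ Real.exp (2 * lam 0 / ‖z‖) - 1 :=
          hb z (le_trans (le_max_right _ _) hz')
      _ < ε := hR ‖z‖ (le_trans (le_max_left _ _) hz')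
end

section
/- Let (λₖ²)ₖ≥₁ and (μₖ²)ₖ≥₁ satisfy λ₁² > μ₁² > λ₂² > μ₂² > … > 0 with λₖ² → 0, set σ = {λₖ² : k ≥ 1} ∪ {0}, and let Φ(z) = ∏ₖ≥₁ (z − μₖ²)/(z − λₖ²) for z ∈ ℂ∖σ. Then: (1) Φ(z̄) = conj(Φ(z)) for all z ∈ ℂ∖σ; in particular Φ is real on ℝ∖σ; (2) Φ extends meromorphically across each λₖ² with a simple pole there, and the zeros of Φ are exactly the points μₖ², each a simple zero; (3) Φ(z) → 1 as z → ∞; and (4) Im Φ(z) < 0 for every z in the open upper half-plane ℂ₊ = {z : Im z > 0}. -/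
open Filter Topology

lemma aux_norm_prod_le_s15 (u : ℕ → ℂ) (F : Finset ℕ) :
    ‖∏ k ∈ F, (1 + u k)‖ ≤ Real.exp (∑ k ∈ F, ‖u k‖) := by
  rw [norm_prod, Real.exp_sum]
  refine Finset.prod_le_prod (fun k _ => norm_nonneg _) (fun k _ => ?_)
  calc ‖1 + u k‖ ≤ ‖(1:ℂ)‖ + ‖u k‖ := norm_add_le _ _
    _ = 1 + ‖u k‖ := by simp
    _ ≤ Real.exp ‖u k‖ := by rw [add_comm]; exact Real.add_one_le_exp _

lemma aux_norm_prod_sub_one_le (u : ℕ → ℂ) (F : Finset ℕ) :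
    ‖(∏ k ∈ F, (1 + u k)) - 1‖ ≤ Real.exp (∑ k ∈ F, ‖u k‖) - 1 := by
  induction F using Finset.cons_induction with
  | empty => simp
  | cons a F ha ih =>
    rw [Finset.prod_cons, Finset.sum_cons]
    have h1 : (1 + u a) * (∏ k ∈ F, (1 + u k)) - 1
        = (1 + u a) * ((∏ k ∈ F, (1 + u k)) - 1) + u a := by ring
    have h2 : ‖(1:ℂ) + u a‖ ≤ Real.exp ‖u a‖ := by
      calc ‖(1:ℂ) + u a‖ ≤ ‖(1:ℂ)‖ + ‖u a‖ := norm_add_le _ _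
        _ = 1 + ‖u a‖ := by simp
        _ ≤ Real.exp ‖u a‖ := by rw [add_comm]; exact Real.add_one_le_exp _
    have h3 : ‖u a‖ ≤ Real.exp ‖u a‖ - 1 := by
      have := Real.add_one_le_exp ‖u a‖; linarith
    calc ‖(1 + u a) * (∏ k ∈ F, (1 + u k)) - 1‖
        ≤ ‖(1:ℂ) + u a‖ * ‖(∏ k ∈ F, (1 + u k)) - 1‖ + ‖u a‖ := by
          rw [h1]; exact (norm_add_le _ _).trans (by rw [norm_mul])
      _ ≤ Real.exp ‖u a‖ * (Real.exp (∑ k ∈ F, ‖u k‖) - 1) + (Real.exp ‖u a‖ - 1) := by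
          have h5 : (0:ℝ) ≤ ∑ k ∈ F, ‖u k‖ := Finset.sum_nonneg fun k _ => norm_nonneg _
          have h4 : (0:ℝ) ≤ Real.exp (∑ k ∈ F, ‖u k‖) - 1 := by
            nlinarith [Real.add_one_le_exp (∑ k ∈ F, ‖u k‖)]
          exact add_le_add (mul_le_mul h2 ih (norm_nonneg _) (Real.exp_nonneg _)) h3
      _ = Real.exp ‖u a‖ * Real.exp (∑ k ∈ F, ‖u k‖) - 1 := by ring
      _ = Real.exp (‖u a‖ + ∑ k ∈ F, ‖u k‖) - 1 := by rw [Real.exp_add]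

lemma aux_exists_lim {u : ℕ → ℂ} {b : ℕ → ℝ} (hb : ∀ k, ‖u k‖ ≤ b k) (hs : Summable b) :
    ∃ L : ℂ, Tendsto (fun N => ∏ k ∈ Finset.range N, (1 + u k)) atTop (𝓝 L) := by
  have hbnn : ∀ k, 0 ≤ b k := fun k => (norm_nonneg _).trans (hb k)
  have hd : ∀ N, dist (∏ k ∈ Finset.range N, (1 + u k)) (∏ k ∈ Finset.range (N+1), (1 + u k))
      ≤ Real.exp (∑' k, b k) * b N := by
    intro N
    rw [dist_eq_norm, Finset.prod_range_succ]
    have : (∏ k ∈ Finset.range N, (1 + u k)) - (∏ k ∈ Finset.range N, (1 + u k)) * (1 + u N)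
        = -((∏ k ∈ Finset.range N, (1 + u k)) * u N) := by ring
    rw [this, norm_neg, norm_mul]
    have h1 : ‖∏ k ∈ Finset.range N, (1 + u k)‖ ≤ Real.exp (∑' k, b k) := by
      refine (aux_norm_prod_le_s15 u _).trans (Real.exp_le_exp.2 ?_)
      refine le_trans (Finset.sum_le_sum fun k _ => hb k) ?_
      exact Summable.sum_le_tsum _ (fun k _ => hbnn k) hs
    exact mul_le_mul h1 (hb N) (norm_nonneg _) (Real.exp_nonneg _)
  have : CauchySeq (fun N => ∏ k ∈ Finset.range N, (1 + u k)) :=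
    cauchySeq_of_dist_le_of_summable _ hd (by exact (hs.mul_left _))
  exact cauchySeq_tendsto_of_complete this

lemma aux_tail_est {u : ℕ → ℂ} {b : ℕ → ℝ} (hb : ∀ k, ‖u k‖ ≤ b k) (hs : Summable b)
    {L : ℂ} (hL : Tendsto (fun N => ∏ k ∈ Finset.range N, (1 + u k)) atTop (𝓝 L)) (N : ℕ) :
    ‖L - ∏ k ∈ Finset.range N, (1 + u k)‖
      ≤ ‖∏ k ∈ Finset.range N, (1 + u k)‖ * (Real.exp (∑' k, b (k + N)) - 1) := by
  have hbnn : ∀ k, 0 ≤ b k := fun k => (norm_nonneg _).trans (hb k)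
  have hsN : Summable (fun k => b (k + N)) := (summable_nat_add_iff N).2 hs
  have key : ∀ M, N ≤ M → ‖(∏ k ∈ Finset.range M, (1 + u k)) - ∏ k ∈ Finset.range N, (1 + u k)‖
      ≤ ‖∏ k ∈ Finset.range N, (1 + u k)‖ * (Real.exp (∑' k, b (k + N)) - 1) := by
    intro M hM
    have hsplit : (∏ k ∈ Finset.range N, (1 + u k)) * ∏ k ∈ Finset.Ico N M, (1 + u k)
        = ∏ k ∈ Finset.range M, (1 + u k) := Finset.prod_range_mul_prod_Ico _ hM
    have : (∏ k ∈ Finset.range M, (1 + u k)) - ∏ k ∈ Finset.range N, (1 + u k)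
        = (∏ k ∈ Finset.range N, (1 + u k)) * ((∏ k ∈ Finset.Ico N M, (1 + u k)) - 1) := by
      rw [← hsplit]; ring
    rw [this, norm_mul]
    refine mul_le_mul_of_nonneg_left ?_ (norm_nonneg _)
    refine (aux_norm_prod_sub_one_le u _).trans ?_
    have : ∑ k ∈ Finset.Ico N M, ‖u k‖ ≤ ∑' k, b (k + N) := by
      have h1 : ∑ k ∈ Finset.Ico N M, ‖u k‖ ≤ ∑ k ∈ Finset.Ico N M, b k :=
        Finset.sum_le_sum fun k _ => hb k
      have h2 : ∑ k ∈ Finset.Ico N M, b k = ∑ k ∈ Finset.range (M - N), b (N + k) :=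
        Finset.sum_Ico_eq_sum_range b N M
      have h3 : ∑ k ∈ Finset.range (M - N), b (N + k) ≤ ∑' k, b (k + N) := by
        have := Summable.sum_le_tsum (Finset.range (M - N)) (fun k _ => hbnn _) hsN
        simpa [add_comm] using this
      linarith
    have := Real.exp_le_exp.2 this
    linarith
  have htend : Tendsto (fun M => ‖(∏ k ∈ Finset.range M, (1 + u k)) - ∏ k ∈ Finset.range N, (1 + u k)‖)
      atTop (𝓝 ‖L - ∏ k ∈ Finset.range N, (1 + u k)‖) :=
    ((hL.sub tendsto_const_nhds).norm)
  exact le_of_tendsto htend (eventually_atTop.2 ⟨N, key⟩)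

lemma aux_ne_zero {u : ℕ → ℂ} {b : ℕ → ℝ} (hb : ∀ k, ‖u k‖ ≤ b k) (hs : Summable b)
    {L : ℂ} (hL : Tendsto (fun N => ∏ k ∈ Finset.range N, (1 + u k)) atTop (𝓝 L))
    (hunit : ∀ k, (1 : ℂ) + u k ≠ 0) : L ≠ 0 := by
  have hbnn : ∀ k, 0 ≤ b k := fun k => (norm_nonneg _).trans (hb k)
  have htail : Tendsto (fun N => Real.exp (∑' k, b (k + N)) - 1) atTop (𝓝 0) := by
    have h0 : Tendsto (fun N => ∑' k, b (k + N)) atTop (𝓝 0) := tendsto_sum_nat_add b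
    have := (Real.continuous_exp.tendsto 0).comp h0
    simpa using this.sub (tendsto_const_nhds (x := (1:ℝ)))
  obtain ⟨N, hN⟩ := (htail.eventually (gt_mem_nhds (by norm_num : (0:ℝ) < 1))).exists
  intro h0
  subst h0
  have hPne : (∏ k ∈ Finset.range N, (1 + u k)) ≠ 0 :=
    Finset.prod_ne_zero_iff.2 fun k _ => hunit k
  have := aux_tail_est hb hs hL N
  rw [zero_sub, norm_neg] at this
  have hlt : ‖∏ k ∈ Finset.range N, (1 + u k)‖ * (Real.exp (∑' k, b (k + N)) - 1)
      < ‖∏ k ∈ Finset.range N, (1 + u k)‖ * 1 :=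
    mul_lt_mul_of_pos_left hN (norm_pos_iff.2 hPne)
  rw [mul_one] at hlt
  exact absurd (this.trans_lt hlt) (lt_irrefl _)

lemma aux_master (c Λ : ℕ → ℝ) (hc : Summable fun k => |c k|) (z₀ : ℂ) (r : ℝ) (hr : 0 < r)
    (hsep : ∀ w ∈ Metric.ball z₀ r, ∀ k, c k ≠ 0 → r ≤ ‖w - (Λ k : ℂ)‖) :
    ∃ G : ℂ → ℂ,
      (∀ w ∈ Metric.ball z₀ r,
        Tendsto (fun N => ∏ k ∈ Finset.range N, (1 + (c k : ℂ) / (w - Λ k))) atTop (𝓝 (G w))) ∧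
      TendstoUniformlyOn (fun N w => ∏ k ∈ Finset.range N, (1 + (c k : ℂ) / (w - Λ k))) G atTop
        (Metric.ball z₀ r) ∧
      ContinuousOn G (Metric.ball z₀ r) ∧
      (∀ w ∈ Metric.ball z₀ r, (∀ k, (1 : ℂ) + (c k : ℂ) / (w - Λ k) ≠ 0) → G w ≠ 0) := by
  set b : ℕ → ℝ := fun k => |c k| / r with hbdef
  have hbS : Summable b := hc.div_const r
  have hbnn : ∀ k, 0 ≤ b k := fun k => div_nonneg (abs_nonneg _) hr.le
  have hbd : ∀ w ∈ Metric.ball z₀ r, ∀ k, ‖(c k : ℂ) / (w - Λ k)‖ ≤ b k := by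
    intro w hw k
    by_cases hck : c k = 0
    · simp [hbdef, hck]
    · rw [norm_div, Complex.norm_real]
      exact div_le_div_of_nonneg_left (abs_nonneg _) hr (hsep w hw k hck) |>.trans_eq rfl
        |>.trans (le_of_eq rfl) |>.trans (le_of_eq rfl)
  set G : ℂ → ℂ := fun w => limUnder atTop (fun N => ∏ k ∈ Finset.range N, (1 + (c k : ℂ) / (w - Λ k))) with hGdef
  have htend : ∀ w ∈ Metric.ball z₀ r,
      Tendsto (fun N => ∏ k ∈ Finset.range N, (1 + (c k : ℂ) / (w - Λ k))) atTop (𝓝 (G w)) := by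
    intro w hw
    obtain ⟨L, hL⟩ := aux_exists_lim (hbd w hw) hbS
    have : G w = L := hL.limUnder_eq
    rwa [this]
  have huni : TendstoUniformlyOn (fun N w => ∏ k ∈ Finset.range N, (1 + (c k : ℂ) / (w - Λ k))) G
      atTop (Metric.ball z₀ r) := by
    rw [Metric.tendstoUniformlyOn_iff]
    intro ε hε
    have htail : Tendsto (fun N => Real.exp (∑' k, b k) * (Real.exp (∑' k, b (k + N)) - 1))
        atTop (𝓝 0) := by
      have h0 : Tendsto (fun N => ∑' k, b (k + N)) atTop (𝓝 0) := tendsto_sum_nat_add b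
      have h1 := ((Real.continuous_exp.tendsto 0).comp h0).sub (tendsto_const_nhds (x := (1:ℝ)))
      have h2 := h1.const_mul (Real.exp (∑' k, b k))
      simpa using h2
    filter_upwards [htail.eventually (gt_mem_nhds hε)] with N hN w hw
    have hest := aux_tail_est (hbd w hw) hbS (htend w hw) N
    have hPb : ‖∏ k ∈ Finset.range N, (1 + (c k : ℂ) / (w - Λ k))‖ ≤ Real.exp (∑' k, b k) := by
      refine (aux_norm_prod_le_s15 _ _).trans (Real.exp_le_exp.2 ?_)
      refine le_trans (Finset.sum_le_sum fun k _ => hbd w hw k) ?_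
      exact Summable.sum_le_tsum _ (fun k _ => hbnn k) hbS
    rw [dist_eq_norm]
    have hT1 : (0:ℝ) ≤ Real.exp (∑' k, b (k + N)) - 1 := by
      have : (0:ℝ) ≤ ∑' k, b (k + N) := tsum_nonneg (fun k => hbnn _)
      nlinarith [Real.add_one_le_exp (∑' k, b (k + N))]
    calc ‖G w - ∏ k ∈ Finset.range N, (1 + (c k : ℂ) / (w - Λ k))‖
        ≤ ‖∏ k ∈ Finset.range N, (1 + (c k : ℂ) / (w - Λ k))‖ * (Real.exp (∑' k, b (k + N)) - 1) := hest
      _ ≤ Real.exp (∑' k, b k) * (Real.exp (∑' k, b (k + N)) - 1) :=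
          mul_le_mul_of_nonneg_right hPb hT1
      _ < ε := hN
  refine ⟨G, htend, huni, ?_, ?_⟩
  · -- continuity
    refine huni.continuousOn (Filter.Frequently.of_forall fun N => ?_)
    refine continuousOn_finset_prod _ fun k _ => ?_
    by_cases hck : c k = 0
    · simp only [hck, Complex.ofReal_zero, zero_div, add_zero]
      exact continuousOn_const
    · refine continuousOn_const.add (continuousOn_const.div
        ((continuous_id.sub continuous_const).continuousOn) ?_)
      intro w hw h0
      have h1 := hsep w hw k hck
      rw [h0] at h1
      simp only [norm_zero] at h1
      linarith
  · -- nonvanishing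
    intro w hw hunit
    exact aux_ne_zero (hbd w hw) hbS (htend w hw) hunit


lemma aux_partial_fractions (lam mu : ℕ → ℝ)
    (h1 : ∀ k, mu k < lam k) (h2 : ∀ k, lam (k + 1) < mu k) (N : ℕ) :
    ∃ C : ℕ → ℝ, (∀ k < N, 0 < C k) ∧
      ∀ z : ℂ, (∀ k < N, z ≠ (lam k : ℂ)) →
        ∏ k ∈ Finset.range N, ((z - (mu k : ℂ)) / (z - (lam k : ℂ)))
          = 1 + ∑ k ∈ Finset.range N, (C k : ℂ) / (z - (lam k : ℂ)) := by
  have hanti : StrictAnti lam := strictAnti_nat_of_succ_lt (fun n => (h2 n).trans (h1 n))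
  induction N with
  | zero => exact ⟨fun _ => 1, by omega, fun z _ => by simp⟩
  | succ N ih =>
    obtain ⟨C, hCpos, hC⟩ := ih
    have hlamne : ∀ k, k < N → lam k ≠ lam N := fun k hk => (hanti hk).ne'
    have hlamneC : ∀ k, k < N → ((lam k : ℂ)) ≠ (lam N : ℂ) := by
      intro k hk h; exact hlamne k hk (by exact_mod_cast h)
    have hPNpos : 0 < 1 + ∑ j ∈ Finset.range N, C j / (lam N - lam j) := by
      have hzlam : ∀ k < N, ((lam N : ℝ) : ℂ) ≠ (lam k : ℂ) := by
        intro k hk h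
        exact (hanti hk).ne (by exact_mod_cast h)
      have hid := hC ((lam N : ℝ) : ℂ) hzlam
      have hreal' : (∏ k ∈ Finset.range N, ((lam N - mu k) / (lam N - lam k)) : ℝ)
          = 1 + ∑ j ∈ Finset.range N, C j / (lam N - lam j) := by
        have := hid
        push_cast at this
        exact_mod_cast this
      rw [← hreal']
      refine Finset.prod_pos fun j hj => ?_
      rw [Finset.mem_range] at hj
      have hj1 : lam N ≤ lam (j + 1) := hanti.antitone (by omega)
      have hx1 : lam N - mu j < 0 := by have := h2 j; linarith
      have hx2 : lam N - lam j < 0 := by have := hanti hj; linarith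
      exact div_pos_of_neg_of_neg hx1 hx2
    set D : ℝ := (lam N - mu N) * (1 + ∑ j ∈ Finset.range N, C j / (lam N - lam j)) with hDdef
    have hDpos : 0 < D := mul_pos (by have := h1 N; linarith) hPNpos
    refine ⟨fun k => if k < N then C k * ((lam k - mu N) / (lam k - lam N)) else D, ?_, ?_⟩
    · intro k hk
      by_cases hkN : k < N
      · simp only [if_pos hkN]
        have hkgt : lam N < lam k := hanti hkN
        have : mu N < lam k := (h1 N).trans hkgt
        exact mul_pos (hCpos k hkN) (div_pos (by linarith) (by linarith))
      · simp only [if_neg hkN]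
        exact hDpos
    · intro z hz
      have hzN : z ≠ (lam N : ℂ) := hz N (Nat.lt_succ_self N)
      have hzk : ∀ k < N, z ≠ (lam k : ℂ) := fun k hk => hz k (by omega)
      have hzNne : z - (lam N : ℂ) ≠ 0 := sub_ne_zero.2 hzN
      rw [Finset.prod_range_succ, hC z hzk]
      have key : ∀ k ∈ Finset.range N,
          (C k : ℂ) / (z - (lam k : ℂ)) * ((z - (mu N : ℂ)) / (z - (lam N : ℂ)))
            = ((C k * ((lam k - mu N) / (lam k - lam N)) : ℝ) : ℂ) / (z - (lam k : ℂ))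
              + (((lam N - mu N) * C k / (lam N - lam k) : ℝ) : ℂ) / (z - (lam N : ℂ)) := by
        intro k hk
        rw [Finset.mem_range] at hk
        have hne1 : z - (lam k : ℂ) ≠ 0 := sub_ne_zero.2 (hzk k hk)
        have hne2 : ((lam k : ℂ)) - (lam N : ℂ) ≠ 0 := sub_ne_zero.2 (hlamneC k hk)
        have hne3 : ((lam N : ℂ)) - (lam k : ℂ) ≠ 0 := fun h =>
          hne2 (by rw [← neg_sub] at h; simpa using neg_eq_zero.1 h)
        push_cast
        field_simp
        ring
      calc (1 + ∑ k ∈ Finset.range N, (C k : ℂ) / (z - (lam k : ℂ)))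
            * ((z - (mu N : ℂ)) / (z - (lam N : ℂ)))
          = (z - (mu N : ℂ)) / (z - (lam N : ℂ))
            + ∑ k ∈ Finset.range N, ((C k : ℂ) / (z - (lam k : ℂ))
                * ((z - (mu N : ℂ)) / (z - (lam N : ℂ)))) := by
            rw [add_mul, one_mul, Finset.sum_mul]
        _ = (z - (mu N : ℂ)) / (z - (lam N : ℂ))
            + ∑ k ∈ Finset.range N, (((C k * ((lam k - mu N) / (lam k - lam N)) : ℝ) : ℂ) / (z - (lam k : ℂ))
              + (((lam N - mu N) * C k / (lam N - lam k) : ℝ) : ℂ) / (z - (lam N : ℂ))) :=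
            by rw [Finset.sum_congr rfl key]
        _ = 1 + ∑ k ∈ Finset.range (N + 1),
              ((if k < N then C k * ((lam k - mu N) / (lam k - lam N)) else D : ℝ) : ℂ)
                / (z - (lam k : ℂ)) := by
            rw [Finset.sum_add_distrib, Finset.sum_range_succ]
            have e1 : ∑ k ∈ Finset.range N,
                ((if k < N then C k * ((lam k - mu N) / (lam k - lam N)) else D : ℝ) : ℂ)
                  / (z - (lam k : ℂ))
                = ∑ k ∈ Finset.range N,
                ((C k * ((lam k - mu N) / (lam k - lam N)) : ℝ) : ℂ) / (z - (lam k : ℂ)) := by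
              refine Finset.sum_congr rfl fun k hk => ?_
              rw [Finset.mem_range] at hk
              rw [if_pos hk]
            rw [e1, if_neg (lt_irrefl N)]
            have e2 : ∑ k ∈ Finset.range N,
                (((lam N - mu N) * C k / (lam N - lam k) : ℝ) : ℂ) / (z - (lam N : ℂ))
                = (∑ k ∈ Finset.range N, (((lam N - mu N) * C k / (lam N - lam k) : ℝ) : ℂ))
                  / (z - (lam N : ℂ)) := by rw [Finset.sum_div]
            rw [e2]
            have e3 : (z - (mu N : ℂ)) / (z - (lam N : ℂ))
                = 1 + ((lam N : ℂ) - (mu N : ℂ)) / (z - (lam N : ℂ)) := by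
              field_simp
              ring
            rw [e3]
            have e4 : ((D : ℝ) : ℂ) = ((lam N : ℂ) - (mu N : ℂ))
                + ∑ k ∈ Finset.range N, (((lam N - mu N) * C k / (lam N - lam k) : ℝ) : ℂ) := by
              rw [hDdef]
              push_cast
              rw [mul_add, mul_one, Finset.mul_sum]
              congr 1
              refine Finset.sum_congr rfl fun k hk => ?_
              ring
            rw [e4, add_div]
            ring



/-- Let `(λₖ²)`, `(μₖ²)` (here `lam`, `mu`) satisfy
`λ₁² > μ₁² > λ₂² > μ₂² > … > 0` with `λₖ² → 0`, `σ = {λₖ²} ∪ {0}`, and let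
`Φ(z) = ∏ₖ (z − μₖ²)/(z − λₖ²)` on `ℂ∖σ` (characterized as the pointwise limit of the
partial products). Then: (1) `Φ(z̄) = conj (Φ z)`, in particular `Φ` is real on `ℝ∖σ`;
(2) `Φ` is analytic on `ℂ∖σ`, has a simple pole at each `λₖ²` (meaning
`(z − λₖ²)Φ(z)` tends to a non-zero limit there) and its zeros are exactly the points
`μₖ²`, each simple; (3) `Φ(z) → 1` as `z → ∞`; (4) `Im Φ(z) < 0` on the open upper
half-plane. -/
theorem statement_15
    (lam mu : ℕ → ℝ)
    (hmu_pos : ∀ k, 0 < mu k)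
    (h1 : ∀ k, mu k < lam k)
    (h2 : ∀ k, lam (k + 1) < mu k)
    (hlim : Tendsto lam atTop (nhds 0))
    (Φ : ℂ → ℂ)
    (hΦ : ∀ z ∈ (sigmaSet lam)ᶜ,
      Tendsto (fun N : ℕ => ∏ k ∈ Finset.range N, (z - (mu k : ℂ)) / (z - (lam k : ℂ)))
        atTop (nhds (Φ z))) :
    (∀ z ∈ (sigmaSet lam)ᶜ, Φ ((starRingEnd ℂ) z) = (starRingEnd ℂ) (Φ z)) ∧
    (∀ x : ℝ, ((x : ℂ) ∈ (sigmaSet lam)ᶜ) → (Φ (x : ℂ)).im = 0) ∧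
    (DifferentiableOn ℂ Φ (sigmaSet lam)ᶜ) ∧
    (∀ k : ℕ, ∃ c : ℂ, c ≠ 0 ∧
      Tendsto (fun z : ℂ => (z - (lam k : ℂ)) * Φ z)
        (nhdsWithin ((lam k : ℂ)) (sigmaSet lam)ᶜ) (nhds c)) ∧
    (∀ k : ℕ, Φ ((mu k : ℂ)) = 0 ∧ deriv Φ ((mu k : ℂ)) ≠ 0) ∧
    (∀ z ∈ (sigmaSet lam)ᶜ, Φ z = 0 → ∃ k : ℕ, z = (mu k : ℂ)) ∧
    (Tendsto Φ (Filter.comap norm atTop) (nhds 1)) ∧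
    (∀ z : ℂ, 0 < z.im → (Φ z).im < 0) := by
  -- Basic order facts
  have hanti : StrictAnti lam := strictAnti_nat_of_succ_lt (fun n => (h2 n).trans (h1 n))
  have hmuanti : StrictAnti mu := strictAnti_nat_of_succ_lt (fun n => (h1 (n+1)).trans (h2 n))
  have hlampos : ∀ k, 0 < lam k := fun k => (hmu_pos k).trans (h1 k)
  have hmu_ne_lam : ∀ k j, mu k ≠ lam j := by
    intro k j
    rcases le_or_gt j k with hjk | hjk
    · exact ne_of_lt ((h1 k).trans_le (hanti.antitone hjk))
    · exact ne_of_gt ((hanti.antitone hjk).trans_lt (h2 k))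
  have hmem : ∀ z : ℂ, z ∈ (sigmaSet lam)ᶜ ↔ z ≠ 0 ∧ ∀ k, z ≠ (lam k : ℂ) := by
    intro z
    simp only [sigmaSet, Set.mem_compl_iff, Set.mem_insert_iff, Set.mem_range, not_or,
      not_exists]
    exact ⟨fun h => ⟨h.1, fun k hk => h.2 k hk.symm⟩, fun h => ⟨h.1, fun k hk => h.2 k hk.symm⟩⟩
  have hσclosed : IsClosed (sigmaSet lam) := by
    have h : Tendsto (fun k => ((lam k : ℝ) : ℂ)) atTop (𝓝 ((0:ℝ) : ℂ)) :=
      (Complex.continuous_ofReal.tendsto 0).comp hlim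
    have := h.isCompact_insert_range
    simpa [sigmaSet] using this.isClosed
  have hUopen : IsOpen (sigmaSet lam)ᶜ := hσclosed.isOpen_compl
  have hmumem : ∀ k, ((mu k : ℝ) : ℂ) ∈ (sigmaSet lam)ᶜ := by
    intro k
    rw [hmem]
    constructor
    · exact_mod_cast (hmu_pos k).ne'
    · intro j h
      exact hmu_ne_lam k j (by exact_mod_cast h)
  have hlam_memσ : ∀ k, ((lam k : ℝ) : ℂ) ∈ sigmaSet lam := by
    intro k; right; exact ⟨k, rfl⟩
  -- the coefficients
  set a : ℕ → ℝ := fun k => lam k - mu k with hadef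
  have hapos : ∀ k, 0 < a k := fun k => sub_pos.2 (h1 k)
  have haS : Summable fun k => |a k| := by
    have habs : ∀ k, |a k| = a k := fun k => abs_of_pos (hapos k)
    have hsum : ∀ n, ∑ k ∈ Finset.range n, |a k| ≤ lam 0 := by
      intro n
      have hle : ∀ k ∈ Finset.range n, |a k| ≤ lam k - lam (k+1) := by
        intro k _
        rw [habs k]
        have := h2 k
        simp only [hadef]
        linarith
      calc ∑ k ∈ Finset.range n, |a k| ≤ ∑ k ∈ Finset.range n, (lam k - lam (k+1)) :=
            Finset.sum_le_sum hle
        _ = lam 0 - lam n := Finset.sum_range_sub' lam n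
        _ ≤ lam 0 := by have := hlampos n; linarith
    exact summable_of_sum_range_le (fun k => abs_nonneg _) hsum
  -- factor identity
  have hfac : ∀ (z : ℂ) (k : ℕ), z ≠ (lam k : ℂ) →
      1 + (a k : ℂ) / (z - (lam k : ℂ)) = (z - (mu k : ℂ)) / (z - (lam k : ℂ)) := by
    intro z k hz
    have hne : z - (lam k : ℂ) ≠ 0 := sub_ne_zero.2 hz
    rw [hadef]
    field_simp
    push_cast
    ring
  have hprodeq : ∀ (z : ℂ), (∀ k, z ≠ (lam k : ℂ)) → ∀ N : ℕ,
      ∏ k ∈ Finset.range N, (1 + (a k : ℂ) / (z - (lam k : ℂ)))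
        = ∏ k ∈ Finset.range N, ((z - (mu k : ℂ)) / (z - (lam k : ℂ))) := by
    intro z hz N
    exact Finset.prod_congr rfl fun k _ => hfac z k (hz k)
  have hΦ' : ∀ z ∈ (sigmaSet lam)ᶜ,
      Tendsto (fun N : ℕ => ∏ k ∈ Finset.range N, (1 + (a k : ℂ) / (z - (lam k : ℂ))))
        atTop (𝓝 (Φ z)) := by
    intro z hz
    have hzk := ((hmem z).1 hz).2
    exact (hΦ z hz).congr (fun N => (hprodeq z hzk N).symm)
  -- local uniform convergence around points of the complement
  have hmain : ∀ z₀ ∈ (sigmaSet lam)ᶜ, ∃ r : ℝ, 0 < r ∧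
      Metric.ball z₀ r ⊆ (sigmaSet lam)ᶜ ∧
      TendstoUniformlyOn
        (fun N w => ∏ k ∈ Finset.range N, (1 + (a k : ℂ) / (w - (lam k : ℂ)))) Φ atTop
        (Metric.ball z₀ r) ∧
      ((∀ k, z₀ ≠ (mu k : ℂ)) → Φ z₀ ≠ 0) := by
    intro z₀ hz₀
    have hσne : (sigmaSet lam).Nonempty := ⟨0, Set.mem_insert _ _⟩
    have hdpos : 0 < Metric.infDist z₀ (sigmaSet lam) :=
      (hσclosed.notMem_iff_infDist_pos hσne).1 hz₀
    set d := Metric.infDist z₀ (sigmaSet lam) with hddef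
    have hdist : ∀ w, w ∈ sigmaSet lam → d ≤ dist z₀ w :=
      fun w hw => Metric.infDist_le_dist_of_mem hw
    have hsub : Metric.ball z₀ (d/2) ⊆ (sigmaSet lam)ᶜ := by
      intro w hw hwσ
      have h1 := hdist w hwσ
      rw [Metric.mem_ball, dist_comm] at hw
      linarith
    have hsep : ∀ w ∈ Metric.ball z₀ (d/2), ∀ k, a k ≠ 0 → d/2 ≤ ‖w - ((lam k : ℝ) : ℂ)‖ := by
      intro w hw k _
      have h1 := hdist _ (hlam_memσ k)
      rw [Metric.mem_ball] at hw
      have h2 : dist z₀ ((lam k : ℝ) : ℂ) ≤ dist z₀ w + dist w ((lam k : ℝ) : ℂ) :=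
        dist_triangle _ _ _
      rw [← dist_eq_norm]
      rw [dist_comm] at hw
      linarith
    obtain ⟨G, htend, huni, hcont, hne⟩ := aux_master a lam haS z₀ (d/2) (by linarith) hsep
    have hGeq : ∀ w ∈ Metric.ball z₀ (d/2), G w = Φ w := by
      intro w hw
      exact tendsto_nhds_unique (htend w hw) (hΦ' w (hsub hw))
    refine ⟨d/2, by linarith, hsub, ?_, ?_⟩
    · intro u hu
      filter_upwards [huni u hu] with N hN w hw
      rw [← hGeq w hw]
      exact hN w hw
    · intro hzmu
      have hzc := (hmem z₀).1 hz₀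
      have hGne : G z₀ ≠ 0 := by
        refine hne z₀ (Metric.mem_ball_self (by linarith)) fun k => ?_
        rw [hfac z₀ k (hzc.2 k)]
        exact div_ne_zero (sub_ne_zero.2 (hzmu k)) (sub_ne_zero.2 (hzc.2 k))
      rw [← hGeq z₀ (Metric.mem_ball_self (by linarith))]
      exact hGne
  -- skip-one-factor products
  have hskip : ∀ (k : ℕ) (z₀ : ℂ) (r : ℝ), 0 < r →
      (∀ w ∈ Metric.ball z₀ r, ∀ j, j ≠ k → r ≤ ‖w - (lam j : ℂ)‖) →
      ∃ Ψ : ℂ → ℂ, ContinuousOn Ψ (Metric.ball z₀ r) ∧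
        (∀ z ∈ Metric.ball z₀ r, z ∈ (sigmaSet lam)ᶜ →
          Φ z = (1 + (a k : ℂ) / (z - (lam k : ℂ))) * Ψ z) ∧
        (∀ w ∈ Metric.ball z₀ r, (∀ j, j ≠ k → w ≠ (mu j : ℂ) ∧ w ≠ (lam j : ℂ)) →
          Ψ w ≠ 0) := by
    intro k z₀ r hr hsep'
    set c : ℕ → ℝ := Function.update a k 0 with hcdef
    have hck : c k = 0 := by rw [hcdef]; simp
    have hcj : ∀ j, j ≠ k → c j = a j := by
      intro j hj; rw [hcdef]; simp [Function.update_of_ne hj]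
    have hcS : Summable fun j => |c j| := by
      refine Summable.of_nonneg_of_le (fun j => abs_nonneg _) (fun j => ?_) haS
      by_cases hj : j = k
      · subst hj; rw [hck]; simp [abs_nonneg]
      · rw [hcj j hj]
    have hsep2 : ∀ w ∈ Metric.ball z₀ r, ∀ j, c j ≠ 0 → r ≤ ‖w - ((lam j : ℝ) : ℂ)‖ := by
      intro w hw j hj
      have hjk : j ≠ k := fun h => hj (by rw [h]; exact hck)
      exact hsep' w hw j hjk
    obtain ⟨Ψ, htendΨ, huniΨ, hcontΨ, hneΨ⟩ := aux_master c lam hcS z₀ r hr hsep2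
    refine ⟨Ψ, hcontΨ, ?_, ?_⟩
    · intro z hzball hz
      have hFQ : ∀ N, k < N →
          ∏ j ∈ Finset.range N, (1 + (a j : ℂ) / (z - (lam j : ℂ)))
            = (1 + (a k : ℂ) / (z - (lam k : ℂ)))
              * ∏ j ∈ Finset.range N, (1 + (c j : ℂ) / (z - (lam j : ℂ))) := by
        intro N hkN
        have hupdate : (fun j => 1 + (c j : ℂ) / (z - (lam j : ℂ)))
            = Function.update (fun j => 1 + (a j : ℂ) / (z - (lam j : ℂ))) k 1 := by
          funext j
          by_cases hj : j = k
          · subst hj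
            rw [hck]
            simp [Function.update_self]
          · rw [hcj j hj, Function.update_of_ne hj]
        rw [hupdate, Finset.prod_update_of_mem (Finset.mem_range.2 hkN), one_mul,
          ← Finset.mul_prod_erase _ _ (Finset.mem_range.2 hkN), Finset.erase_eq]
      have h1 : Tendsto (fun N => (1 + (a k : ℂ) / (z - (lam k : ℂ)))
          * ∏ j ∈ Finset.range N, (1 + (c j : ℂ) / (z - (lam j : ℂ)))) atTop
          (𝓝 ((1 + (a k : ℂ) / (z - (lam k : ℂ))) * Ψ z)) :=
        (htendΨ z hzball).const_mul _
      have h2 : Tendsto (fun N => ∏ j ∈ Finset.range N, (1 + (a j : ℂ) / (z - (lam j : ℂ))))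
          atTop (𝓝 ((1 + (a k : ℂ) / (z - (lam k : ℂ))) * Ψ z)) := by
        refine h1.congr' ?_
        filter_upwards [eventually_gt_atTop k] with N hN
        exact (hFQ N hN).symm
      exact tendsto_nhds_unique (hΦ' z hz) h2
    · intro w hw hwne
      refine hneΨ w hw fun j => ?_
      by_cases hj : j = k
      · subst hj
        rw [hck]
        simp
      · obtain ⟨hmu', hlam'⟩ := hwne j hj
        rw [hcj j hj, hfac w j hlam']
        exact div_ne_zero (sub_ne_zero.2 hmu') (sub_ne_zero.2 hlam')
  -- (1) conjugation symmetry
  have r1 : ∀ z ∈ (sigmaSet lam)ᶜ, Φ ((starRingEnd ℂ) z) = (starRingEnd ℂ) (Φ z) := by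
    intro z hz
    have hzc := (hmem z).1 hz
    have hconjmem : (starRingEnd ℂ) z ∈ (sigmaSet lam)ᶜ := by
      rw [hmem]
      constructor
      · intro h
        apply hzc.1
        have := congrArg (starRingEnd ℂ) h
        simpa using this
      · intro k h
        apply hzc.2 k
        have := congrArg (starRingEnd ℂ) h
        simpa [Complex.conj_ofReal] using this
    have h1 := hΦ _ hconjmem
    have h2 : Tendsto (fun N => ∏ k ∈ Finset.range N,
        ((starRingEnd ℂ) z - (mu k : ℂ)) / ((starRingEnd ℂ) z - (lam k : ℂ))) atTop
        (𝓝 ((starRingEnd ℂ) (Φ z))) := by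
      have hc := (Complex.continuous_conj.tendsto (Φ z)).comp (hΦ z hz)
      refine hc.congr fun N => ?_
      simp only [Function.comp_apply, map_prod, map_div₀, map_sub, Complex.conj_ofReal]
    exact tendsto_nhds_unique h1 h2
  -- (2) real on ℝ
  have r2 : ∀ x : ℝ, ((x : ℂ) ∈ (sigmaSet lam)ᶜ) → (Φ (x : ℂ)).im = 0 := by
    intro x hx
    have h := r1 (x : ℂ) hx
    rw [Complex.conj_ofReal] at h
    have : (starRingEnd ℂ) (Φ (x:ℂ)) = Φ (x:ℂ) := h.symm
    exact Complex.conj_eq_iff_im.1 this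
  -- (3) differentiability
  have r3 : DifferentiableOn ℂ Φ (sigmaSet lam)ᶜ := by
    have hLU : TendstoLocallyUniformlyOn
        (fun N w => ∏ k ∈ Finset.range N, (1 + (a k : ℂ) / (w - (lam k : ℂ)))) Φ atTop
        (sigmaSet lam)ᶜ := by
      intro u hu x hx
      obtain ⟨r, hr, hsub, huni, _⟩ := hmain x hx
      exact ⟨Metric.ball x r, mem_nhdsWithin_of_mem_nhds (Metric.ball_mem_nhds x hr), huni u hu⟩
    refine hLU.differentiableOn (Filter.Eventually.of_forall fun N => ?_) hUopen
    refine DifferentiableOn.fun_finsetProd fun k _ => ?_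
    refine (differentiableOn_const _).add ((differentiableOn_const _).div
      (differentiableOn_id.sub (differentiableOn_const _)) ?_)
    intro w hw
    exact sub_ne_zero.2 (((hmem w).1 hw).2 k)
  -- zeros at mu k
  have hΦzero : ∀ k, Φ ((mu k : ℝ) : ℂ) = 0 := by
    intro k
    have hev : ∀ᶠ N in atTop, ∏ j ∈ Finset.range N,
        (((mu k : ℂ) - (mu j : ℂ)) / ((mu k : ℂ) - (lam j : ℂ))) = 0 := by
      filter_upwards [eventually_gt_atTop k] with N hN
      refine Finset.prod_eq_zero (Finset.mem_range.2 hN) ?_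
      simp
    have h0 : Tendsto (fun N => ∏ j ∈ Finset.range N,
        (((mu k : ℂ) - (mu j : ℂ)) / ((mu k : ℂ) - (lam j : ℂ)))) atTop (𝓝 0) :=
      tendsto_const_nhds.congr' (hev.mono fun N hN => hN.symm)
    exact tendsto_nhds_unique (hΦ _ (hmumem k)) h0
  -- (4) simple poles
  have r4 : ∀ k : ℕ, ∃ c : ℂ, c ≠ 0 ∧
      Tendsto (fun z : ℂ => (z - (lam k : ℂ)) * Φ z)
        (nhdsWithin ((lam k : ℂ)) (sigmaSet lam)ᶜ) (nhds c) := by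
    intro k
    obtain ⟨ρ, hρpos, hρ⟩ : ∃ ρ : ℝ, 0 < ρ ∧ ∀ j, j ≠ k → 2 * ρ ≤ |lam k - lam j| := by
      cases k with
      | zero =>
        have h01 : lam 1 < lam 0 := hanti Nat.zero_lt_one
        refine ⟨(lam 0 - lam 1) / 4, by linarith, ?_⟩
        intro j hj
        have hj1 : 1 ≤ j := Nat.one_le_iff_ne_zero.2 hj
        have hle : lam j ≤ lam 1 := hanti.antitone hj1
        rw [abs_of_pos (by linarith)]
        linarith
      | succ m =>
        have g1 : lam (m+2) < lam (m+1) := hanti (by omega)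
        have g2 : lam (m+1) < lam m := hanti (by omega)
        refine ⟨min (lam (m+1) - lam (m+2)) (lam m - lam (m+1)) / 4, ?_, ?_⟩
        · have := lt_min (show (0:ℝ) < lam (m+1) - lam (m+2) by linarith)
            (show (0:ℝ) < lam m - lam (m+1) by linarith)
          linarith
        · intro j hj
          have hmin1 := min_le_left (lam (m+1) - lam (m+2)) (lam m - lam (m+1))
          have hmin2 := min_le_right (lam (m+1) - lam (m+2)) (lam m - lam (m+1))
          rcases lt_or_gt_of_ne hj with hlt | hgt
          · have hle : lam m ≤ lam j := hanti.antitone (by omega)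
            rw [abs_sub_comm, abs_of_pos (by linarith)]
            linarith
          · have hle : lam j ≤ lam (m+2) := hanti.antitone (by omega)
            rw [abs_of_pos (by linarith)]
            linarith
    have hsepk : ∀ w ∈ Metric.ball ((lam k : ℝ) : ℂ) ρ, ∀ j, j ≠ k →
        ρ ≤ ‖w - ((lam j : ℝ) : ℂ)‖ := by
      intro w hw j hj
      rw [Metric.mem_ball] at hw
      have h1 : dist ((lam k : ℝ) : ℂ) ((lam j : ℝ) : ℂ) = |lam k - lam j| := by
        rw [dist_eq_norm, ← Complex.ofReal_sub, Complex.norm_real, Real.norm_eq_abs]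
      have h2 := hρ j hj
      have h3 := dist_triangle ((lam k : ℝ) : ℂ) w ((lam j : ℝ) : ℂ)
      rw [← dist_eq_norm]
      rw [dist_comm] at hw
      rw [h1] at h3
      linarith
    obtain ⟨Ψ, hcontΨ, hΦΨ, hneΨ⟩ := hskip k ((lam k : ℝ) : ℂ) ρ hρpos hsepk
    have hcenter : ((lam k : ℝ) : ℂ) ∈ Metric.ball ((lam k : ℝ) : ℂ) ρ :=
      Metric.mem_ball_self hρpos
    have hΨne : Ψ ((lam k : ℝ) : ℂ) ≠ 0 := by
      refine hneΨ _ hcenter fun j hj => ⟨?_, ?_⟩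
      · intro h
        exact hmu_ne_lam j k (by exact_mod_cast h.symm)
      · intro h
        exact hj (hanti.injective (by exact_mod_cast h.symm : (lam j : ℝ) = lam k))
    refine ⟨((lam k : ℂ) - (mu k : ℂ)) * Ψ ((lam k : ℝ) : ℂ),
      mul_ne_zero (sub_ne_zero.2 ?_) hΨne, ?_⟩
    · intro h
      exact hmu_ne_lam k k (by exact_mod_cast h.symm)
    · have hev : ∀ᶠ z in 𝓝[(sigmaSet lam)ᶜ] ((lam k : ℝ) : ℂ),
          (z - (lam k : ℂ)) * Φ z = (z - (mu k : ℂ)) * Ψ z := by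
        filter_upwards [mem_nhdsWithin_of_mem_nhds (Metric.ball_mem_nhds _ hρpos),
          self_mem_nhdsWithin] with z hzb hzc
        rw [hΦΨ z hzb hzc]
        have hzk : z ≠ (lam k : ℂ) := ((hmem z).1 hzc).2 k
        rw [hfac z k hzk]
        have hne : z - (lam k : ℂ) ≠ 0 := sub_ne_zero.2 hzk
        field_simp
      have hΨcont : ContinuousAt Ψ ((lam k : ℝ) : ℂ) :=
        hcontΨ.continuousAt (Metric.ball_mem_nhds _ hρpos)
      have hten : Tendsto (fun z => (z - (mu k : ℂ)) * Ψ z)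
          (𝓝[(sigmaSet lam)ᶜ] ((lam k : ℝ) : ℂ))
          (𝓝 (((lam k : ℂ) - (mu k : ℂ)) * Ψ ((lam k : ℝ) : ℂ))) := by
        have hc : ContinuousAt (fun z => (z - (mu k : ℂ)) * Ψ z) ((lam k : ℝ) : ℂ) :=
          (continuousAt_id.sub continuousAt_const).mul hΨcont
        exact hc.tendsto.mono_left nhdsWithin_le_nhds
      exact hten.congr' (hev.mono fun z hz => hz.symm)
  -- (5) simple zeros
  have r5 : ∀ k : ℕ, Φ ((mu k : ℂ)) = 0 ∧ deriv Φ ((mu k : ℂ)) ≠ 0 := by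
    intro k
    refine ⟨hΦzero k, ?_⟩
    have hσne : (sigmaSet lam).Nonempty := ⟨0, Set.mem_insert _ _⟩
    have hdpos : 0 < Metric.infDist ((mu k : ℝ) : ℂ) (sigmaSet lam) :=
      (hσclosed.notMem_iff_infDist_pos hσne).1 (hmumem k)
    set ρ := Metric.infDist ((mu k : ℝ) : ℂ) (sigmaSet lam) / 2 with hρdef
    have hρpos : 0 < ρ := by rw [hρdef]; linarith
    have hsepk : ∀ w ∈ Metric.ball ((mu k : ℝ) : ℂ) ρ, ∀ j, j ≠ k →
        ρ ≤ ‖w - ((lam j : ℝ) : ℂ)‖ := by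
      intro w hw j _
      have h1 := Metric.infDist_le_dist_of_mem (hlam_memσ j) (x := ((mu k : ℝ) : ℂ))
      rw [Metric.mem_ball, dist_comm] at hw
      have h3 := dist_triangle ((mu k : ℝ) : ℂ) w ((lam j : ℝ) : ℂ)
      rw [← dist_eq_norm]
      rw [hρdef] at *
      linarith
    obtain ⟨Ψ, hcontΨ, hΦΨ, hneΨ⟩ := hskip k ((mu k : ℝ) : ℂ) ρ hρpos hsepk
    have hcenter : ((mu k : ℝ) : ℂ) ∈ Metric.ball ((mu k : ℝ) : ℂ) ρ :=
      Metric.mem_ball_self hρpos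
    have hΨne : Ψ ((mu k : ℝ) : ℂ) ≠ 0 := by
      refine hneΨ _ hcenter fun j hj => ⟨?_, ?_⟩
      · intro h
        exact hj (hmuanti.injective (by exact_mod_cast h.symm : (mu j : ℝ) = mu k))
      · intro h
        exact hmu_ne_lam k j (by exact_mod_cast h)
    have hmulamne : ((mu k : ℝ) : ℂ) ≠ ((lam k : ℝ) : ℂ) := by
      intro h
      exact hmu_ne_lam k k (by exact_mod_cast h)
    have hdiffAt : DifferentiableAt ℂ Φ ((mu k : ℝ) : ℂ) :=
      r3.differentiableAt (hUopen.mem_nhds (hmumem k))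
    have hder := hasDerivAt_iff_tendsto_slope.1 hdiffAt.hasDerivAt
    have hball_mem : Metric.ball ((mu k : ℝ) : ℂ) ρ ∩ (sigmaSet lam)ᶜ ∈ 𝓝 ((mu k : ℝ) : ℂ) :=
      Filter.inter_mem (Metric.ball_mem_nhds _ hρpos) (hUopen.mem_nhds (hmumem k))
    have hev : ∀ᶠ z in 𝓝[≠] ((mu k : ℝ) : ℂ),
        slope Φ ((mu k : ℝ) : ℂ) z = Ψ z / (z - (lam k : ℂ)) := by
      filter_upwards [mem_nhdsWithin_of_mem_nhds hball_mem, self_mem_nhdsWithin]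
        with z hz hzne
      obtain ⟨hzb, hzc⟩ := hz
      have hzmu : z ≠ ((mu k : ℝ) : ℂ) := hzne
      have hzlam : z ≠ (lam k : ℂ) := ((hmem z).1 hzc).2 k
      rw [slope_def_field, hΦzero k, sub_zero, hΦΨ z hzb hzc, hfac z k hzlam]
      have hne1 : z - ((mu k : ℝ) : ℂ) ≠ 0 := sub_ne_zero.2 hzmu
      have hne2 : z - ((lam k : ℝ) : ℂ) ≠ 0 := sub_ne_zero.2 hzlam
      field_simp
    have hten : Tendsto (fun z => Ψ z / (z - (lam k : ℂ))) (𝓝[≠] ((mu k : ℝ) : ℂ))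
        (𝓝 (Ψ ((mu k : ℝ) : ℂ) / (((mu k : ℝ) : ℂ) - (lam k : ℂ)))) := by
      have hc : ContinuousAt (fun z => Ψ z / (z - (lam k : ℂ))) ((mu k : ℝ) : ℂ) := by
        refine (hcontΨ.continuousAt (Metric.ball_mem_nhds _ hρpos)).div
          (continuousAt_id.sub continuousAt_const) ?_
        exact sub_ne_zero.2 hmulamne
      exact hc.tendsto.mono_left nhdsWithin_le_nhds
    have hval : deriv Φ ((mu k : ℝ) : ℂ)
        = Ψ ((mu k : ℝ) : ℂ) / (((mu k : ℝ) : ℂ) - (lam k : ℂ)) :=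
      tendsto_nhds_unique (hder.congr' hev) hten
    rw [hval]
    exact div_ne_zero hΨne (sub_ne_zero.2 hmulamne)
  -- (6) zeros only at mu k
  have r6 : ∀ z ∈ (sigmaSet lam)ᶜ, Φ z = 0 → ∃ k : ℕ, z = (mu k : ℂ) := by
    intro z hz h0
    by_contra hcon
    push_neg at hcon
    obtain ⟨r, hr, hsub, huni, hnv⟩ := hmain z hz
    exact hnv hcon h0
  -- (7) limit at infinity
  have r7 : Tendsto Φ (Filter.comap norm atTop) (nhds 1) := by
    set A := ∑' k, |a k| with hAdef
    have hbound : ∀ z : ℂ, lam 0 < ‖z‖ → ‖Φ z - 1‖ ≤ Real.exp (A * (‖z‖ - lam 0)⁻¹) - 1 := by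
      intro z hz
      have hzpos : 0 < ‖z‖ - lam 0 := by linarith
      have hzc : z ∈ (sigmaSet lam)ᶜ := by
        rw [hmem]
        constructor
        · intro h
          rw [h] at hz
          simp at hz
          exact absurd hz (not_lt.2 (hlampos 0).le)
        · intro j h
          rw [h] at hz
          rw [Complex.norm_real, Real.norm_eq_abs, abs_of_pos (hlampos j)] at hz
          have := hanti.antitone (Nat.zero_le j)
          linarith
      set b : ℕ → ℝ := fun j => |a j| * (‖z‖ - lam 0)⁻¹ with hbdef
      have hbS : Summable b := haS.mul_right _
      have hb : ∀ j, ‖(a j : ℂ) / (z - (lam j : ℂ))‖ ≤ b j := by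
        intro j
        rw [norm_div, Complex.norm_real, Real.norm_eq_abs]
        have h1 : ‖z‖ - lam 0 ≤ ‖z - (lam j : ℂ)‖ := by
          have h2 : ‖(lam j : ℂ)‖ ≤ lam 0 := by
            rw [Complex.norm_real, Real.norm_eq_abs, abs_of_pos (hlampos j)]
            exact hanti.antitone (Nat.zero_le j)
          have h3 := norm_sub_norm_le z ((lam j : ℝ) : ℂ)
          linarith
        show |a j| / ‖z - (lam j : ℂ)‖ ≤ |a j| * (‖z‖ - lam 0)⁻¹
        rw [div_eq_mul_inv]
        have h5 : (‖z - (lam j : ℂ)‖)⁻¹ ≤ (‖z‖ - lam 0)⁻¹ := by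
          apply inv_anti₀ hzpos h1
        exact mul_le_mul_of_nonneg_left h5 (abs_nonneg _)
      have hest := aux_tail_est hb hbS (hΦ' z hzc) 0
      simp only [Finset.range_zero, Finset.prod_empty, norm_one, one_mul, Nat.add_zero] at hest
      have htsum : ∑' j, b j = A * (‖z‖ - lam 0)⁻¹ := by
        rw [hbdef, hAdef]
        exact tsum_mul_right
      rwa [htsum] at hest
    have hnorm : Tendsto (fun z : ℂ => ‖z‖) (Filter.comap norm atTop) atTop := tendsto_comap
    have hev : ∀ᶠ z : ℂ in Filter.comap norm atTop, lam 0 < ‖z‖ :=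
      hnorm.eventually (eventually_gt_atTop (lam 0))
    have hg : Tendsto (fun z : ℂ => Real.exp (A * (‖z‖ - lam 0)⁻¹) - 1)
        (Filter.comap norm atTop) (𝓝 0) := by
      have h1 : Tendsto (fun z : ℂ => ‖z‖ - lam 0) (Filter.comap norm atTop) atTop :=
        tendsto_atTop_add_const_right _ _ hnorm
      have h2 : Tendsto (fun z : ℂ => (‖z‖ - lam 0)⁻¹) (Filter.comap norm atTop) (𝓝 0) :=
        h1.inv_tendsto_atTop
      have h3 : Tendsto (fun z : ℂ => A * (‖z‖ - lam 0)⁻¹) (Filter.comap norm atTop) (𝓝 0) := by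
        have := h2.const_mul A
        simpa using this
      have h4 := (Real.continuous_exp.tendsto 0).comp h3
      rw [Real.exp_zero] at h4
      have := h4.sub (tendsto_const_nhds (x := (1:ℝ)))
      simpa using this
    have h0 : Tendsto (fun z => Φ z - 1) (Filter.comap norm atTop) (𝓝 0) :=
      squeeze_zero_norm' (hev.mono fun z hz => hbound z hz) hg
    have := h0.add (tendsto_const_nhds (x := (1:ℂ)))
    simpa using this
  -- (8) negative imaginary part on upper half-plane
  have r8 : ∀ z : ℂ, 0 < z.im → (Φ z).im < 0 := by
    have hupmem : ∀ z : ℂ, 0 < z.im → z ∈ (sigmaSet lam)ᶜ := by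
      intro z hz
      rw [hmem]
      constructor
      · intro h; rw [h] at hz; simp at hz
      · intro j h; rw [h] at hz; simp at hz
    have himle : ∀ z : ℂ, 0 < z.im → (Φ z).im ≤ 0 := by
      intro z hz
      have hzc := hupmem z hz
      have hPim : ∀ N, (∏ j ∈ Finset.range N,
          ((z - (mu j : ℂ)) / (z - (lam j : ℂ)))).im ≤ 0 := by
        intro N
        obtain ⟨C, hCpos, hCid⟩ := aux_partial_fractions lam mu h1 h2 N
        have hzk : ∀ j < N, z ≠ (lam j : ℂ) := fun j _ => ((hmem z).1 hzc).2 j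
        rw [hCid z hzk, Complex.add_im, Complex.one_im, Complex.im_sum]
        rw [zero_add]
        refine Finset.sum_nonpos fun j hj => ?_
        rw [Finset.mem_range] at hj
        rw [div_eq_mul_inv, Complex.mul_im]
        have hre : ((C j : ℝ) : ℂ).re = C j := Complex.ofReal_re _
        have him : ((C j : ℝ) : ℂ).im = 0 := Complex.ofReal_im _
        rw [hre, him, zero_mul, add_zero, Complex.inv_im]
        have himz : (z - (lam j : ℂ)).im = z.im := by simp
        rw [himz]
        refine mul_nonpos_of_nonneg_of_nonpos (hCpos j hj).le ?_
        apply div_nonpos_of_nonpos_of_nonneg (by linarith) (Complex.normSq_nonneg _)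
      have hten : Tendsto (fun N => (∏ j ∈ Finset.range N,
          ((z - (mu j : ℂ)) / (z - (lam j : ℂ)))).im) atTop (𝓝 (Φ z).im) :=
        (Complex.continuous_im.tendsto _).comp (hΦ z hzc)
      exact le_of_tendsto hten (Filter.Eventually.of_forall hPim)
    intro z hz
    by_contra hcon
    push_neg at hcon
    have him0 : (Φ z).im = 0 := le_antisymm (himle z hz) hcon
    set Hs : Set ℂ := {w : ℂ | 0 < w.im} with hHsdef
    have hzH : z ∈ Hs := hz
    have hHopen : IsOpen Hs := isOpen_lt continuous_const Complex.continuous_im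
    have hHconn : IsPreconnected Hs := (convex_halfSpace_im_gt 0).isPreconnected
    have hHsub : Hs ⊆ (sigmaSet lam)ᶜ := fun w hw => hupmem w hw
    have hA : AnalyticOnNhd ℂ Φ (sigmaSet lam)ᶜ := r3.analyticOnNhd hUopen
    have hAH : AnalyticOnNhd ℂ Φ Hs := fun w hw => hA w (hHsub hw)
    rcases hAH.is_constant_or_isOpen hHconn with ⟨v, hv⟩ | hopen
    · have hray : Tendsto (fun y : ℝ => Φ ((y : ℂ) * Complex.I)) atTop (𝓝 1) := by
        refine r7.comp ?_
        rw [tendsto_comap_iff]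
        have heq : (norm ∘ fun y : ℝ => (y : ℂ) * Complex.I) = fun y : ℝ => |y| := by
          funext y
          simp [Function.comp]
        rw [heq]
        exact tendsto_abs_atTop_atTop
      have hconst : ∀ᶠ y : ℝ in atTop, Φ ((y : ℂ) * Complex.I) = v := by
        filter_upwards [eventually_gt_atTop (0:ℝ)] with y hy
        refine hv _ ?_
        simp [hHsdef, hy]
      have hv1 : v = 1 :=
        tendsto_nhds_unique (tendsto_const_nhds.congr' (hconst.mono fun y h => h.symm)) hray
      have hUconn : IsPreconnected (sigmaSet lam)ᶜ := by
        have hcnt : (sigmaSet lam).Countable := (Set.countable_range _).insert 0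
        have hrank : 1 < Module.rank ℝ ℂ := by rw [Complex.rank_real_complex]; norm_num
        exact (hcnt.isPathConnected_compl_of_one_lt_rank hrank).isConnected.isPreconnected
      have heqev : Φ =ᶠ[𝓝 z] (fun _ => (1:ℂ)) := by
        filter_upwards [hHopen.mem_nhds hzH] with w hw
        rw [hv w hw, hv1]
      have heq : Set.EqOn Φ (fun _ => (1:ℂ)) (sigmaSet lam)ᶜ :=
        hA.eqOn_of_preconnected_of_eventuallyEq analyticOnNhd_const hUconn (hHsub hzH) heqev
      have hcontr := heq (hmumem 0)
      rw [hΦzero 0] at hcontr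
      exact absurd hcontr.symm one_ne_zero
    · have hT : IsOpen (Φ '' Hs) := hopen Hs subset_rfl hHopen
      have hmemT : Φ z ∈ Φ '' Hs := ⟨z, hzH, rfl⟩
      obtain ⟨ε, hε, hball⟩ := Metric.isOpen_iff.1 hT _ hmemT
      have hwmem : Φ z + ((ε/2 : ℝ) : ℂ) * Complex.I ∈ Metric.ball (Φ z) ε := by
        rw [Metric.mem_ball, dist_eq_norm]
        have : Φ z + ((ε/2 : ℝ) : ℂ) * Complex.I - Φ z = ((ε/2 : ℝ) : ℂ) * Complex.I := by ring
        rw [this, norm_mul, Complex.norm_I, mul_one, Complex.norm_real, Real.norm_eq_abs,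
          abs_of_pos (by linarith)]
        linarith
      obtain ⟨z₁, hz₁H, hz₁⟩ := hball hwmem
      have him₁ : (Φ z₁).im = (Φ z).im + ε/2 := by
        rw [hz₁]
        simp
      have hle₁ := himle z₁ hz₁H
      rw [him₁, him0] at hle₁
      linarith
  exact ⟨r1, r2, r3, r4, r5, r6, r7, r8⟩
end
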